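/- arXiv:1703.03857 — 4 statements merged into one kernel-verified Lean document; each statement's English description precedes it below -/
import Mathlib

section
/- (i) For every fixed x > 0, the map τ ↦ ω°_{τ,x} is strictly increasing on (τ_e(x), +∞), with ω°_{τ,x} → 0 as τ → τ_e(x)⁺ and ω°_{τ,x} → W°_x as τ → +∞. (ii) For every fixed τ > 0, if 0 < x < x′ and τ_e(x′) < τ, then ω°_{τ,x′} < ω°_{τ,x}; moreover ω°_{τ,x} → 0 as x → x_e(τ)⁻, where x_e(τ) is the unique solution x_e of τ_e(x_e) = τ. -/
open MeasureTheory Filter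

/-- `φ_n(w) = Σ_{k≥1} k^n w^k/(1-q^k)` as a real function. -/
noncomputable def phiR (q : ℝ) (n : ℕ) (w : ℝ) : ℝ :=
  ∑' k : ℕ, ((k : ℝ) + 1) ^ n * w ^ (k + 1) / (1 - q ^ (k + 1))

/-- `Φ_n(w∣x) = ∫₀ˣ φ_n(w/ξ(y)) dy`. -/
noncomputable def PhiI (q : ℝ) (n : ℕ) (ξ : ℝ → ℝ) (x w : ℝ) : ℝ :=
  ∫ y in Set.Ioo 0 x, phiR q n (w / ξ y)

/-- `τ_e(x) = ∫₀ˣ dy/((1-q)ξ(y))`. -/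
noncomputable def tauE (q : ℝ) (ξ : ℝ → ℝ) (x : ℝ) : ℝ :=
  ∫ y in Set.Ioo 0 x, 1 / ((1 - q) * ξ y)

section aux
variable {q : ℝ} (hq : q ∈ Set.Ioo (0:ℝ) 1)
include hq

lemma qpow_lt (k : ℕ) : q ^ (k+1) < 1 := pow_lt_one₀ hq.1.le hq.2 k.succ_ne_zero

lemma qpow_le (k : ℕ) : q ^ (k+1) ≤ q := by
  calc q ^ (k+1) ≤ q ^ 1 := pow_le_pow_of_le_one hq.1.le hq.2.le (by omega)
  _ = q := pow_one q

lemma term_nonneg {u : ℝ} (hu0 : 0 ≤ u) (n k : ℕ) :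
    0 ≤ ((k : ℝ) + 1) ^ n * u ^ (k + 1) / (1 - q ^ (k + 1)) := by
  apply div_nonneg (mul_nonneg (by positivity) (by positivity))
  linarith [qpow_lt hq k]

lemma summable_phi {u : ℝ} (hu0 : 0 ≤ u) (hu1 : u < 1) (n : ℕ) :
    Summable (fun k : ℕ => ((k : ℝ) + 1) ^ n * u ^ (k + 1) / (1 - q ^ (k + 1))) := by
  have hmaj : Summable (fun k : ℕ => (1/(1-q)) * (((k:ℝ) + 1) ^ n * u ^ (k + 1))) := by
    have h0 : Summable (fun k : ℕ => ((k:ℝ)) ^ n * u ^ k) := by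
      simpa using summable_pow_mul_geometric_of_norm_lt_one n
        (by rwa [Real.norm_eq_abs, abs_of_nonneg hu0])
    have h1 := h0.comp_injective (Nat.succ_injective)
    apply Summable.mul_left
    have : (fun k : ℕ => ((k:ℝ) + 1) ^ n * u ^ (k + 1)) =
        ((fun k : ℕ => ((k:ℝ)) ^ n * u ^ k) ∘ Nat.succ) := by
      funext k; simp only [Function.comp, Nat.succ_eq_add_one]; push_cast; ring
    rw [this]; exact h1
  apply Summable.of_nonneg_of_le (fun k => term_nonneg hq hu0 n k) _ hmaj
  intro k
  rw [div_le_iff₀ (by linarith [qpow_lt hq k])]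
  have h1 : (0:ℝ) < 1 - q := by linarith [hq.2]
  have h2 : 1 - q ≤ 1 - q ^ (k+1) := by linarith [qpow_le hq k]
  have hnn : (0:ℝ) ≤ ((k:ℝ) + 1) ^ n * u ^ (k + 1) := by positivity
  calc ((k:ℝ) + 1) ^ n * u ^ (k + 1) = (1/(1-q) * (((k:ℝ) + 1) ^ n * u ^ (k + 1))) * (1-q) := by
        field_simp
  _ ≤ (1/(1-q) * (((k:ℝ) + 1) ^ n * u ^ (k + 1))) * (1 - q^(k+1)) := by
        apply mul_le_mul_of_nonneg_left h2; positivity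

lemma phi_nonneg {u : ℝ} (hu0 : 0 ≤ u) (n : ℕ) : 0 ≤ phiR q n u :=
  tsum_nonneg (fun k => term_nonneg hq hu0 n k)

lemma phi_mono {u v : ℝ} (hu0 : 0 ≤ u) (huv : u ≤ v) (hv1 : v < 1) (n : ℕ) :
    phiR q n u ≤ phiR q n v := by
  apply Summable.tsum_le_tsum _ (summable_phi hq hu0 (lt_of_le_of_lt huv hv1) n)
    (summable_phi hq (hu0.trans huv) hv1 n)
  intro k
  have h1 := qpow_lt hq k
  gcongr
  all_goals first | linarith | exact hu0.trans huv | positivity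

lemma phi_lb2 {u : ℝ} (hu0 : 0 ≤ u) (hu1 : u < 1) :
    u/(1-q) + 4*u^2/(1-q^2) ≤ phiR q 2 u := by
  have hs := summable_phi hq hu0 hu1 2
  have := Summable.sum_le_tsum (Finset.range 2) (fun k _ => term_nonneg hq hu0 2 k) hs
  rw [Finset.sum_range_succ, Finset.sum_range_one] at this
  norm_num at this
  have e : u/(1-q) + 4*u^2/(1-q^2) = u ^ 1 / (1 - q ^ 1) + 4 * u ^ 2 / (1 - q ^ 2) := by
    norm_num
  rw [e]
  exact le_trans (le_of_eq (by norm_num)) this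

lemma phi_lb1 {u : ℝ} (hu0 : 0 ≤ u) (hu1 : u < 1) : u/(1-q) ≤ phiR q 2 u := by
  have := phi_lb2 hq hu0 hu1
  have h2 : (0:ℝ) ≤ 4*u^2/(1-q^2) := by
    have hh : (0:ℝ) < 1 - q^2 := by nlinarith [hq.1, hq.2]
    positivity
  linarith
end aux

section integrals
variable {q m M : ℝ} {ξ : ℝ → ℝ} (hq : q ∈ Set.Ioo (0:ℝ) 1) (hmeas : Measurable ξ)

/-- pointwise ratio monotonicity -/
lemma phi_ratio (hq : q ∈ Set.Ioo (0:ℝ) 1) {w₁ w₂ s : ℝ} (h1 : 0 < w₁) (h12 : w₁ ≤ w₂)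
    (hs : 0 < s) (h2 : w₂ / s < 1) :
    phiR q 2 (w₁/s) * w₂ ≤ phiR q 2 (w₂/s) * w₁ := by
  unfold phiR
  rw [← tsum_mul_right, ← tsum_mul_right]
  have hu1 : (0:ℝ) ≤ w₁/s := by positivity
  have hu12 : w₁/s ≤ w₂/s := by gcongr
  apply Summable.tsum_le_tsum _ ((summable_phi hq hu1 (lt_of_le_of_lt hu12 h2) 2).mul_right _)
    ((summable_phi hq (hu1.trans hu12) h2 2).mul_right _)
  intro k
  have hc : (0:ℝ) < 1 - q^(k+1) := by linarith [qpow_lt hq k]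
  have hw2 : 0 < w₂ := lt_of_lt_of_le h1 h12
  have key : (w₁/s)^(k+1) * w₂ ≤ (w₂/s)^(k+1) * w₁ := by
    have hk : (w₁/s)^k ≤ (w₂/s)^k := pow_le_pow_left₀ hu1 hu12 k
    have e1 : (w₁/s)^(k+1) * w₂ = (w₁/s)^k * (w₁*w₂/s) := by rw [pow_succ]; ring
    have e2 : (w₂/s)^(k+1) * w₁ = (w₂/s)^k * (w₁*w₂/s) := by rw [pow_succ]; ring
    rw [e1, e2]
    exact mul_le_mul_of_nonneg_right hk (by positivity)
  rw [div_mul_eq_mul_div, div_mul_eq_mul_div]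
  apply div_le_div_of_nonneg_right ?_ hc.le
  rw [mul_assoc, mul_assoc]
  exact mul_le_mul_of_nonneg_left key (by positivity)

include hq hmeas

/-- integrability of the φ-integrand on a finite-measure set where `w/ξ ∈ [0,b] ⊆ [0,1)`. -/
lemma integrable_phi {s : Set ℝ} (hfin : volume s ≠ ⊤) {w b m : ℝ} (hm : 0 < m)
    (hbm : ∀ᵐ y ∂(volume.restrict s), m ≤ ξ y)
    (hw : 0 ≤ w) (hb0 : 0 ≤ b) (hb1 : b < 1)
    (hwb : ∀ᵐ y ∂(volume.restrict s), w / ξ y ≤ b) :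
    IntegrableOn (fun y => phiR q 2 (w/ξ y)) s := by
  have hterm : ∀ k : ℕ, Measurable (fun y => ((k:ℝ)+1)^2 * (w/ξ y)^(k+1)/(1-q^(k+1))) := by
    intro k
    exact (((measurable_const.div hmeas).pow_const _).const_mul _).div_const _
  have haesm : AEStronglyMeasurable (fun y => phiR q 2 (w/ξ y)) (volume.restrict s) := by
    apply aestronglyMeasurable_of_tendsto_ae (f := fun (n:ℕ) y =>
      ∑ k ∈ Finset.range n, ((k:ℝ)+1)^2 * (w/ξ y)^(k+1)/(1-q^(k+1))) atTop
    · intro n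
      exact (Finset.measurable_sum _ (fun k _ => hterm k)).aestronglyMeasurable
    · filter_upwards [hbm, hwb] with y h1 h2
      have hu0 : 0 ≤ w / ξ y := div_nonneg hw (le_trans hm.le h1)
      exact ((summable_phi hq hu0 (lt_of_le_of_lt h2 hb1) 2).hasSum).tendsto_sum_nat
  haveI : Fact (volume s < ⊤) := ⟨lt_top_iff_ne_top.2 hfin⟩
  refine ⟨haesm, HasFiniteIntegral.of_bounded (C := phiR q 2 b) ?_⟩
  filter_upwards [hbm, hwb] with y h1 h2
  have hu0 : 0 ≤ w / ξ y := div_nonneg hw (le_trans hm.le h1)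
  rw [Real.norm_eq_abs, abs_of_nonneg (phi_nonneg hq hu0 2)]
  exact phi_mono hq hu0 h2 hb1 2

/-- integrability of the τ-integrand -/
lemma integrable_tau {s : Set ℝ} (hfin : volume s ≠ ⊤) {m : ℝ} (hm : 0 < m)
    (hbm : ∀ᵐ y ∂(volume.restrict s), m ≤ ξ y) :
    IntegrableOn (fun y => 1/((1-q)*ξ y)) s := by
  haveI : Fact (volume s < ⊤) := ⟨lt_top_iff_ne_top.2 hfin⟩
  have h1q : (0:ℝ) < 1 - q := by linarith [hq.2]
  refine ⟨(measurable_const.div (measurable_const.mul hmeas)).aestronglyMeasurable,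
    HasFiniteIntegral.of_bounded (C := 1/((1-q)*m)) ?_⟩
  filter_upwards [hbm] with y h1
  have hy : 0 < ξ y := lt_of_lt_of_le hm h1
  rw [Real.norm_eq_abs, abs_of_nonneg (by positivity)]
  gcongr

end integrals

section big
variable {q m M : ℝ} {ξ : ℝ → ℝ} (hq : q ∈ Set.Ioo (0:ℝ) 1) (hmeas : Measurable ξ)
include hq hmeas

lemma vol_Ioo_ne_top (x : ℝ) : volume (Set.Ioo (0:ℝ) x) ≠ ⊤ := by simp [Real.volume_Ioo]
lemma vol_Ico_ne_top (x x' : ℝ) : volume (Set.Ico x x') ≠ ⊤ := by simp [Real.volume_Ico]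

lemma PhiI_ratio {x w₁ w₂ b : ℝ} (hm : 0 < m)
    (hbm : ∀ᵐ y ∂(volume.restrict (Set.Ioo 0 x)), m ≤ ξ y)
    (h1 : 0 < w₁) (h12 : w₁ ≤ w₂) (hb0 : 0 ≤ b) (hb1 : b < 1)
    (hwb : ∀ᵐ y ∂(volume.restrict (Set.Ioo 0 x)), w₂ / ξ y ≤ b) :
    PhiI q 2 ξ x w₁ * w₂ ≤ PhiI q 2 ξ x w₂ * w₁ := by
  have hw2 : 0 < w₂ := lt_of_lt_of_le h1 h12
  have hwb1 : ∀ᵐ y ∂(volume.restrict (Set.Ioo 0 x)), w₁ / ξ y ≤ b := by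
    filter_upwards [hbm, hwb] with y hy h2
    have hξ : 0 < ξ y := lt_of_lt_of_le hm hy
    calc w₁ / ξ y ≤ w₂ / ξ y := by gcongr
    _ ≤ b := h2
  have hi1 := integrable_phi hq hmeas (s := Set.Ioo 0 x) (by simp [Real.volume_Ioo]) hm hbm
    h1.le hb0 hb1 hwb1
  have hi2 := integrable_phi hq hmeas (s := Set.Ioo 0 x) (by simp [Real.volume_Ioo]) hm hbm
    hw2.le hb0 hb1 hwb
  unfold PhiI
  rw [← integral_mul_const, ← integral_mul_const]
  apply integral_mono_ae (hi1.mul_const _) (hi2.mul_const _)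
  filter_upwards [hbm, hwb] with y hy h2
  exact phi_ratio hq h1 h12 (lt_of_lt_of_le hm hy) (lt_of_le_of_lt h2 hb1)

lemma PhiI_lb {x w b : ℝ} (hx : 0 < x) (hm : 0 < m) (hM : 0 < M)
    (hbm : ∀ᵐ y ∂(volume.restrict (Set.Ioo 0 x)), m ≤ ξ y ∧ ξ y ≤ M)
    (hw : 0 ≤ w) (hb0 : 0 ≤ b) (hb1 : b < 1)
    (hwb : ∀ᵐ y ∂(volume.restrict (Set.Ioo 0 x)), w / ξ y ≤ b) :
    w * tauE q ξ x + (4*w^2/(M^2*(1-q^2))) * x ≤ PhiI q 2 ξ x w := by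
  have h1q : (0:ℝ) < 1 - q := by linarith [hq.2]
  have h1q2 : (0:ℝ) < 1 - q^2 := by nlinarith [hq.1, hq.2]
  have hi := integrable_phi hq hmeas (s := Set.Ioo 0 x) (by simp [Real.volume_Ioo]) hm
    (hbm.mono fun y h => h.1) hw hb0 hb1 hwb
  have hit := (integrable_tau hq hmeas (s := Set.Ioo 0 x) (by simp [Real.volume_Ioo]) hm
    (hbm.mono fun y h => h.1)).const_mul w
  haveI : Fact (volume (Set.Ioo (0:ℝ) x) < ⊤) := ⟨by simp [Real.volume_Ioo]⟩
  have hic : IntegrableOn (fun _ : ℝ => 4*w^2/(M^2*(1-q^2))) (Set.Ioo 0 x) := by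
    exact integrableOn_const (by simp [Real.volume_Ioo])
  have heq : w * tauE q ξ x + (4*w^2/(M^2*(1-q^2))) * x
      = ∫ y in Set.Ioo 0 x, (w * (1/((1-q)*ξ y)) + 4*w^2/(M^2*(1-q^2))) := by
    rw [integral_add hit hic, integral_const_mul, setIntegral_const]
    simp only [Real.volume_real_Ioo, max_eq_left hx.le, Real.volume_Ioo, ENNReal.toReal_ofReal hx.le, tauE, smul_eq_mul, sub_zero]
    ring
  rw [heq]
  apply integral_mono_ae (hit.add hic) hi
  filter_upwards [hbm, hwb] with y hy h2
  have hξ : 0 < ξ y := lt_of_lt_of_le hm hy.1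
  have hu0 : 0 ≤ w / ξ y := by positivity
  have hu1 : w / ξ y < 1 := lt_of_le_of_lt h2 hb1
  have hu2 : w/M ≤ w/ξ y := by gcongr; exact hy.2
  have hsq : (w/M)^2 ≤ (w/ξ y)^2 := by
    apply pow_le_pow_left₀ (by positivity) hu2
  have e : w*(1/((1-q)*ξ y)) + 4*w^2/(M^2*(1-q^2))
      = (w/ξ y)/(1-q) + 4*(w/M)^2/(1-q^2) := by
    field_simp
  simp only [Pi.add_apply]
  rw [e]
  calc (w/ξ y)/(1-q) + 4*(w/M)^2/(1-q^2) ≤ (w/ξ y)/(1-q) + 4*(w/ξ y)^2/(1-q^2) := by gcongr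
  _ ≤ phiR q 2 (w/ξ y) := phi_lb2 hq hu0 hu1

lemma tau_diff {x x' : ℝ} (hx : 0 < x) (hxx : x < x') (hm : 0 < m) (hM : 0 < M)
    (hbm : ∀ᵐ y ∂(volume.restrict (Set.Ioo 0 x')), m ≤ ξ y ∧ ξ y ≤ M) :
    tauE q ξ x + (x'-x)/((1-q)*M) ≤ tauE q ξ x' ∧
      tauE q ξ x' ≤ tauE q ξ x + (x'-x)/((1-q)*m) := by
  have h1q : (0:ℝ) < 1 - q := by linarith [hq.2]
  have hsub1 : Set.Ioo (0:ℝ) x ⊆ Set.Ioo 0 x' := Set.Ioo_subset_Ioo le_rfl hxx.le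
  have hsub2 : Set.Ico x x' ⊆ Set.Ioo 0 x' := fun y hy => ⟨lt_of_lt_of_le hx hy.1, hy.2⟩
  have hbm1 := ae_restrict_of_ae_restrict_of_subset hsub1 hbm
  have hbm2 := ae_restrict_of_ae_restrict_of_subset hsub2 hbm
  have hi1 := integrable_tau hq hmeas (s := Set.Ioo 0 x) (by simp [Real.volume_Ioo]) hm
    (hbm1.mono fun y h => h.1)
  have hi2 := integrable_tau hq hmeas (s := Set.Ico x x') (by simp [Real.volume_Ico]) hm
    (hbm2.mono fun y h => h.1)
  have hdisj : Disjoint (Set.Ioo (0:ℝ) x) (Set.Ico x x') :=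
    Set.disjoint_left.mpr (fun y hy hy' => absurd hy.2 (not_lt.mpr hy'.1))
  have hsplit : tauE q ξ x' = tauE q ξ x + ∫ y in Set.Ico x x', 1/((1-q)*ξ y) := by
    unfold tauE
    rw [← Set.Ioo_union_Ico_eq_Ioo hx hxx.le, setIntegral_union hdisj measurableSet_Ico hi1 hi2]
  haveI : Fact (volume (Set.Ico x x') < ⊤) := ⟨by simp [Real.volume_Ico]⟩
  have hcl : ∫ y in Set.Ico x x', (1/((1-q)*M)) ≤ ∫ y in Set.Ico x x', 1/((1-q)*ξ y) := by
    apply integral_mono_ae (show IntegrableOn (fun _ => (1/((1-q)*M) : ℝ)) (Set.Ico x x') volume from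
      integrableOn_const (by simp [Real.volume_Ico])) hi2
    filter_upwards [hbm2] with y hy
    have hξ : 0 < ξ y := lt_of_lt_of_le hm hy.1
    gcongr
    exact hy.2
  have hcu : ∫ y in Set.Ico x x', 1/((1-q)*ξ y) ≤ ∫ y in Set.Ico x x', (1/((1-q)*m)) := by
    apply integral_mono_ae hi2 (show IntegrableOn (fun _ => (1/((1-q)*m) : ℝ)) (Set.Ico x x') volume from
      integrableOn_const (by simp [Real.volume_Ico]))
    filter_upwards [hbm2] with y hy
    have hξ : 0 < ξ y := lt_of_lt_of_le hm hy.1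
    gcongr
    exact hy.1
  rw [setIntegral_const] at hcl hcu
  simp only [Real.volume_real_Ico, max_eq_left (by linarith : (0:ℝ) ≤ x'-x), Real.volume_Ico, ENNReal.toReal_ofReal (by linarith : (0:ℝ) ≤ x'-x),
    smul_eq_mul] at hcl hcu
  constructor
  · rw [hsplit]
    have : (x'-x)/((1-q)*M) = (x'-x) * (1/((1-q)*M)) := by ring
    linarith [hcl]
  · rw [hsplit]
    have : (x'-x)/((1-q)*m) = (x'-x) * (1/((1-q)*m)) := by ring
    linarith [hcu]

lemma PhiI_diff {x x' w b : ℝ} (hx : 0 < x) (hxx : x < x') (hm : 0 < m) (hM : 0 < M)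
    (hbm : ∀ᵐ y ∂(volume.restrict (Set.Ioo 0 x')), m ≤ ξ y ∧ ξ y ≤ M)
    (hw : 0 ≤ w) (hb0 : 0 ≤ b) (hb1 : b < 1)
    (hwb : ∀ᵐ y ∂(volume.restrict (Set.Ioo 0 x')), w / ξ y ≤ b) :
    PhiI q 2 ξ x w + (x'-x)*(w/((1-q)*M)) ≤ PhiI q 2 ξ x' w := by
  have h1q : (0:ℝ) < 1 - q := by linarith [hq.2]
  have hsub1 : Set.Ioo (0:ℝ) x ⊆ Set.Ioo 0 x' := Set.Ioo_subset_Ioo le_rfl hxx.le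
  have hsub2 : Set.Ico x x' ⊆ Set.Ioo 0 x' := fun y hy => ⟨lt_of_lt_of_le hx hy.1, hy.2⟩
  have hbm1 := ae_restrict_of_ae_restrict_of_subset hsub1 hbm
  have hbm2 := ae_restrict_of_ae_restrict_of_subset hsub2 hbm
  have hwb1 := ae_restrict_of_ae_restrict_of_subset hsub1 hwb
  have hwb2 := ae_restrict_of_ae_restrict_of_subset hsub2 hwb
  have hi1 := integrable_phi hq hmeas (s := Set.Ioo 0 x) (by simp [Real.volume_Ioo]) hm
    (hbm1.mono fun y h => h.1) hw hb0 hb1 hwb1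
  have hi2 := integrable_phi hq hmeas (s := Set.Ico x x') (by simp [Real.volume_Ico]) hm
    (hbm2.mono fun y h => h.1) hw hb0 hb1 hwb2
  have hdisj : Disjoint (Set.Ioo (0:ℝ) x) (Set.Ico x x') :=
    Set.disjoint_left.mpr (fun y hy hy' => absurd hy.2 (not_lt.mpr hy'.1))
  have hsplit : PhiI q 2 ξ x' w = PhiI q 2 ξ x w + ∫ y in Set.Ico x x', phiR q 2 (w/ξ y) := by
    unfold PhiI
    rw [← Set.Ioo_union_Ico_eq_Ioo hx hxx.le, setIntegral_union hdisj measurableSet_Ico hi1 hi2]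
  haveI : Fact (volume (Set.Ico x x') < ⊤) := ⟨by simp [Real.volume_Ico]⟩
  have hcl : ∫ y in Set.Ico x x', (w/((1-q)*M)) ≤ ∫ y in Set.Ico x x', phiR q 2 (w/ξ y) := by
    apply integral_mono_ae (show IntegrableOn (fun _ => (w/((1-q)*M) : ℝ)) (Set.Ico x x') volume from
      integrableOn_const (by simp [Real.volume_Ico])) hi2
    filter_upwards [hbm2, hwb2] with y hy h2
    have hξ : 0 < ξ y := lt_of_lt_of_le hm hy.1
    have hu0 : 0 ≤ w / ξ y := by positivity
    have hu1 : w / ξ y < 1 := lt_of_le_of_lt h2 hb1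
    calc w/((1-q)*M) ≤ w/((1-q)*ξ y) := by
          gcongr
          all_goals first | exact Or.inl trivial | positivity | exact hy.2
    _ = (w/ξ y)/(1-q) := by rw [div_div]; ring_nf
    _ ≤ phiR q 2 (w/ξ y) := phi_lb1 hq hu0 hu1
  rw [setIntegral_const] at hcl
  simp only [Real.volume_real_Ico, max_eq_left (by linarith : (0:ℝ) ≤ x'-x), Real.volume_Ico, ENNReal.toReal_ofReal (by linarith : (0:ℝ) ≤ x'-x),
    smul_eq_mul] at hcl
  rw [hsplit]
  linarith [hcl]

end big

set_option maxHeartbeats 2000000 in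
theorem stmt_5 (q : ℝ) (hq : q ∈ Set.Ioo (0:ℝ) 1)
    (ξ : ℝ → ℝ) (hmeas : Measurable ξ) (m M : ℝ) (hm : 0 < m)
    (hbound : ∀ᵐ y : ℝ ∂volume, 0 < y → m ≤ ξ y ∧ ξ y ≤ M)
    (Wo : ℝ → ℝ) (hWo : ∀ x : ℝ, Wo x = essInf ξ (volume.restrict (Set.Ioo 0 x)))
    (hblow : ∀ x : ℝ, 0 < x → Tendsto (fun w => PhiI q 2 ξ x w)
      (nhdsWithin (Wo x) (Set.Iio (Wo x))) atTop)
    -- `ω τ x` is the unique root of `τ·w = Φ₂(w∣x)` on `(0, W°_x)`: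
    (ω : ℝ → ℝ → ℝ)
    (hω : ∀ τ x : ℝ, 0 < x → tauE q ξ x < τ →
      ω τ x ∈ Set.Ioo 0 (Wo x) ∧ τ * ω τ x = PhiI q 2 ξ x (ω τ x) ∧
      ∀ w ∈ Set.Ioo 0 (Wo x), τ * w = PhiI q 2 ξ x w → w = ω τ x) :
    -- (i) monotonicity and limits in τ
    (∀ x : ℝ, 0 < x →
      StrictMonoOn (fun τ => ω τ x) (Set.Ioi (tauE q ξ x)) ∧
      Tendsto (fun τ => ω τ x) (nhdsWithin (tauE q ξ x) (Set.Ioi (tauE q ξ x))) (nhds 0) ∧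
      Tendsto (fun τ => ω τ x) atTop (nhds (Wo x))) ∧
    -- (ii) monotonicity and limit in x
    (∀ τ : ℝ, 0 < τ →
      (∀ x x' : ℝ, 0 < x → x < x' → tauE q ξ x' < τ → ω τ x' < ω τ x) ∧
      (∀ xe : ℝ, 0 < xe → tauE q ξ xe = τ →
        Tendsto (fun x => ω τ x) (nhdsWithin xe (Set.Iio xe)) (nhds 0))) := by
  have h1q : (0:ℝ) < 1 - q := by linarith [hq.2]
  have h1q2 : (0:ℝ) < 1 - q^2 := by nlinarith [hq.1, hq.2]
  -- m ≤ M
  have hmM : m ≤ M := by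
    by_contra hc
    push_neg at hc
    have h0 : volume (Set.Ioi (0:ℝ)) = 0 := by
      apply measure_mono_null _ (ae_iff.mp hbound)
      intro y hy
      simp only [Set.mem_setOf_eq]
      intro h
      rcases h hy with ⟨h1, h2⟩
      linarith
    simp [Real.volume_Ioi] at h0
  have hM : 0 < M := lt_of_lt_of_le hm hmM
  -- restricted a.e. bounds
  have hbmx : ∀ x : ℝ, ∀ᵐ y ∂(volume.restrict (Set.Ioo 0 x)), m ≤ ξ y ∧ ξ y ≤ M := by
    intro x
    filter_upwards [ae_restrict_of_ae hbound, ae_restrict_mem measurableSet_Ioo] with y h1 h2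
    exact h1 h2.1
  have hNB : ∀ x : ℝ, 0 < x → (ae (volume.restrict (Set.Ioo (0:ℝ) x))).NeBot := by
    intro x hx
    rw [ae_neBot]
    intro h
    rw [Measure.restrict_eq_zero] at h
    simp only [Real.volume_Ioo, ENNReal.ofReal_eq_zero] at h
    linarith
  have hbddb : ∀ x : ℝ, Filter.IsBoundedUnder (· ≥ ·) (ae (volume.restrict (Set.Ioo (0:ℝ) x))) ξ :=
    fun x => ⟨m, Filter.eventually_map.mpr ((hbmx x).mono fun y h => h.1)⟩
  have hbddu : ∀ x : ℝ, Filter.IsBoundedUnder (· ≤ ·) (ae (volume.restrict (Set.Ioo (0:ℝ) x))) ξ :=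
    fun x => ⟨M, Filter.eventually_map.mpr ((hbmx x).mono fun y h => h.2)⟩
  have hWm : ∀ x : ℝ, 0 < x → m ≤ Wo x := by
    intro x hx
    rw [hWo]
    haveI := hNB x hx
    exact Filter.le_liminf_of_le ((hbddu x).isCoboundedUnder_ge)
      ((hbmx x).mono fun y h => h.1)
  have hW0 : ∀ x : ℝ, 0 < x → 0 < Wo x := fun x hx => lt_of_lt_of_le hm (hWm x hx)
  have hWanti : ∀ x x' : ℝ, 0 < x → x ≤ x' → Wo x' ≤ Wo x := by
    intro x x' hx hxx
    rw [hWo, hWo]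
    haveI := hNB x hx
    exact Filter.liminf_le_liminf_of_le
      (ae_mono (Measure.restrict_mono (Set.Ioo_subset_Ioo le_rfl hxx) le_rfl))
      (hbddb x') ((hbddu x).isCoboundedUnder_ge)
  have hWae : ∀ x : ℝ, 0 < x → ∀ᵐ y ∂(volume.restrict (Set.Ioo 0 x)), Wo x ≤ ξ y := by
    intro x hx
    rw [hWo]
    exact ae_essInf_le (hbddb x)
  have hdiv : ∀ x w : ℝ, 0 < x → 0 ≤ w →
      (∀ᵐ y ∂(volume.restrict (Set.Ioo 0 x)), w / ξ y ≤ w / Wo x) := by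
    intro x w hx hw
    filter_upwards [hWae x hx] with y h2
    have hWp := hW0 x hx
    have hyp : 0 < ξ y := lt_of_lt_of_le hWp h2
    gcongr
  have hub0 : ∀ x w : ℝ, 0 < x → 0 ≤ w → (0:ℝ) ≤ w / Wo x := by
    intro x w hx hw
    have := hW0 x hx
    positivity
  have hub1 : ∀ x w : ℝ, 0 < x → w < Wo x → w / Wo x < 1 := by
    intro x w hx hw
    rw [div_lt_one (hW0 x hx)]
    exact hw
  -- key ratio comparison
  have hkey : ∀ x w₁ w₂ : ℝ, 0 < x → 0 < w₁ → w₁ ≤ w₂ → w₂ < Wo x →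
      PhiI q 2 ξ x w₁ * w₂ ≤ PhiI q 2 ξ x w₂ * w₁ := by
    intro x w₁ w₂ hx h1 h12 h2
    have hw2 : 0 ≤ w₂ := le_trans h1.le h12
    exact PhiI_ratio hq hmeas hm ((hbmx x).mono fun y h => h.1) h1 h12
      (hub0 x w₂ hx hw2) (hub1 x w₂ hx h2) (hdiv x w₂ hx hw2)
  -- lower bound wrapper
  have hlbw : ∀ x w : ℝ, 0 < x → 0 ≤ w → w < Wo x →
      w * tauE q ξ x + (4*w^2/(M^2*(1-q^2))) * x ≤ PhiI q 2 ξ x w := by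
    intro x w hx hw hwW
    exact PhiI_lb hq hmeas hx hm hM (hbmx x) hw (hub0 x w hx hw) (hub1 x w hx hwW)
      (hdiv x w hx hw)
  -- if `τ·ε < Φ(ε)` then `ω τ x < ε`
  have hcontra : ∀ x τ ε : ℝ, 0 < x → tauE q ξ x < τ → 0 < ε → ε < Wo x →
      τ * ε < PhiI q 2 ξ x ε → ω τ x < ε := by
    intro x τ ε hx hτ hε hεW hlt
    by_contra h
    push_neg at h
    obtain ⟨⟨hw0, hwW⟩, heq, -⟩ := hω τ x hx hτ
    have hk := hkey x ε (ω τ x) hx hε h hwW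
    rw [← heq] at hk
    nlinarith
  -- if `Φ(a) < τ·a` then `a < ω τ x`
  have hlower : ∀ x τ a : ℝ, 0 < x → tauE q ξ x < τ → 0 < a → a < Wo x →
      PhiI q 2 ξ x a < τ * a → a < ω τ x := by
    intro x τ a hx hτ ha haW hlt
    by_contra h
    push_neg at h
    obtain ⟨⟨hw0, hwW⟩, heq, -⟩ := hω τ x hx hτ
    have hk := hkey x (ω τ x) a hx hw0 h haW
    rw [← heq] at hk
    nlinarith
  constructor
  · -- part (i)
    intro x hx
    refine ⟨?_, ?_, ?_⟩
    · -- strict monotonicity in τ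
      intro τ₁ h1 τ₂ h2 h12
      simp only [Set.mem_Ioi] at h1 h2
      by_contra hcon
      push_neg at hcon
      obtain ⟨⟨ha0, haW⟩, heqa, -⟩ := hω τ₁ x hx h1
      obtain ⟨⟨hb0, hbW⟩, heqb, -⟩ := hω τ₂ x hx h2
      have hk := hkey x (ω τ₂ x) (ω τ₁ x) hx hb0 hcon haW
      rw [← heqa, ← heqb] at hk
      nlinarith [mul_pos ha0 hb0, h12]
    · -- limit as τ → τ_e(x)⁺
      rw [tendsto_order]
      constructor
      · intro a ha
        filter_upwards [self_mem_nhdsWithin] with τ hτ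
        obtain ⟨⟨h0, -⟩, -, -⟩ := hω τ x hx hτ
        linarith
      · intro a ha
        have hWp := hW0 x hx
        have hminp : 0 < min a (Wo x) := lt_min ha hWp
        set ε := min a (Wo x) / 2 with hεdef
        have hε0 : 0 < ε := by positivity
        have hεW : ε < Wo x := by
          have := min_le_right a (Wo x); simp only [hεdef]; linarith
        have hεa : ε < a := by
          have := min_le_left a (Wo x); simp only [hεdef]; linarith
        have hlb := hlbw x ε hx hε0.le hεW
        have hc : 0 < (4*ε^2/(M^2*(1-q^2))) * x := by positivity
        have hev : Set.Ioo (tauE q ξ x) (tauE q ξ x + (4*ε^2/(M^2*(1-q^2))) * x / ε)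
            ∈ nhdsWithin (tauE q ξ x) (Set.Ioi (tauE q ξ x)) := by
          apply Ioo_mem_nhdsGT_of_mem
          constructor
          · exact le_rfl
          · have : 0 < (4*ε^2/(M^2*(1-q^2))) * x / ε := by positivity
            linarith
        filter_upwards [hev] with τ hτ
        have hlt : τ * ε < PhiI q 2 ξ x ε := by
          have h2 : τ * ε < tauE q ξ x * ε + (4*ε^2/(M^2*(1-q^2))) * x := by
            have hmul := mul_lt_mul_of_pos_right hτ.2 hε0
            have hce : (4*ε^2/(M^2*(1-q^2))) * x / ε * ε = (4*ε^2/(M^2*(1-q^2))) * x :=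
              div_mul_cancel₀ _ hε0.ne'
            nlinarith [hmul, hce]
          linarith [hlb]
        have := hcontra x τ ε hx hτ.1 hε0 hεW hlt
        linarith
    · -- limit as τ → ∞
      rw [tendsto_order]
      constructor
      · intro a ha
        rcases le_or_gt a 0 with h | h
        · filter_upwards [eventually_gt_atTop (tauE q ξ x)] with τ hτ
          obtain ⟨⟨h0, -⟩, -, -⟩ := hω τ x hx hτ
          linarith
        · filter_upwards [eventually_gt_atTop (max (tauE q ξ x) (PhiI q 2 ξ x a / a))]
            with τ hτ
          have hτ1 : tauE q ξ x < τ := lt_of_le_of_lt (le_max_left _ _) hτ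
          have hτ2 : PhiI q 2 ξ x a / a < τ := lt_of_le_of_lt (le_max_right _ _) hτ
          exact hlower x τ a hx hτ1 h ha ((div_lt_iff₀ h).1 hτ2)
      · intro a ha
        filter_upwards [eventually_gt_atTop (tauE q ξ x)] with τ hτ
        obtain ⟨⟨-, hW⟩, -, -⟩ := hω τ x hx hτ
        exact lt_trans hW ha
  · -- part (ii)
    intro τ hτpos
    constructor
    · -- strict antitonicity in x
      intro x x' hx hxx hτ'
      have hx' : 0 < x' := lt_trans hx hxx
      have htd := tau_diff hq hmeas hx hxx hm hM (hbmx x')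
      have hτx : tauE q ξ x < τ := by
        have hpos : 0 < (x'-x)/((1-q)*M) := by
          have : 0 < x' - x := by linarith
          positivity
        linarith [htd.1]
      obtain ⟨⟨hw'0, hw'W⟩, heq', -⟩ := hω τ x' hx' hτ'
      have hw'Wx : ω τ x' < Wo x := lt_of_lt_of_le hw'W (hWanti x x' hx hxx.le)
      have hdlt := PhiI_diff hq hmeas hx hxx hm hM (hbmx x') hw'0.le
        (hub0 x' (ω τ x') hx' hw'0.le) (hub1 x' (ω τ x') hx' hw'W)
        (hdiv x' (ω τ x') hx' hw'0.le)
      have hlt : PhiI q 2 ξ x (ω τ x') < τ * ω τ x' := by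
        have hpos : 0 < (x'-x)*(ω τ x'/((1-q)*M)) := by
          have h1 : 0 < x' - x := by linarith
          positivity
        rw [← heq'] at hdlt
        linarith
      exact hlower x τ (ω τ x') hx hτx hw'0 hw'Wx hlt
    · -- limit as x → x_e(τ)⁻
      intro xe hxe htaue
      have hτxlt : ∀ x : ℝ, 0 < x → x < xe → tauE q ξ x < τ := by
        intro x hx0 hxlt
        have htd := tau_diff hq hmeas hx0 hxlt hm hM (hbmx xe)
        have hpos : 0 < (xe-x)/((1-q)*M) := by
          have : 0 < xe - x := by linarith
          positivity
        rw [← htaue]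
        linarith [htd.1]
      rw [tendsto_order]
      constructor
      · intro a ha
        have hev : Set.Ioo (xe/2) xe ∈ nhdsWithin xe (Set.Iio xe) :=
          Ioo_mem_nhdsLT_of_mem ⟨by linarith, le_rfl⟩
        filter_upwards [hev] with x hxmem
        have hx0 : 0 < x := lt_trans (by linarith) hxmem.1
        obtain ⟨⟨h0, -⟩, -, -⟩ := hω τ x hx0 (hτxlt x hx0 hxmem.2)
        linarith
      · intro a ha
        have hminp : 0 < min a m := lt_min ha hm
        set ε := min a m / 2 with hεdef
        have hε0 : 0 < ε := by positivity
        have hεm : ε < m := by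
          have := min_le_right a m; simp only [hεdef]; linarith
        have hεa : ε < a := by
          have := min_le_left a m; simp only [hεdef]; linarith
        set δ := min (xe/2) (ε*xe*(1-q)*m/(M^2*(1-q^2))) with hδdef
        have hδ0 : 0 < δ := by
          apply lt_min (by linarith)
          positivity
        have hev : Set.Ioo (xe - δ) xe ∈ nhdsWithin xe (Set.Iio xe) :=
          Ioo_mem_nhdsLT_of_mem ⟨by linarith, le_rfl⟩
        filter_upwards [hev] with x hxmem
        have hδ1 : δ ≤ xe/2 := min_le_left _ _
        have hδ2 : δ ≤ ε*xe*(1-q)*m/(M^2*(1-q^2)) := min_le_right _ _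
        have hx0 : 0 < x := by
          have := hxmem.1; linarith
        have hxhalf : xe/2 < x := by
          have := hxmem.1; linarith
        have hτx := hτxlt x hx0 hxmem.2
        have hεW : ε < Wo x := lt_of_lt_of_le hεm (hWm x hx0)
        have hlb := hlbw x ε hx0 hε0.le hεW
        have htd := (tau_diff hq hmeas hx0 hxmem.2 hm hM (hbmx xe)).2
        rw [htaue] at htd
        -- τ ≤ tauE x + (xe - x)/((1-q)m)
        have hmain : τ * ε < PhiI q 2 ξ x ε := by
          have hkey1 : (xe - x) * (ε/((1-q)*m)) < (4*ε^2/(M^2*(1-q^2))) * x := by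
            have hxd : xe - x < δ := by linarith [hxmem.1]
            have e1 : (xe - x) * (ε/((1-q)*m)) < δ * (ε/((1-q)*m)) := by
              apply mul_lt_mul_of_pos_right hxd
              positivity
            have e2 : δ * (ε/((1-q)*m)) ≤ (ε*xe*(1-q)*m/(M^2*(1-q^2))) * (ε/((1-q)*m)) := by
              apply mul_le_mul_of_nonneg_right hδ2
              positivity
            have e3 : (ε*xe*(1-q)*m/(M^2*(1-q^2))) * (ε/((1-q)*m))
                = ε^2*xe/(M^2*(1-q^2)) := by
              field_simp
            have e4 : ε^2*xe/(M^2*(1-q^2)) < (4*ε^2/(M^2*(1-q^2))) * x := by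
              have hKpos : (0:ℝ) < M^2*(1-q^2) := by positivity
              have h4x : xe < 4*x := by linarith
              rw [div_mul_eq_mul_div, div_lt_div_iff₀ hKpos hKpos]
              nlinarith [mul_pos (mul_pos (pow_pos hε0 2) hKpos)
                (show (0:ℝ) < 4*x - xe by linarith)]
            calc (xe - x) * (ε/((1-q)*m)) < δ * (ε/((1-q)*m)) := e1
            _ ≤ ε^2*xe/(M^2*(1-q^2)) := by rw [← e3]; exact e2
            _ < (4*ε^2/(M^2*(1-q^2))) * x := e4
          have hτb := mul_le_mul_of_nonneg_right htd hε0.le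
          have hee : ((xe - x)/((1-q)*m))*ε = (xe - x) * (ε/((1-q)*m)) := by ring
          nlinarith [hlb, hτb, hkey1, hee]
        have := hcontra x τ ε hx0 hτx hε0 hεW hmain
        linarith
end

section
/- For every fixed τ > 0, the function x ↦ 𝓗(τ,x) is left-continuous on ℝ_{>0}, non-increasing on ℝ_{>0}, strictly decreasing on (0, x_e(τ)), and 𝓗(τ,x) → 0 as x → x_e(τ)⁻. -/
open MeasureTheory Filter

section series
variable {q : ℝ}

lemma qpow_pos (hq0 : 0 < q) (hq1 : q < 1) (k : ℕ) : 0 < 1 - q ^ (k + 1) := by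
  have : q ^ (k+1) < 1 := pow_lt_one₀ hq0.le hq1 (Nat.succ_ne_zero k)
  linarith

lemma qpow_ge (hq0 : 0 < q) (hq1 : q < 1) (k : ℕ) : 1 - q ≤ 1 - q ^ (k + 1) := by
  have : q ^ (k+1) ≤ q := by
    calc q ^ (k+1) ≤ q ^ 1 := pow_le_pow_of_le_one hq0.le hq1.le (by omega)
    _ = q := pow_one q
  linarith

lemma summable_phiR (hq0 : 0 < q) (hq1 : q < 1) (n : ℕ) {u : ℝ} (hu0 : 0 ≤ u) (hu1 : u < 1) :
    Summable (fun k : ℕ => ((k : ℝ) + 1) ^ n * u ^ (k + 1) / (1 - q ^ (k + 1))) := by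
  have h1 : Summable (fun k : ℕ => (k : ℝ) ^ n * u ^ k) :=
    summable_pow_mul_geometric_of_norm_lt_one n (by rwa [Real.norm_eq_abs, abs_of_nonneg hu0])
  have h2 : Summable (fun k : ℕ => ((k : ℝ) + 1) ^ n * u ^ (k + 1)) := by
    have := (summable_nat_add_iff (f := fun k : ℕ => (k : ℝ) ^ n * u ^ k) 1).2 h1
    refine this.congr fun k => ?_
    push_cast; ring
  refine Summable.of_nonneg_of_le (fun k => ?_) (fun k => ?_) (h2.div_const (1 - q))
  · have := qpow_pos hq0 hq1 k
    positivity
  · exact div_le_div_of_nonneg_left (by positivity) (by linarith) (qpow_ge hq0 hq1 k)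

lemma phiR_nonneg (hq0 : 0 < q) (hq1 : q < 1) (n : ℕ) {u : ℝ} (hu0 : 0 ≤ u) :
    0 ≤ phiR q n u := by
  apply tsum_nonneg
  intro k
  have := qpow_pos hq0 hq1 k
  positivity

lemma phiR_mono (hq0 : 0 < q) (hq1 : q < 1) (n : ℕ) {u v : ℝ} (hv0 : 0 ≤ v) (hvu : v ≤ u)
    (hu1 : u < 1) : phiR q n v ≤ phiR q n u := by
  refine Summable.tsum_le_tsum (fun k => ?_) (summable_phiR hq0 hq1 n hv0 (lt_of_le_of_lt hvu hu1))
    (summable_phiR hq0 hq1 n (hv0.trans hvu) hu1)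
  have h := qpow_pos hq0 hq1 k
  have hp : v ^ (k+1) ≤ u ^ (k+1) := pow_le_pow_left₀ hv0 hvu (k+1)
  have hc : (0:ℝ) ≤ ((k:ℝ)+1) ^ n := by positivity
  gcongr

lemma phiR_one_le_two (hq0 : 0 < q) (hq1 : q < 1) {u : ℝ} (hu0 : 0 ≤ u) (hu1 : u < 1) :
    phiR q 1 u ≤ phiR q 2 u := by
  refine Summable.tsum_le_tsum (fun k => ?_) (summable_phiR hq0 hq1 1 hu0 hu1)
    (summable_phiR hq0 hq1 2 hu0 hu1)
  have h := qpow_pos hq0 hq1 k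
  have hk : ((k:ℝ)+1) ^ 1 ≤ ((k:ℝ)+1) ^ 2 := by
    apply pow_le_pow_right₀ (by norm_num) (by omega)
  have hu : (0:ℝ) ≤ u ^ (k+1) := by positivity
  gcongr ?_ / _
  nlinarith

lemma phiR_lower (hq0 : 0 < q) (hq1 : q < 1) (n : ℕ) {u : ℝ} (hu0 : 0 ≤ u) (hu1 : u < 1) :
    u / (1 - q) ≤ phiR q n u := by
  have := Summable.sum_le_tsum (f := fun k : ℕ => ((k : ℝ) + 1) ^ n * u ^ (k + 1) / (1 - q ^ (k + 1)))
    {0} (fun k _ => by have := qpow_pos hq0 hq1 k; positivity)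
    (summable_phiR hq0 hq1 n hu0 hu1)
  simpa [phiR] using this

lemma phiR2_lower (hq0 : 0 < q) (hq1 : q < 1) {u : ℝ} (hu0 : 0 ≤ u) (hu1 : u < 1) :
    u / (1 - q) + u ^ 2 ≤ phiR q 2 u := by
  have := Summable.sum_le_tsum (f := fun k : ℕ => ((k : ℝ) + 1) ^ 2 * u ^ (k + 1) / (1 - q ^ (k + 1)))
    {0, 1} (fun k _ => by have := qpow_pos hq0 hq1 k; positivity)
    (summable_phiR hq0 hq1 2 hu0 hu1)
  have h1 := qpow_pos hq0 hq1 1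
  have h2 : u ^ 2 ≤ ((1:ℝ)+1)^2 * u ^ 2 / (1 - q ^ (1+1)) := by
    rw [le_div_iff₀ h1]
    have h3 : (0:ℝ) ≤ u ^ 2 := by positivity
    have h5 : (0:ℝ) ≤ q ^ (1+1) := by positivity
    nlinarith [mul_nonneg h3 h5]
  calc u / (1-q) + u^2 ≤ u / (1-q) + ((1:ℝ)+1)^2 * u^2 / (1 - q^(1+1)) := by linarith
  _ ≤ phiR q 2 u := by
      refine le_trans (le_of_eq ?_) this
      norm_num [Finset.sum_insert, Finset.mem_singleton]

end series

section series2
variable {q : ℝ}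

lemma pow_succ_sub_le {a b : ℝ} (hb : 0 ≤ b) (hba : b ≤ a) (k : ℕ) :
    a ^ (k+1) - b ^ (k+1) ≤ ((k:ℝ)+1) * a ^ k * (a - b) := by
  induction k with
  | zero => simp
  | succ k ih =>
    have ha : 0 ≤ a := hb.trans hba
    have hp : b ^ (k+1) ≤ a ^ (k+1) := pow_le_pow_left₀ hb hba (k+1)
    have hpk : b ^ k ≤ a ^ k := pow_le_pow_left₀ hb hba k
    have h1 : a ^ (k+2) - b ^ (k+2) = a * (a ^ (k+1) - b ^ (k+1)) + b ^ (k+1) * (a - b) := by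
      ring
    have h2 : a * (a ^ (k+1) - b ^ (k+1)) ≤ a * (((k:ℝ)+1) * a ^ k * (a - b)) := by
      apply mul_le_mul_of_nonneg_left ih ha
    have h3 : b ^ (k+1) * (a - b) ≤ a ^ (k+1) * (a - b) := by
      apply mul_le_mul_of_nonneg_right hp (by linarith)
    have h4 : a * (((k:ℝ)+1) * a ^ k * (a - b)) = ((k:ℝ)+1) * a ^ (k+1) * (a-b) := by ring
    calc a ^ (k+2) - b ^ (k+2) ≤ ((k:ℝ)+1) * a ^ (k+1) * (a-b) + a ^ (k+1) * (a-b) := by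
          rw [h1]; rw [h4] at h2; linarith
    _ = ((k:ℝ)+1+1) * a ^ (k+1) * (a - b) := by ring
    _ = ((↑(k+1):ℝ)+1) * a ^ (k+1) * (a - b) := by push_cast; ring

/-- ratio monotonicity: `b * φ₂(a) ≤ a * φ₂(b)` for `0 ≤ a ≤ b < 1`. -/
lemma phiR2_ratio (hq0 : 0 < q) (hq1 : q < 1) {a b : ℝ} (ha0 : 0 ≤ a) (hab : a ≤ b)
    (hb1 : b < 1) : b * phiR q 2 a ≤ a * phiR q 2 b := by
  unfold phiR
  rw [← tsum_mul_left, ← tsum_mul_left]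
  refine Summable.tsum_le_tsum (fun k => ?_)
    ((summable_phiR hq0 hq1 2 ha0 (lt_of_le_of_lt hab hb1)).mul_left b)
    ((summable_phiR hq0 hq1 2 (ha0.trans hab) hb1).mul_left a)
  have h := qpow_pos hq0 hq1 k
  rw [mul_div_assoc', mul_div_assoc']
  gcongr ?_ / _
  have hk : b * a ^ (k+1) ≤ a * b ^ (k+1) := by
    have hpk : a ^ k ≤ b ^ k := pow_le_pow_left₀ ha0 hab k
    calc b * a ^ (k+1) = (a * b) * a ^ k := by ring
    _ ≤ (a * b) * b ^ k := by
        apply mul_le_mul_of_nonneg_left hpk (mul_nonneg ha0 (ha0.trans hab))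
    _ = a * b ^ (k+1) := by ring
  calc b * (((k:ℝ)+1)^2 * a ^ (k+1)) = ((k:ℝ)+1)^2 * (b * a ^ (k+1)) := by ring
  _ ≤ ((k:ℝ)+1)^2 * (a * b ^ (k+1)) := by
      apply mul_le_mul_of_nonneg_left hk (by positivity)
  _ = a * (((k:ℝ)+1)^2 * b ^ (k+1)) := by ring

/-- `φ₁(u) ≤ φ₁(v) + ((u-v)/u)·φ₂(u)` for `0 ≤ v ≤ u < 1`, `0 < u`. -/
lemma phiR1_diff (hq0 : 0 < q) (hq1 : q < 1) {u v : ℝ} (hv0 : 0 ≤ v) (hvu : v ≤ u)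
    (hu0 : 0 < u) (hu1 : u < 1) :
    phiR q 1 u ≤ phiR q 1 v + ((u - v)/u) * phiR q 2 u := by
  unfold phiR
  rw [← tsum_mul_left, ← Summable.tsum_add (summable_phiR hq0 hq1 1 hv0 (hvu.trans_lt hu1))
    ((summable_phiR hq0 hq1 2 hu0.le hu1).mul_left _)]
  refine Summable.tsum_le_tsum (fun k => ?_) (summable_phiR hq0 hq1 1 hu0.le hu1)
    ((summable_phiR hq0 hq1 1 hv0 (hvu.trans_lt hu1)).add
      ((summable_phiR hq0 hq1 2 hu0.le hu1).mul_left _))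
  have h := qpow_pos hq0 hq1 k
  rw [mul_div_assoc', ← add_div]
  gcongr ?_ / _
  have key : ((k:ℝ)+1)^1 * u^(k+1) ≤ ((k:ℝ)+1)^1 * v^(k+1)
      + (u-v)/u * (((k:ℝ)+1)^2 * u^(k+1)) := by
    have h1 : u ^ (k+1) - v ^ (k+1) ≤ ((k:ℝ)+1) * u ^ k * (u - v) := pow_succ_sub_le hv0 hvu k
    have h2 : (u-v)/u * (((k:ℝ)+1)^2 * u^(k+1)) = ((k:ℝ)+1) * (((k:ℝ)+1) * u ^ k * (u-v)) := by
      field_simp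
      ring
    rw [h2]
    have hk1 : (0:ℝ) ≤ (k:ℝ)+1 := by positivity
    nlinarith [mul_le_mul_of_nonneg_left h1 hk1]
  exact key

/-- explicit Lipschitz constant for `phiR q n` on `[0, ρ]`. -/
noncomputable def Kq (q : ℝ) (n : ℕ) (ρ : ℝ) : ℝ :=
  (∑' k : ℕ, ((k:ℝ)+1) ^ (n+1) * ρ ^ k) / (1 - q)

lemma Kq_nonneg (hq1 : q < 1) {n : ℕ} {ρ : ℝ} (hρ : 0 ≤ ρ) : 0 ≤ Kq q n ρ := by
  apply div_nonneg _ (by linarith)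
  apply tsum_nonneg
  intro k; positivity

lemma summable_K (n : ℕ) {ρ : ℝ} (hρ0 : 0 ≤ ρ) (hρ1 : ρ < 1) :
    Summable (fun k : ℕ => ((k:ℝ)+1) ^ (n+1) * ρ ^ k) := by
  have h1 : Summable (fun k : ℕ => (k : ℝ) ^ (n+1) * ρ ^ k) :=
    summable_pow_mul_geometric_of_norm_lt_one (n+1)
      (by rwa [Real.norm_eq_abs, abs_of_nonneg hρ0])
  have h2 : Summable (fun k : ℕ => ((k:ℝ)+1) ^ (n+1) * ρ ^ (k+1)) := by
    have := (summable_nat_add_iff (f := fun k : ℕ => (k : ℝ) ^ (n+1) * ρ ^ k) 1).2 h1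
    refine this.congr fun k => ?_; push_cast; ring
  rcases eq_or_lt_of_le hρ0 with hρ | hρ
  · refine summable_of_ne_finset_zero (s := {0}) fun k hk => ?_
    simp only [Finset.mem_singleton] at hk
    rw [← hρ, zero_pow hk, mul_zero]
  · have := h2.mul_left (1/ρ)
    refine this.congr fun k => ?_
    field_simp
    ring

lemma phiR_lip (hq0 : 0 < q) (hq1 : q < 1) (n : ℕ) {u v ρ : ℝ} (hv0 : 0 ≤ v) (hvu : v ≤ u)
    (huρ : u ≤ ρ) (hρ1 : ρ < 1) :
    phiR q n u ≤ phiR q n v + (u - v) * Kq q n ρ := by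
  have hρ0 : 0 ≤ ρ := (hv0.trans hvu).trans huρ
  have hu1 : u < 1 := lt_of_le_of_lt huρ hρ1
  have hS1 := summable_phiR hq0 hq1 n hv0 (hvu.trans_lt hu1) (q := q)
  have hS2 : Summable (fun k : ℕ => (u - v) * ((((k:ℝ)+1) ^ (n+1) * ρ ^ k) / (1 - q))) :=
    ((summable_K n hρ0 hρ1).div_const _).mul_left _
  have hsum : ∑' k : ℕ, (((k:ℝ)+1) ^ n * v ^ (k+1) / (1 - q ^ (k+1))
      + (u - v) * ((((k:ℝ)+1) ^ (n+1) * ρ ^ k) / (1 - q)))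
      = phiR q n v + (u - v) * Kq q n ρ := by
    rw [Summable.tsum_add hS1 hS2, tsum_mul_left]
    unfold phiR Kq
    rw [tsum_div_const]
  rw [← hsum]
  refine Summable.tsum_le_tsum (fun k => ?_) (summable_phiR hq0 hq1 n (hv0.trans hvu) hu1)
    (hS1.add hS2)
  have h := qpow_pos hq0 hq1 k
  have hge := qpow_ge hq0 hq1 k
  have hq' : (0:ℝ) < 1 - q := by linarith
  have h1 : u ^ (k+1) - v ^ (k+1) ≤ ((k:ℝ)+1) * ρ ^ k * (u - v) := by
    refine le_trans (pow_succ_sub_le hv0 hvu k) ?_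
    have : u ^ k ≤ ρ ^ k := pow_le_pow_left₀ (hv0.trans hvu) huρ k
    have huv : 0 ≤ u - v := by linarith
    have hk1 : (0:ℝ) ≤ (k:ℝ)+1 := by positivity
    calc ((k:ℝ)+1) * u ^ k * (u-v) ≤ ((k:ℝ)+1) * ρ ^ k * (u-v) := by
          apply mul_le_mul_of_nonneg_right _ huv
          apply mul_le_mul_of_nonneg_left this hk1
    _ = ((k:ℝ)+1) * ρ ^ k * (u-v) := rfl
  -- goal: (k+1)^n u^{k+1}/(1-q^{k+1}) ≤ (k+1)^n v^{k+1}/(1-q^{k+1}) + (u-v)*((k+1)^{n+1} ρ^k * (1-q)⁻¹)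
  have hmain : ((k:ℝ)+1)^n * u^(k+1) / (1 - q^(k+1)) - ((k:ℝ)+1)^n * v^(k+1) / (1 - q^(k+1))
      ≤ (u - v) * ((((k:ℝ)+1)^(n+1) * ρ^k) / (1-q)) := by
    rw [div_sub_div_same]
    have e1 : ((k:ℝ)+1)^n * u^(k+1) - ((k:ℝ)+1)^n * v^(k+1)
        = ((k:ℝ)+1)^n * (u^(k+1) - v^(k+1)) := by ring
    rw [e1]
    have h2 : ((k:ℝ)+1)^n * (u^(k+1) - v^(k+1)) ≤ ((k:ℝ)+1)^n * (((k:ℝ)+1) * ρ^k * (u-v)) :=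
      mul_le_mul_of_nonneg_left h1 (by positivity)
    have h3 : ((k:ℝ)+1)^n * (u^(k+1)-v^(k+1)) / (1 - q^(k+1))
        ≤ ((k:ℝ)+1)^n * (((k:ℝ)+1) * ρ^k * (u-v)) / (1 - q) := by
      have hnum : (0:ℝ) ≤ ((k:ℝ)+1)^n * (((k:ℝ)+1) * ρ^k * (u-v)) := by
        have : (0:ℝ) ≤ u - v := by linarith
        positivity
      apply div_le_div₀ hnum h2 hq' hge
    refine h3.trans (le_of_eq ?_)
    rw [pow_succ]
    field_simp
  linarith

end series2

/-- slab integral -/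
noncomputable def JI (q : ℝ) (n : ℕ) (ξ : ℝ → ℝ) (a c w : ℝ) : ℝ :=
  ∫ y in Set.Ioo a c, phiR q n (w / ξ y)

lemma PhiI_eq_JI (q : ℝ) (n : ℕ) (ξ : ℝ → ℝ) (x w : ℝ) : PhiI q n ξ x w = JI q n ξ 0 x w := rfl

section integral
variable {q : ℝ} {ξ : ℝ → ℝ} {a c W w v u m M : ℝ} {n : ℕ}

lemma div_bounds (hW : 0 < W) (hw0 : 0 ≤ w) (hwW : w < W) {t : ℝ} (ht : W ≤ t) :
    0 ≤ w / t ∧ w / t ≤ w / W ∧ w / W < 1 := by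
  have ht0 : 0 < t := lt_of_lt_of_le hW ht
  refine ⟨by positivity, ?_, ?_⟩
  · gcongr
  · rw [div_lt_one hW]; exact hwW

lemma aesm_phi (hq0 : 0 < q) (hq1 : q < 1) (hmeas : Measurable ξ) (hW : 0 < W)
    (hw0 : 0 ≤ w) (hwW : w < W)
    (hae : ∀ᵐ y ∂(volume.restrict (Set.Ioo a c)), W ≤ ξ y) :
    AEStronglyMeasurable (fun y => phiR q n (w / ξ y)) (volume.restrict (Set.Ioo a c)) := by
  set ρ := w / W with hρdef
  have hρ0 : 0 ≤ ρ := by positivity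
  have hρ1 : ρ < 1 := by rw [hρdef, div_lt_one hW]; exact hwW
  set g : ℝ → ℝ := fun t => phiR q n (max 0 (min t ρ)) with hgdef
  have hgmono : Monotone g := by
    intro s t hst
    apply phiR_mono hq0 hq1 n (le_max_left _ _) _ (by
      calc max 0 (min t ρ) ≤ max 0 ρ := by
            apply max_le_max le_rfl (min_le_right _ _)
      _ = ρ := max_eq_right hρ0
      _ < 1 := hρ1)
    exact max_le_max le_rfl (min_le_min hst le_rfl)
  have hgm : Measurable g := hgmono.measurable
  have hcomp : Measurable (fun y => g (w / ξ y)) := hgm.comp (measurable_const.div hmeas)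
  refine (hcomp.aestronglyMeasurable).congr ?_
  filter_upwards [hae] with y hy
  obtain ⟨h1, h2, _⟩ := div_bounds hW hw0 hwW hy
  simp only [hgdef]
  rw [min_eq_left h2, max_eq_right h1]

lemma integrableOn_phi (hq0 : 0 < q) (hq1 : q < 1) (hmeas : Measurable ξ) (hW : 0 < W)
    (hw0 : 0 ≤ w) (hwW : w < W)
    (hae : ∀ᵐ y ∂(volume.restrict (Set.Ioo a c)), W ≤ ξ y) :
    IntegrableOn (fun y => phiR q n (w / ξ y)) (Set.Ioo a c) := by
  have hρ1 : w / W < 1 := by rw [div_lt_one hW]; exact hwW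
  have hconst : IntegrableOn (fun _ : ℝ => phiR q n (w / W)) (Set.Ioo a c) volume :=
    integrableOn_const measure_Ioo_lt_top.ne
  refine Integrable.mono' hconst (aesm_phi hq0 hq1 hmeas hW hw0 hwW hae) ?_
  filter_upwards [hae] with y hy
  obtain ⟨h1, h2, h3⟩ := div_bounds hW hw0 hwW hy
  rw [Real.norm_eq_abs, abs_of_nonneg (phiR_nonneg hq0 hq1 n h1)]
  exact phiR_mono hq0 hq1 n h1 h2 h3

lemma JI_nonneg (hq0 : 0 < q) (hq1 : q < 1) (hW : 0 < W) (hw0 : 0 ≤ w)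
    (hae : ∀ᵐ y ∂(volume.restrict (Set.Ioo a c)), W ≤ ξ y) :
    0 ≤ JI q n ξ a c w := by
  apply integral_nonneg_of_ae
  filter_upwards [hae] with y hy
  have ht0 : 0 < ξ y := lt_of_lt_of_le hW hy
  exact phiR_nonneg hq0 hq1 n (by positivity)

lemma JI_mono (hq0 : 0 < q) (hq1 : q < 1) (hmeas : Measurable ξ) (hW : 0 < W)
    (hv0 : 0 ≤ v) (hvw : v ≤ w) (hwW : w < W)
    (hae : ∀ᵐ y ∂(volume.restrict (Set.Ioo a c)), W ≤ ξ y) :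
    JI q n ξ a c v ≤ JI q n ξ a c w := by
  refine integral_mono_ae (integrableOn_phi hq0 hq1 hmeas hW hv0 (hvw.trans_lt hwW) hae)
    (integrableOn_phi hq0 hq1 hmeas hW (hv0.trans hvw) hwW hae) ?_
  filter_upwards [hae] with y hy
  have ht0 : 0 < ξ y := lt_of_lt_of_le hW hy
  obtain ⟨h1, h2, h3⟩ := div_bounds hW (hv0.trans hvw) hwW hy
  exact phiR_mono hq0 hq1 n (by positivity) (by gcongr) (lt_of_le_of_lt h2 h3)

lemma JI_upper (hq0 : 0 < q) (hq1 : q < 1) (hmeas : Measurable ξ) (hW : 0 < W)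
    (hw0 : 0 ≤ w) (hwW : w < W) (hac : a ≤ c)
    (hae : ∀ᵐ y ∂(volume.restrict (Set.Ioo a c)), W ≤ ξ y) :
    JI q n ξ a c w ≤ (c - a) * phiR q n (w / W) := by
  have hconst : IntegrableOn (fun _ : ℝ => phiR q n (w / W)) (Set.Ioo a c) volume :=
    integrableOn_const measure_Ioo_lt_top.ne
  have h := integral_mono_ae (integrableOn_phi hq0 hq1 hmeas hW hw0 hwW hae)
    hconst
    (by filter_upwards [hae] with y hy
        obtain ⟨h1, h2, h3⟩ := div_bounds hW hw0 hwW hy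
        exact phiR_mono hq0 hq1 n h1 h2 h3)
  refine h.trans (le_of_eq ?_)
  rw [setIntegral_const, Real.volume_real_Ioo_of_le (by linarith), smul_eq_mul]

lemma JI_lower (hq0 : 0 < q) (hq1 : q < 1) (hmeas : Measurable ξ) (hW : 0 < W)
    (hw0 : 0 ≤ w) (hwW : w < W) (hac : a ≤ c) (hM0 : 0 < M)
    (hae : ∀ᵐ y ∂(volume.restrict (Set.Ioo a c)), W ≤ ξ y)
    (haeM : ∀ᵐ y ∂(volume.restrict (Set.Ioo a c)), ξ y ≤ M) :
    (c - a) * (w / (M * (1 - q))) ≤ JI q n ξ a c w := by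
  have hconst : IntegrableOn (fun _ : ℝ => w / (M * (1-q))) (Set.Ioo a c) volume :=
    integrableOn_const measure_Ioo_lt_top.ne
  have h := integral_mono_ae hconst
    (integrableOn_phi (n := n) hq0 hq1 hmeas hW hw0 hwW hae) ?_
  · refine le_trans (le_of_eq ?_) h
    rw [setIntegral_const, Real.volume_real_Ioo_of_le (by linarith), smul_eq_mul]
  · filter_upwards [hae, haeM] with y hy hyM
    have ht0 : 0 < ξ y := lt_of_lt_of_le hW hy
    obtain ⟨h1, h2, h3⟩ := div_bounds hW hw0 hwW hy
    have hq' : (0:ℝ) < 1 - q := by linarith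
    calc w / (M * (1-q)) = (w / M) / (1 - q) := by rw [div_div]
    _ ≤ (w / ξ y) / (1 - q) := by gcongr
    _ ≤ phiR q n (w / ξ y) := phiR_lower hq0 hq1 n h1 (lt_of_le_of_lt h2 h3)

end integral

section integral2
variable {q : ℝ} {ξ : ℝ → ℝ} {a c W w v u m M x x1 x2 : ℝ} {n : ℕ}

lemma JI_ratio (hq0 : 0 < q) (hq1 : q < 1) (hmeas : Measurable ξ) (hW : 0 < W)
    (hv0 : 0 < v) (hvu : v ≤ u) (huW : u < W)
    (hae : ∀ᵐ y ∂(volume.restrict (Set.Ioo a c)), W ≤ ξ y) :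
    u * JI q 2 ξ a c v ≤ v * JI q 2 ξ a c u := by
  unfold JI
  rw [← integral_const_mul, ← integral_const_mul]
  refine integral_mono_ae
    (((integrableOn_phi hq0 hq1 hmeas hW hv0.le (hvu.trans_lt huW) hae)).const_mul u)
    (((integrableOn_phi hq0 hq1 hmeas hW (hv0.le.trans hvu) huW hae)).const_mul v) ?_
  filter_upwards [hae] with y hy
  have ht0 : 0 < ξ y := lt_of_lt_of_le hW hy
  obtain ⟨h1, h2, h3⟩ := div_bounds hW (hv0.le.trans hvu) huW hy
  have := phiR2_ratio hq0 hq1 (a := v / ξ y) (b := u / ξ y) (by positivity) (by gcongr)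
    (lt_of_le_of_lt h2 h3)
  calc u * phiR q 2 (v / ξ y) = ξ y * ((u / ξ y) * phiR q 2 (v / ξ y)) := by
        field_simp
  _ ≤ ξ y * ((v / ξ y) * phiR q 2 (u / ξ y)) := by
        apply mul_le_mul_of_nonneg_left this ht0.le
  _ = v * phiR q 2 (u / ξ y) := by field_simp

lemma JI_one_le_two (hq0 : 0 < q) (hq1 : q < 1) (hmeas : Measurable ξ) (hW : 0 < W)
    (hw0 : 0 ≤ w) (hwW : w < W)
    (hae : ∀ᵐ y ∂(volume.restrict (Set.Ioo a c)), W ≤ ξ y) :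
    JI q 1 ξ a c w ≤ JI q 2 ξ a c w := by
  refine integral_mono_ae (integrableOn_phi hq0 hq1 hmeas hW hw0 hwW hae)
    (integrableOn_phi hq0 hq1 hmeas hW hw0 hwW hae) ?_
  filter_upwards [hae] with y hy
  obtain ⟨h1, h2, h3⟩ := div_bounds hW hw0 hwW hy
  exact phiR_one_le_two hq0 hq1 h1 (lt_of_le_of_lt h2 h3)

lemma JI_diff (hq0 : 0 < q) (hq1 : q < 1) (hmeas : Measurable ξ) (hW : 0 < W)
    (hv0 : 0 ≤ v) (hvu : v ≤ u) (hu0 : 0 < u) (huW : u < W)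
    (hae : ∀ᵐ y ∂(volume.restrict (Set.Ioo a c)), W ≤ ξ y) :
    JI q 1 ξ a c u ≤ JI q 1 ξ a c v + ((u - v)/u) * JI q 2 ξ a c u := by
  unfold JI
  rw [← integral_const_mul, ← integral_add (integrableOn_phi hq0 hq1 hmeas hW hv0
    (hvu.trans_lt huW) hae)
    (((integrableOn_phi hq0 hq1 hmeas hW hu0.le huW hae)).const_mul _)]
  refine integral_mono_ae (integrableOn_phi hq0 hq1 hmeas hW hu0.le huW hae)
    ((integrableOn_phi hq0 hq1 hmeas hW hv0 (hvu.trans_lt huW) hae).add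
      (((integrableOn_phi hq0 hq1 hmeas hW hu0.le huW hae)).const_mul _)) ?_
  filter_upwards [hae] with y hy
  have ht0 : 0 < ξ y := lt_of_lt_of_le hW hy
  obtain ⟨h1, h2, h3⟩ := div_bounds hW hu0.le huW hy
  have hd := phiR1_diff hq0 hq1 (v := v / ξ y) (u := u / ξ y) (by positivity) (by gcongr)
    (by positivity) (lt_of_le_of_lt h2 h3)
  have he : (u / ξ y - v / ξ y) / (u / ξ y) = (u - v) / u := by
    rw [div_sub_div_same]
    field_simp
  rw [he] at hd
  exact hd

lemma JI_lip (hq0 : 0 < q) (hq1 : q < 1) (hmeas : Measurable ξ) (hW : 0 < W)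
    (hv0 : 0 ≤ v) (hvu : v ≤ u) (huW : u < W) (hac : a ≤ c)
    (hae : ∀ᵐ y ∂(volume.restrict (Set.Ioo a c)), W ≤ ξ y) :
    JI q n ξ a c u ≤ JI q n ξ a c v + (c - a) * ((u - v) * Kq q n (u / W) / W) := by
  have hu0 : 0 ≤ u := hv0.trans hvu
  have hρ0 : 0 ≤ u / W := div_nonneg hu0 hW.le
  have hρ1 : u / W < 1 := by rw [div_lt_one hW]; exact huW
  have hK := Kq_nonneg (q := q) (n := n) hq1 hρ0
  have hconst : IntegrableOn (fun _ : ℝ => (u - v) * Kq q n (u / W) / W)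
      (Set.Ioo a c) volume := integrableOn_const measure_Ioo_lt_top.ne
  have hIv := integrableOn_phi (n := n) hq0 hq1 hmeas hW hv0 (hvu.trans_lt huW) hae
  have hIu := integrableOn_phi (n := n) hq0 hq1 hmeas hW hu0 huW hae
  have e2 : (c - a) * ((u - v) * Kq q n (u / W) / W)
      = ∫ _ in Set.Ioo a c, ((u - v) * Kq q n (u / W) / W) := by
    rw [setIntegral_const, Real.volume_real_Ioo_of_le (by linarith), smul_eq_mul]
  unfold JI
  rw [e2, ← integral_add hIv hconst]
  refine integral_mono_ae hIu (hIv.add hconst) ?_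
  filter_upwards [hae] with y hy
  have ht0 : 0 < ξ y := lt_of_lt_of_le hW hy
  obtain ⟨h1, h2, h3⟩ := div_bounds hW hu0 huW hy
  have hl := phiR_lip hq0 hq1 n (v := v / ξ y) (u := u / ξ y) (ρ := u / W)
    (by positivity) (by gcongr) h2 hρ1
  refine hl.trans ?_
  have hstep : (u / ξ y - v / ξ y) ≤ (u - v) / W := by
    rw [div_sub_div_same]
    gcongr
  have h4 : (u / ξ y - v / ξ y) * Kq q n (u / W) ≤ (u - v) / W * Kq q n (u / W) :=
    mul_le_mul_of_nonneg_right hstep hK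
  have h5 : (u - v) / W * Kq q n (u / W) = (u - v) * Kq q n (u / W) / W := by ring
  linarith

lemma JI_add (hq0 : 0 < q) (hq1 : q < 1) (hmeas : Measurable ξ) (hW : 0 < W)
    (hw0 : 0 ≤ w) (hwW : w < W) (h01 : 0 < x1) (h12 : x1 < x2)
    (hae : ∀ᵐ y ∂(volume.restrict (Set.Ioo 0 x2)), W ≤ ξ y) :
    PhiI q n ξ x2 w = PhiI q n ξ x1 w + JI q n ξ x1 x2 w := by
  have hsub1 : Set.Ioo (0:ℝ) x1 ⊆ Set.Ioo 0 x2 := Set.Ioo_subset_Ioo le_rfl h12.le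
  have hsub2 : Set.Ioo x1 x2 ⊆ Set.Ioo 0 x2 := Set.Ioo_subset_Ioo h01.le le_rfl
  have hae1 : ∀ᵐ y ∂(volume.restrict (Set.Ioo 0 x1)), W ≤ ξ y :=
    ae_restrict_of_ae_restrict_of_subset hsub1 hae
  have hae2 : ∀ᵐ y ∂(volume.restrict (Set.Ioo x1 x2)), W ≤ ξ y :=
    ae_restrict_of_ae_restrict_of_subset hsub2 hae
  have hI1 := integrableOn_phi (n := n) (a := 0) (c := x1) hq0 hq1 hmeas hW hw0 hwW hae1
  have hI2 := integrableOn_phi (n := n) (a := x1) (c := x2) hq0 hq1 hmeas hW hw0 hwW hae2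
  have hIco : IntegrableOn (fun y => phiR q n (w / ξ y)) (Set.Ico x1 x2) volume := by
    rw [IntegrableOn, Measure.restrict_congr_set Ioo_ae_eq_Ico.symm]
    exact hI2
  have hunion : Set.Ioo (0:ℝ) x2 = Set.Ioo 0 x1 ∪ Set.Ico x1 x2 :=
    (Set.Ioo_union_Ico_eq_Ioo h01 h12.le).symm
  unfold PhiI JI
  rw [hunion, setIntegral_union ?_ measurableSet_Ico hI1 hIco]
  · congr 1
    rw [setIntegral_congr_set Ioo_ae_eq_Ico.symm]
  · rw [Set.disjoint_left]
    intro b hb hb2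
    exact absurd hb2.1 (not_le.2 hb.2)

end integral2

section essinf
variable {μ : Measure ℝ} {f : ℝ → ℝ} {c M : ℝ}

lemma essInf_ge_of_ae (hμ : μ ≠ 0) (hM : ∀ᵐ y ∂μ, f y ≤ M) (hc : ∀ᵐ y ∂μ, c ≤ f y) :
    c ≤ essInf f μ := by
  have hne : (ae μ).NeBot := ae_neBot.2 hμ
  have hcob : IsCoboundedUnder (· ≥ ·) (ae μ) f :=
    IsBoundedUnder.isCoboundedUnder_ge ⟨M, eventually_map.2 hM⟩
  exact le_liminf_of_le hcob hc

lemma ae_essInf_le_of_ae (hc : ∀ᵐ y ∂μ, c ≤ f y) : ∀ᵐ y ∂μ, essInf f μ ≤ f y :=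
  ae_essInf_le ⟨c, eventually_map.2 hc⟩

end essinf

section lower
variable {q : ℝ} {ξ : ℝ → ℝ} {W w m M x : ℝ}

lemma PhiI2_lower (hq0 : 0 < q) (hq1 : q < 1) (hmeas : Measurable ξ) (hW : 0 < W)
    (hw0 : 0 < w) (hwW : w < W) (hx : 0 < x) (hm : 0 < m)
    (hae : ∀ᵐ y ∂(volume.restrict (Set.Ioo 0 x)), W ≤ ξ y)
    (hmM : ∀ y ∈ Set.Ioo 0 x, m ≤ ξ y ∧ ξ y ≤ M) :
    w * tauE q ξ x + w^2 * x / M^2 ≤ PhiI q 2 ξ x w := by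
  have hq' : (0:ℝ) < 1 - q := by linarith
  have hM0 : 0 < M := by
    rcases Set.nonempty_Ioo.2 hx with ⟨y, hy⟩
    have := hmM y hy
    linarith
  have haemM : ∀ᵐ y ∂(volume.restrict (Set.Ioo 0 x)), m ≤ ξ y ∧ ξ y ≤ M := by
    filter_upwards [ae_restrict_mem measurableSet_Ioo] with y hy
    exact hmM y hy
  have hImeas : Measurable (fun y => 1 / ((1 - q) * ξ y)) := by
    exact measurable_const.div (measurable_const.mul hmeas)
  have hI1 : IntegrableOn (fun y => 1 / ((1 - q) * ξ y)) (Set.Ioo 0 x) volume := by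
    have hconst : IntegrableOn (fun _ : ℝ => 1 / ((1 - q) * m)) (Set.Ioo 0 x) volume :=
      integrableOn_const measure_Ioo_lt_top.ne
    refine Integrable.mono' hconst hImeas.aestronglyMeasurable ?_
    filter_upwards [haemM] with y hy
    have : 0 < ξ y := lt_of_lt_of_le hm hy.1
    rw [Real.norm_eq_abs, abs_of_nonneg (by positivity)]
    gcongr
    exact hy.1
  have hIrhs : IntegrableOn (fun y => w * (1 / ((1 - q) * ξ y)) + w^2 / M^2)
      (Set.Ioo 0 x) volume := by
    exact (hI1.const_mul w).add (integrableOn_const measure_Ioo_lt_top.ne)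
  have hI2 := integrableOn_phi (n := 2) hq0 hq1 hmeas hW hw0.le hwW hae
  have hle := integral_mono_ae hIrhs hI2 ?_
  · refine le_trans (le_of_eq ?_) hle
    rw [integral_add (hI1.const_mul w) (integrableOn_const measure_Ioo_lt_top.ne),
      integral_const_mul, setIntegral_const, Real.volume_real_Ioo_of_le (by linarith), smul_eq_mul]
    unfold tauE
    ring
  · filter_upwards [hae, haemM] with y hy hy2
    have ht0 : 0 < ξ y := lt_of_lt_of_le hW hy
    obtain ⟨h1, h2, h3⟩ := div_bounds hW hw0.le hwW hy
    have hlow := phiR2_lower hq0 hq1 h1 (lt_of_le_of_lt h2 h3)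
    have e1 : w / ξ y / (1 - q) = w * (1 / ((1 - q) * ξ y)) := by
      field_simp
    have e2 : w^2 / M^2 ≤ (w / ξ y)^2 := by
      rw [div_pow]
      gcongr
      exact hy2.2
    calc w * (1 / ((1 - q) * ξ y)) + w^2/M^2 ≤ w / ξ y / (1-q) + (w / ξ y)^2 := by
          rw [e1]; linarith
    _ ≤ phiR q 2 (w / ξ y) := hlow

end lower

lemma Kq_mono {q : ℝ} (hq1 : q < 1) (n : ℕ) {ρ ρ' : ℝ} (hρ0 : 0 ≤ ρ) (hρρ : ρ ≤ ρ')
    (hρ1 : ρ' < 1) : Kq q n ρ ≤ Kq q n ρ' := by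
  unfold Kq
  have h1q : (0:ℝ) < 1 - q := by linarith
  have hts : (∑' k : ℕ, ((k:ℝ)+1) ^ (n+1) * ρ ^ k) ≤ ∑' k : ℕ, ((k:ℝ)+1) ^ (n+1) * ρ' ^ k := by
    refine Summable.tsum_le_tsum (fun k => ?_) (summable_K n hρ0 (hρρ.trans_lt hρ1))
      (summable_K n (hρ0.trans hρρ) hρ1)
    have : ρ ^ k ≤ ρ' ^ k := pow_le_pow_left₀ hρ0 hρρ k
    have h2 : (0:ℝ) ≤ ((k:ℝ)+1)^(n+1) := by positivity
    nlinarith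
  gcongr

set_option maxHeartbeats 2000000 in
theorem stmt_6 (q : ℝ) (hq : q ∈ Set.Ioo (0:ℝ) 1)
    (ξ : ℝ → ℝ) (hmeas : Measurable ξ) (m M : ℝ) (hm : 0 < m)
    (hbound : ∀ y : ℝ, 0 ≤ y → m ≤ ξ y ∧ ξ y ≤ M)
    -- roadblocks: a discrete subset of ℝ_{>0}
    (B : Set ℝ) (hBpos : ∀ b ∈ B, 0 < b) (hBfin : ∀ x : ℝ, {b ∈ B | b ≤ x}.Finite)
    (Wo : ℝ → ℝ) (hWo : ∀ x : ℝ, Wo x = essInf ξ (volume.restrict (Set.Ioo 0 x)))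
    -- `W_x = min(ξ(0), inf{ξ(b) : b ∈ B, b < x}, W°_x)`
    (WW : ℝ → ℝ)
    (hWW : ∀ x : ℝ, WW x = sInf (insert (ξ 0) (insert (Wo x) (ξ '' {b ∈ B | b < x}))))
    (hblow : ∀ x : ℝ, 0 < x → Tendsto (fun w => PhiI q 2 ξ x w)
      (nhdsWithin (Wo x) (Set.Iio (Wo x))) atTop)
    (τ : ℝ) (hτ : 0 < τ)
    -- the edge `x_e(τ)`
    (xe : ℝ) (hxe : 0 < xe) (hxeq : tauE q ξ xe = τ)
    -- `ω x` is the unique root of `τ·w = Φ₂(w∣x)` on `(0, W°_x)`, for `0 < x < x_e`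
    (ω : ℝ → ℝ)
    (hω : ∀ x : ℝ, 0 < x → x < xe →
      ω x ∈ Set.Ioo 0 (Wo x) ∧ τ * ω x = PhiI q 2 ξ x (ω x) ∧
      ∀ w ∈ Set.Ioo 0 (Wo x), τ * w = PhiI q 2 ξ x w → w = ω x)
    -- the limit shape `𝓗(τ,·)`
    (H : ℝ → ℝ)
    (hH1 : ∀ x : ℝ, 0 < x → x < xe →
      H x = τ * min (ω x) (WW x) - PhiI q 1 ξ x (min (ω x) (WW x)))
    (hH2 : ∀ x : ℝ, xe ≤ x → H x = 0) :
    (∀ x : ℝ, 0 < x → Tendsto H (nhdsWithin x (Set.Iio x)) (nhds (H x))) ∧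
    AntitoneOn H (Set.Ioi 0) ∧
    StrictAntiOn H (Set.Ioo 0 xe) ∧
    Tendsto H (nhdsWithin xe (Set.Iio xe)) (nhds 0) := by
  obtain ⟨hq0, hq1⟩ := hq
  have hq' : (0:ℝ) < 1 - q := by linarith
  have hMm : m ≤ M := le_trans (hbound 0 le_rfl).1 (hbound 0 le_rfl).2
  have hM0 : 0 < M := lt_of_lt_of_le hm hMm
  -- basic facts about the measures
  have hμne : ∀ x : ℝ, 0 < x → volume.restrict (Set.Ioo (0:ℝ) x) ≠ 0 := by
    intro x hx h
    rw [Measure.restrict_eq_zero, Real.volume_Ioo] at h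
    simp only [ENNReal.ofReal_eq_zero] at h
    linarith
  have haemM : ∀ x : ℝ, ∀ᵐ y ∂(volume.restrict (Set.Ioo (0:ℝ) x)), m ≤ ξ y ∧ ξ y ≤ M := by
    intro x
    filter_upwards [ae_restrict_mem measurableSet_Ioo] with y hy
    exact hbound y hy.1.le
  have haeM : ∀ a c : ℝ, 0 ≤ a → ∀ᵐ y ∂(volume.restrict (Set.Ioo a c)), ξ y ≤ M := by
    intro a c ha
    filter_upwards [ae_restrict_mem measurableSet_Ioo] with y hy
    exact (hbound y (le_trans ha hy.1.le)).2
  -- basic facts about `Wo`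
  have hWom : ∀ x : ℝ, 0 < x → m ≤ Wo x := by
    intro x hx
    rw [hWo]
    exact essInf_ge_of_ae (hμne x hx) ((haemM x).mono fun y h => h.2)
      ((haemM x).mono fun y h => h.1)
  have hWo0 : ∀ x : ℝ, 0 < x → 0 < Wo x := fun x hx => lt_of_lt_of_le hm (hWom x hx)
  have hWoae : ∀ x : ℝ, ∀ᵐ y ∂(volume.restrict (Set.Ioo (0:ℝ) x)), Wo x ≤ ξ y := by
    intro x
    rw [hWo]
    exact ae_essInf_le_of_ae ((haemM x).mono fun y h => h.1)
  have hWoanti : ∀ x1 x2 : ℝ, 0 < x1 → x1 ≤ x2 → Wo x2 ≤ Wo x1 := by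
    intro x1 x2 h1 h12
    rw [hWo x1]
    refine essInf_ge_of_ae (hμne x1 h1) ((haemM x1).mono fun y h => h.2) ?_
    exact ae_restrict_of_ae_restrict_of_subset (Set.Ioo_subset_Ioo le_rfl h12) (hWoae x2)
  have hWoL : ∀ x : ℝ, 0 < x → ∀ ε : ℝ, 0 < ε → ∃ x' ∈ Set.Ioo (0:ℝ) x, Wo x' < Wo x + ε := by
    intro x hx ε hε
    by_contra hcon
    push_neg at hcon
    set c := Wo x + ε with hc
    have hbadmeas : MeasurableSet {y : ℝ | ξ y < c} := measurableSet_lt hmeas measurable_const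
    have hbadnull : ∀ x' ∈ Set.Ioo (0:ℝ) x, volume ({y : ℝ | ξ y < c} ∩ Set.Ioo 0 x') = 0 := by
      intro x' hx'
      have h1 : ∀ᵐ y ∂(volume.restrict (Set.Ioo (0:ℝ) x')), c ≤ ξ y :=
        (hWoae x').mono fun y hy => le_trans (hcon x' hx') hy
      have h2 := ae_iff.1 h1
      rw [Measure.restrict_apply (by simpa [not_le] using hbadmeas)] at h2
      simpa [not_le] using h2
    set xn : ℕ → ℝ := fun n => x - x / (n + 2) with hxn
    have hxnmem : ∀ n : ℕ, xn n ∈ Set.Ioo (0:ℝ) x := by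
      intro n
      have h2 : x / ((n:ℝ) + 2) ≤ x / 2 := by
        apply div_le_div_of_nonneg_left hx.le (by norm_num) (by
          have : (0:ℝ) ≤ (n:ℝ) := Nat.cast_nonneg n
          linarith)
      have h3 : 0 < x / ((n:ℝ) + 2) := by positivity
      constructor
      · simp only [hxn]; linarith
      · simp only [hxn]; linarith
    have hcover : Set.Ioo (0:ℝ) x ⊆ ⋃ n : ℕ, Set.Ioo (0:ℝ) (xn n) := by
      intro y hy
      have hxy : 0 < x - y := by linarith [hy.2]
      obtain ⟨n, hn⟩ := exists_nat_gt (x / (x - y))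
      refine Set.mem_iUnion.2 ⟨n, hy.1, ?_⟩
      have h4 : x / ((n:ℝ) + 2) < x - y := by
        rw [div_lt_iff₀ (by positivity)]
        have h5 : x / (x - y) < (n:ℝ) + 2 := by linarith
        rw [div_lt_iff₀ hxy] at h5
        linarith [h5]
      simp only [hxn]
      linarith
    have hnull : volume ({y : ℝ | ξ y < c} ∩ Set.Ioo 0 x) = 0 := by
      have h6 : ({y : ℝ | ξ y < c} ∩ Set.Ioo 0 x) ⊆ ⋃ n : ℕ,
          ({y : ℝ | ξ y < c} ∩ Set.Ioo 0 (xn n)) := by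
        intro y hy
        obtain ⟨n, hn⟩ := Set.mem_iUnion.1 (hcover hy.2)
        exact Set.mem_iUnion.2 ⟨n, hy.1, hn⟩
      refine le_antisymm (le_trans (measure_mono h6) (le_of_eq ?_)) (by simp)
      exact measure_iUnion_null fun n => hbadnull (xn n) (hxnmem n)
    have hge : c ≤ Wo x := by
      rw [hWo x]
      refine essInf_ge_of_ae (hμne x hx) ((haemM x).mono fun y h => h.2) ?_
      rw [ae_iff, Measure.restrict_apply (by simpa [not_le] using hbadmeas)]
      simpa [not_le] using hnull
    linarith
  -- basic facts about `WW`
  have hWWfin : ∀ x : ℝ, (insert (ξ 0) (insert (Wo x) (ξ '' {b ∈ B | b < x}))).Finite := by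
    intro x
    exact ((((hBfin x).subset (fun b hb => ⟨hb.1, hb.2.le⟩)).image ξ).insert _).insert _
  have hWWne : ∀ x : ℝ, (insert (ξ 0) (insert (Wo x) (ξ '' {b ∈ B | b < x}))).Nonempty :=
    fun x => ⟨ξ 0, Set.mem_insert _ _⟩
  have hWWbdd : ∀ x : ℝ, BddBelow (insert (ξ 0) (insert (Wo x) (ξ '' {b ∈ B | b < x}))) :=
    fun x => (hWWfin x).bddBelow
  have hWWm : ∀ x : ℝ, 0 < x → m ≤ WW x := by
    intro x hx
    rw [hWW]
    refine le_csInf (hWWne x) ?_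
    rintro b (rfl | rfl | ⟨b', hb', rfl⟩)
    · exact (hbound 0 le_rfl).1
    · exact hWom x hx
    · exact (hbound b' (hBpos b' hb'.1).le).1
  have hWW0 : ∀ x : ℝ, 0 < x → 0 < WW x := fun x hx => lt_of_lt_of_le hm (hWWm x hx)
  have hWWle : ∀ x : ℝ, WW x ≤ Wo x := by
    intro x
    rw [hWW]
    exact csInf_le (hWWbdd x) (Set.mem_insert_of_mem _ (Set.mem_insert _ _))
  have hWWanti : ∀ x1 x2 : ℝ, 0 < x1 → x1 ≤ x2 → WW x2 ≤ WW x1 := by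
    intro x1 x2 h1 h12
    rw [hWW x1]
    refine le_csInf (hWWne x1) ?_
    rintro b (rfl | rfl | ⟨b', hb', rfl⟩)
    · rw [hWW x2]; exact csInf_le (hWWbdd x2) (Set.mem_insert _ _)
    · exact le_trans (le_trans (hWWle x2) (hWoanti x1 x2 h1 h12)) le_rfl
    · rw [hWW x2]
      refine csInf_le (hWWbdd x2) (Set.mem_insert_of_mem _ (Set.mem_insert_of_mem _ ?_))
      exact ⟨b', ⟨hb'.1, lt_of_lt_of_le hb'.2 h12⟩, rfl⟩
  have hWWL : ∀ x : ℝ, 0 < x → ∀ ε : ℝ, 0 < ε →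
      ∃ x₀ ∈ Set.Ioo (0:ℝ) x, ∀ x' ∈ Set.Ioo x₀ x, WW x' < WW x + ε := by
    intro x hx ε hε
    obtain ⟨x₁, hx₁, hWo1⟩ := hWoL x hx ε hε
    have hSfin : {b ∈ B | b < x}.Finite := (hBfin x).subset (fun b hb => ⟨hb.1, hb.2.le⟩)
    have hmem : WW x ∈ insert (ξ 0) (insert (Wo x) (ξ '' {b ∈ B | b < x})) := by
      rw [hWW x]
      exact (hWWne x).csInf_mem (hWWfin x)
    -- choose `x₀` beyond all roadblocks below `x`
    have hβ : ∃ x₀ ∈ Set.Ioo (0:ℝ) x, x₁ ≤ x₀ ∧ ∀ b ∈ B, b < x → b ≤ x₀ := by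
      rcases Set.eq_empty_or_nonempty {b ∈ B | b < x} with hS | hS
      · refine ⟨x₁, hx₁, le_rfl, fun b hb hbx => absurd ?_ (Set.notMem_empty b)⟩
        rw [← hS]; exact ⟨hb, hbx⟩
      · obtain ⟨β, hβS, hβmax⟩ := Set.Finite.exists_maximalFor id _ hSfin hS
        refine ⟨max x₁ β, ⟨lt_of_lt_of_le hx₁.1 (le_max_left _ _),
          max_lt hx₁.2 hβS.2⟩, le_max_left _ _, fun b hb hbx => ?_⟩
        refine le_trans ?_ (le_max_right x₁ β)
        rcases le_or_gt b β with h | h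
        · exact h
        · exact hβmax ⟨hb, hbx⟩ h.le
    obtain ⟨x₀, hx₀, hx₁x₀, hx₀max⟩ := hβ
    refine ⟨x₀, hx₀, fun x' hx' => ?_⟩
    have hx'0 : 0 < x' := lt_trans hx₀.1 hx'.1
    have hSS : {b ∈ B | b < x'} = {b ∈ B | b < x} := by
      ext b
      constructor
      · rintro ⟨h1, h2⟩; exact ⟨h1, lt_trans h2 hx'.2⟩
      · rintro ⟨h1, h2⟩; exact ⟨h1, lt_of_le_of_lt (hx₀max b h1 h2) hx'.1⟩
    rcases hmem with h | h | ⟨b, hb, hbe⟩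
    · have : WW x' ≤ ξ 0 := by
        rw [hWW x']; exact csInf_le (hWWbdd x') (Set.mem_insert _ _)
      rw [← h] at this
      linarith
    · have h1 : WW x' ≤ Wo x' := hWWle x'
      have h2 : Wo x' ≤ Wo x₁ := hWoanti x₁ x' hx₁.1 (le_trans hx₁x₀ hx'.1.le)
      rw [← h] at hWo1
      linarith
    · have : WW x' ≤ ξ b := by
        rw [hWW x']
        refine csInf_le (hWWbdd x') (Set.mem_insert_of_mem _ (Set.mem_insert_of_mem _ ?_))
        rw [hSS]
        exact ⟨b, hb, rfl⟩
      rw [hbe] at this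
      linarith
  -- facts about ω
  have hratio : ∀ x : ℝ, 0 < x → x < xe → ∀ u : ℝ, 0 < u → u ≤ ω x →
      PhiI q 2 ξ x u ≤ τ * u := by
    intro x hx hxlt u hu0 hu
    obtain ⟨⟨hωp, hωW⟩, heq, _⟩ := hω x hx hxlt
    have hJ := JI_ratio (a := 0) (c := x) hq0 hq1 hmeas (hWo0 x hx) hu0 hu hωW (hWoae x)
    rw [← PhiI_eq_JI, ← PhiI_eq_JI, ← heq] at hJ
    have h2 : ω x * PhiI q 2 ξ x u ≤ ω x * (τ * u) := by
      refine hJ.trans (le_of_eq ?_)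
      ring
    exact le_of_mul_le_mul_left h2 hωp
  have hFmono : ∀ x : ℝ, 0 < x → x < xe → ∀ v u : ℝ, 0 < v → v ≤ u → u ≤ ω x →
      τ * v - PhiI q 1 ξ x v ≤ τ * u - PhiI q 1 ξ x u := by
    intro x hx hxlt v u hv0 hvu hu
    obtain ⟨⟨hωp, hωW⟩, heq, _⟩ := hω x hx hxlt
    have hu0 : 0 < u := lt_of_lt_of_le hv0 hvu
    have huW : u < Wo x := lt_of_le_of_lt hu hωW
    have hd := JI_diff (a := 0) (c := x) hq0 hq1 hmeas (hWo0 x hx) hv0.le hvu hu0 huW (hWoae x)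
    rw [← PhiI_eq_JI, ← PhiI_eq_JI, ← PhiI_eq_JI] at hd
    have hr := hratio x hx hxlt u hu0 hu
    have hnn : 0 ≤ (u - v)/u := div_nonneg (by linarith) hu0.le
    have hcoef : (u - v)/u * PhiI q 2 ξ x u ≤ (u - v)/u * (τ * u) :=
      mul_le_mul_of_nonneg_left hr hnn
    have he : (u - v)/u * (τ * u) = τ * (u - v) := by
      field_simp
    linarith only [hd, hcoef, he]
  have hωanti : ∀ x1 x2 : ℝ, 0 < x1 → x1 < x2 → x2 < xe → ω x2 < ω x1 := by
    intro x1 x2 h1 h12 h2e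
    by_contra hcon
    push_neg at hcon
    obtain ⟨⟨hω1p, hω1W⟩, heq1, _⟩ := hω x1 h1 (lt_trans h12 h2e)
    obtain ⟨⟨hω2p, hω2W⟩, heq2, _⟩ := hω x2 (lt_trans h1 h12) h2e
    have hW2 := hWo0 x2 (lt_trans h1 h12)
    have hω1W2 : ω x1 < Wo x2 := lt_of_le_of_lt hcon hω2W
    have hub := hratio x2 (lt_trans h1 h12) h2e (ω x1) hω1p hcon
    have hadd := JI_add (n := 2) hq0 hq1 hmeas hW2 hω1p.le hω1W2 h1 h12 (hWoae x2)
    have hslab := JI_lower (n := 2) (a := x1) (c := x2) (M := M) hq0 hq1 hmeas hW2 hω1p.le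
      hω1W2 h12.le hM0
      (ae_restrict_of_ae_restrict_of_subset (Set.Ioo_subset_Ioo h1.le le_rfl) (hWoae x2))
      (haeM x1 x2 h1.le)
    rw [← heq1] at hadd
    have hpos : 0 < (x2 - x1) * (ω x1 / (M * (1 - q))) := by
      have : 0 < x2 - x1 := by linarith
      positivity
    linarith only [hub, hadd, hslab, hpos]
  -- nonnegativity and upper bound for H
  have hH0 : ∀ x : ℝ, 0 < x → x < xe → 0 ≤ H x ∧ H x ≤ τ * ω x := by
    intro x hx hxlt
    obtain ⟨⟨hωp, hωW⟩, heq, _⟩ := hω x hx hxlt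
    rw [hH1 x hx hxlt]
    have hw0 : 0 < min (ω x) (WW x) := lt_min hωp (hWW0 x hx)
    have hwW : min (ω x) (WW x) < Wo x := lt_of_le_of_lt (min_le_left _ _) hωW
    have h1 : 0 ≤ PhiI q 1 ξ x (min (ω x) (WW x)) := by
      rw [PhiI_eq_JI]
      exact JI_nonneg hq0 hq1 (hWo0 x hx) hw0.le (hWoae x)
    have h2 : PhiI q 1 ξ x (min (ω x) (WW x)) ≤ PhiI q 2 ξ x (min (ω x) (WW x)) := by
      rw [PhiI_eq_JI, PhiI_eq_JI]
      exact JI_one_le_two hq0 hq1 hmeas (hWo0 x hx) hw0.le hwW (hWoae x)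
    have h3 : PhiI q 2 ξ x (min (ω x) (WW x)) ≤ τ * min (ω x) (WW x) :=
      hratio x hx hxlt _ hw0 (min_le_left _ _)
    have h4 : τ * min (ω x) (WW x) ≤ τ * ω x :=
      mul_le_mul_of_nonneg_left (min_le_left _ _) hτ.le
    exact ⟨by linarith only [h1, h2, h3], by linarith only [h1, h3, h4]⟩
  -- strict antitonicity on (0, xe)
  have hstrict : ∀ x1 ∈ Set.Ioo (0:ℝ) xe, ∀ x2 ∈ Set.Ioo (0:ℝ) xe, x1 < x2 → H x2 < H x1 := by
    intro x1 hx1 x2 hx2 h12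
    obtain ⟨⟨hω1p, hω1W⟩, heq1, _⟩ := hω x1 hx1.1 hx1.2
    obtain ⟨⟨hω2p, hω2W⟩, heq2, _⟩ := hω x2 hx2.1 hx2.2
    have hW2 := hWo0 x2 hx2.1
    have hg1 : 0 < min (ω x1) (WW x1) := lt_min hω1p (hWW0 x1 hx1.1)
    have hg2g1 : min (ω x2) (WW x2) ≤ min (ω x1) (WW x1) :=
      min_le_min (hωanti x1 x2 hx1.1 h12 hx2.2).le (hWWanti x1 x2 hx1.1 h12.le)
    have hg2 : 0 < min (ω x2) (WW x2) := lt_min hω2p (hWW0 x2 hx2.1)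
    have hg2ws : min (ω x2) (WW x2) ≤ min (min (ω x1) (WW x1)) (ω x2) :=
      le_min hg2g1 (min_le_left _ _)
    have hwsω2 : min (min (ω x1) (WW x1)) (ω x2) ≤ ω x2 := min_le_right _ _
    have hwsg1 : min (min (ω x1) (WW x1)) (ω x2) ≤ min (ω x1) (WW x1) := min_le_left _ _
    have hg1ω1 : min (ω x1) (WW x1) ≤ ω x1 := min_le_left _ _
    have hws0 : 0 < min (min (ω x1) (WW x1)) (ω x2) := lt_min hg1 hω2p
    have hwsW2 : min (min (ω x1) (WW x1)) (ω x2) < Wo x2 := lt_of_le_of_lt hwsω2 hω2W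
    have hA := hFmono x2 hx2.1 hx2.2 _ _ hg2 hg2ws hwsω2
    have hC := hFmono x1 hx1.1 hx1.2 _ _ hws0 hwsg1 hg1ω1
    have hB := JI_add (n := 1) hq0 hq1 hmeas hW2 hws0.le hwsW2 hx1.1 h12 (hWoae x2)
    have hBpos := JI_lower (n := 1) (a := x1) (c := x2) (M := M) hq0 hq1 hmeas hW2 hws0.le
      hwsW2 h12.le hM0
      (ae_restrict_of_ae_restrict_of_subset (Set.Ioo_subset_Ioo hx1.1.le le_rfl) (hWoae x2))
      (haeM x1 x2 hx1.1.le)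
    have hpos : 0 < (x2 - x1) * (min (min (ω x1) (WW x1)) (ω x2) / (M * (1 - q))) := by
      have : 0 < x2 - x1 := by linarith
      positivity
    rw [hH1 x1 hx1.1 hx1.2, hH1 x2 hx2.1 hx2.2]
    linarith only [hA, hB, hBpos, hpos, hC]
  -- antitone on (0, ∞)
  have hAnti : AntitoneOn H (Set.Ioi 0) := by
    intro x1 hx1 x2 hx2 h12
    simp only [Set.mem_Ioi] at hx1 hx2
    rcases lt_or_ge x2 xe with h2 | h2
    · have hx1e : x1 < xe := lt_of_le_of_lt h12 h2
      rcases eq_or_lt_of_le h12 with rfl | hlt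
      · exact le_rfl
      · exact (hstrict x1 ⟨hx1, hx1e⟩ x2 ⟨hx2, h2⟩ hlt).le
    · rw [hH2 x2 h2]
      rcases lt_or_ge x1 xe with h1 | h1
      · exact (hH0 x1 hx1 h1).1
      · rw [hH2 x1 h1]
  -- the key upper bound on `Φ₂(·|t)` near a left limit point of `ω`
  have hclaim : ∀ t : ℝ, 0 < t → t ≤ xe → ∀ L : ℝ,
      (∀ x' ∈ Set.Ioo (t/2) t, L ≤ ω x') →
      (∀ δ : ℝ, 0 < δ → ∃ x'' ∈ Set.Ioo (t/2) t, ω x'' < L + δ) →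
      ∀ w : ℝ, 0 < w → w ≤ L → w < Wo t → PhiI q 2 ξ t w ≤ τ * L := by
    intro t ht0 hte L hLlb hLub w hw0 hwL hwW
    have hWt := hWo0 t ht0
    set C := phiR q 2 (w / Wo t) with hC
    have hC0 : 0 ≤ C := phiR_nonneg hq0 hq1 2 (div_nonneg hw0.le hWt.le)
    refine le_of_forall_pos_le_add ?_
    intro ε hε
    set δ := ε / (2 * (τ + 1)) with hδ
    have hδ0 : 0 < δ := by positivity
    obtain ⟨x'', hx''mem, hx''⟩ := hLub δ hδ0
    set δ' := ε / (2 * (C + 1)) with hδ'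
    have hδ'0 : 0 < δ' := by positivity
    set x' := max ((x'' + t)/2) (t - δ') with hx'def
    have hx''t := hx''mem.2
    have hx''half := hx''mem.1
    have hx'1 : x'' < x' := lt_of_lt_of_le (by linarith : x'' < (x'' + t)/2) (le_max_left _ _)
    have hx'2 : x' < t := max_lt (by linarith) (by linarith)
    have hx''0 : 0 < x'' := by linarith [half_pos ht0]
    have hx'0 : 0 < x' := lt_trans hx''0 hx'1
    have hx'e : x' < xe := lt_of_lt_of_le hx'2 hte
    obtain ⟨⟨hω'p, hω'W⟩, heq', _⟩ := hω x' hx'0 hx'e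
    have hLω' : L ≤ ω x' := hLlb x' ⟨lt_trans hx''half hx'1, hx'2⟩
    have hωx' : ω x' < L + δ := by
      have h0 := hωanti x'' x' hx''0 hx'1 hx'e
      linarith only [h0, hx'']
    have h1 : PhiI q 2 ξ x' w ≤ PhiI q 2 ξ x' (ω x') := by
      rw [PhiI_eq_JI, PhiI_eq_JI]
      exact JI_mono hq0 hq1 hmeas (hWo0 x' hx'0) hw0.le (hwL.trans hLω') hω'W (hWoae x')
    have hadd := JI_add (n := 2) hq0 hq1 hmeas hWt hw0.le hwW hx'0 hx'2 (hWoae t)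
    have hslab := JI_upper (n := 2) (a := x') (c := t) hq0 hq1 hmeas hWt hw0.le hwW hx'2.le
      (ae_restrict_of_ae_restrict_of_subset (Set.Ioo_subset_Ioo hx'0.le le_rfl) (hWoae t))
    have htx' : t - x' ≤ δ' := by
      have := le_max_right ((x'' + t)/2) (t - δ')
      simp only [hx'def]
      linarith [this]
    have hslab2 : JI q 2 ξ x' t w ≤ δ' * C :=
      le_trans hslab (mul_le_mul_of_nonneg_right htx' hC0)
    have hδ'C : δ' * C ≤ ε/2 := by
      have hid : δ' * (2 * (C + 1)) = ε := by
        rw [hδ']; field_simp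
      linarith only [hid, hδ'0, hC0]
    have hτδ : τ * (L + δ) ≤ τ * L + ε/2 := by
      have hid : δ * (2 * (τ + 1)) = ε := by
        rw [hδ]; field_simp
      linarith only [hid, hδ0, hτ]
    have hωτ : τ * ω x' ≤ τ * (L + δ) := mul_le_mul_of_nonneg_left hωx'.le hτ.le
    calc PhiI q 2 ξ t w = PhiI q 2 ξ x' w + JI q 2 ξ x' t w := hadd
    _ ≤ τ * ω x' + δ' * C := by
        rw [← heq'] at h1
        linarith only [h1, hslab2]
    _ ≤ τ * L + ε := by linarith only [hωτ, hτδ, hδ'C]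
  -- left-continuity of ω
  have hωL : ∀ x : ℝ, 0 < x → x < xe → ∀ ε : ℝ, 0 < ε →
      ∃ x₀ ∈ Set.Ioo (0:ℝ) x, ∀ x' ∈ Set.Ioo x₀ x, ω x' < ω x + ε := by
    intro x hx hxlt ε hε
    obtain ⟨⟨hωp, hωW⟩, heq, huniq⟩ := hω x hx hxlt
    set A := ω '' Set.Ioo (x/2) x with hA
    have hAne : A.Nonempty := ⟨ω ((x/2 + x)/2), ⟨(x/2 + x)/2, ⟨by linarith, by linarith⟩, rfl⟩⟩
    have hAlb : ∀ a ∈ A, ω x ≤ a := by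
      rintro a ⟨x', hx', rfl⟩
      exact (hωanti x' x (by linarith [hx'.1]) hx'.2 hxlt).le
    have hAbdd : BddBelow A := ⟨ω x, hAlb⟩
    set L := sInf A with hL
    have hLlbx : ω x ≤ L := le_csInf hAne hAlb
    have hL0 : 0 < L := lt_of_lt_of_le hωp hLlbx
    have hLlb : ∀ x' ∈ Set.Ioo (x/2) x, L ≤ ω x' := fun x' hx' => csInf_le hAbdd ⟨x', hx', rfl⟩
    have hLub : ∀ δ : ℝ, 0 < δ → ∃ x'' ∈ Set.Ioo (x/2) x, ω x'' < L + δ := by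
      intro δ hδ
      obtain ⟨a, ⟨x'', hx'', rfl⟩, ha⟩ := exists_lt_of_csInf_lt hAne
        (show sInf A < L + δ by rw [← hL]; linarith)
      exact ⟨x'', hx'', ha⟩
    have hCL := hclaim x hx hxlt.le L hLlb hLub
    have hLW : L < Wo x := by
      by_contra hcon
      push_neg at hcon
      have hev1 : ∀ᶠ w in nhdsWithin (Wo x) (Set.Iio (Wo x)), τ * L + 1 < PhiI q 2 ξ x w :=
        (hblow x hx).eventually_gt_atTop (τ * L + 1)
      have hev2 : ∀ᶠ w in nhdsWithin (Wo x) (Set.Iio (Wo x)), 0 < w :=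
        eventually_nhdsWithin_of_eventually_nhds (eventually_gt_nhds (hWo0 x hx))
      have hev3 : ∀ᶠ w in nhdsWithin (Wo x) (Set.Iio (Wo x)), w ∈ Set.Iio (Wo x) :=
        eventually_mem_nhdsWithin
      obtain ⟨w, h1, h2, h3⟩ := (hev1.and (hev2.and hev3)).exists
      have h4 := hCL w h2 (le_trans (le_of_lt h3) hcon) h3
      linarith only [h1, h4]
    have hPhiLle : PhiI q 2 ξ x L ≤ τ * L := hCL L hL0 le_rfl hLW
    have hPhige : τ * L ≤ PhiI q 2 ξ x L := by
      set ρ1 := (L + (Wo x - L)/2) / Wo x with hρ1def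
      have hρ1a : 0 ≤ ρ1 := div_nonneg (by linarith) (hWo0 x hx).le
      have hρ1b : ρ1 < 1 := by rw [hρ1def, div_lt_one (hWo0 x hx)]; linarith
      set Cc := x * Kq q 2 ρ1 / Wo x with hCc
      have hKρ1 := Kq_nonneg (q := q) (n := 2) hq1 hρ1a
      have hCc0 : 0 ≤ Cc := div_nonneg (mul_nonneg hx.le hKρ1) (hWo0 x hx).le
      refine le_of_forall_pos_le_add ?_
      intro ε' hε'
      set δ0 := min (ε' / (Cc + 1)) ((Wo x - L)/2) with hδ0def
      have hδ0pos : 0 < δ0 := lt_min (by positivity) (by linarith)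
      obtain ⟨x'', hx''mem, hx''⟩ := hLub δ0 hδ0pos
      have hx''0 : 0 < x'' := by linarith [hx''mem.1]
      have hx''e : x'' < xe := lt_trans hx''mem.2 hxlt
      obtain ⟨⟨hω''p, hω''W⟩, heq'', _⟩ := hω x'' hx''0 hx''e
      have hδ0half : δ0 ≤ (Wo x - L)/2 := min_le_right _ _
      have hω''Wx : ω x'' < Wo x := by linarith [hx'']
      have hLω'' : L ≤ ω x'' := hLlb x'' hx''mem
      have s1 : τ * L ≤ τ * ω x'' := mul_le_mul_of_nonneg_left hLω'' hτ.le
      have s2 : PhiI q 2 ξ x'' (ω x'') ≤ PhiI q 2 ξ x (ω x'') := by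
        have hadd := JI_add (n := 2) hq0 hq1 hmeas (hWo0 x hx) hω''p.le hω''Wx hx''0
          hx''mem.2 (hWoae x)
        have hnn := JI_nonneg (n := 2) (a := x'') (c := x) hq0 hq1 (hWo0 x hx) hω''p.le
          (ae_restrict_of_ae_restrict_of_subset (Set.Ioo_subset_Ioo hx''0.le le_rfl) (hWoae x))
        linarith only [hadd, hnn]
      have s3 : PhiI q 2 ξ x (ω x'') ≤ PhiI q 2 ξ x L + δ0 * Cc := by
        have hlip := JI_lip (n := 2) (a := 0) (c := x) hq0 hq1 hmeas (hWo0 x hx) hL0.le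
          hLω'' hω''Wx hx.le (hWoae x)
        have hKle : Kq q 2 (ω x'' / Wo x) ≤ Kq q 2 ρ1 := by
          refine Kq_mono hq1 2 (div_nonneg hω''p.le (hWo0 x hx).le) ?_ hρ1b
          rw [hρ1def]
          have hnum : ω x'' ≤ L + (Wo x - L)/2 := by linarith only [hx'', hδ0half]
          rw [div_eq_mul_inv, div_eq_mul_inv]
          exact mul_le_mul_of_nonneg_right hnum (inv_nonneg.2 (hWo0 x hx).le)
        have h6 : (ω x'' - L) * Kq q 2 (ω x'' / Wo x) ≤ δ0 * Kq q 2 ρ1 :=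
          mul_le_mul (by linarith [hx'']) hKle
            (Kq_nonneg hq1 (div_nonneg hω''p.le (hWo0 x hx).le)) hδ0pos.le
        have hterm : x * ((ω x'' - L) * Kq q 2 (ω x'' / Wo x) / Wo x) ≤ δ0 * Cc := by
          have h7 : (ω x'' - L) * Kq q 2 (ω x'' / Wo x) / Wo x ≤ δ0 * Kq q 2 ρ1 / Wo x := by
            rw [div_eq_mul_inv, div_eq_mul_inv]
            exact mul_le_mul_of_nonneg_right h6 (inv_nonneg.2 (hWo0 x hx).le)
          calc x * ((ω x'' - L) * Kq q 2 (ω x'' / Wo x) / Wo x)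
              ≤ x * (δ0 * Kq q 2 ρ1 / Wo x) := mul_le_mul_of_nonneg_left h7 hx.le
          _ = δ0 * Cc := by rw [hCc]; ring
        rw [PhiI_eq_JI, PhiI_eq_JI]
        have he0 : x - 0 = x := sub_zero x
        rw [he0] at hlip
        linarith only [hlip, hterm]
      have s4 : δ0 * Cc ≤ ε' := by
        have h7 : δ0 ≤ ε' / (Cc + 1) := min_le_left _ _
        have h8 : δ0 * Cc ≤ ε' / (Cc + 1) * Cc := mul_le_mul_of_nonneg_right h7 hCc0
        have h9 : ε' / (Cc + 1) * (Cc + 1) = ε' := by field_simp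
        have h10 : 0 ≤ ε' / (Cc + 1) := div_nonneg hε'.le (by linarith only [hCc0])
        linarith only [h8, h9, h10]
      have s2' : τ * ω x'' = PhiI q 2 ξ x'' (ω x'') := heq''
      linarith only [s1, s2, s3, s4, s2']
    have hLeq : L = ω x := huniq L ⟨hL0, hLW⟩ (le_antisymm hPhige hPhiLle)
    obtain ⟨a, ⟨x₀, hx₀, rfl⟩, ha⟩ := exists_lt_of_csInf_lt hAne
      (show sInf A < L + ε by rw [← hL]; linarith)
    refine ⟨x₀, ⟨by linarith [hx₀.1], hx₀.2⟩, fun x' hx' => ?_⟩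
    have h10 : ω x' < ω x₀ := hωanti x₀ x' (by linarith [hx₀.1]) hx'.1 (lt_trans hx'.2 hxlt)
    rw [hLeq] at ha
    linarith only [h10, ha]
  -- behaviour at the edge
  have hedge : ∀ ε : ℝ, 0 < ε → ∃ x₁ ∈ Set.Ioo (xe/2) xe, ω x₁ < ε := by
    intro ε hε
    set A := ω '' Set.Ioo (xe/2) xe with hA
    have hAne : A.Nonempty := ⟨ω ((xe/2 + xe)/2), ⟨(xe/2 + xe)/2, ⟨by linarith, by linarith⟩, rfl⟩⟩
    have hAlb : ∀ a ∈ A, 0 ≤ a := by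
      rintro a ⟨x', hx', rfl⟩
      exact ((hω x' (by linarith [hx'.1]) hx'.2).1.1).le
    have hAbdd : BddBelow A := ⟨0, hAlb⟩
    set L := sInf A with hL
    have hL0 : 0 ≤ L := le_csInf hAne hAlb
    have hLlb : ∀ x' ∈ Set.Ioo (xe/2) xe, L ≤ ω x' := fun x' hx' => csInf_le hAbdd ⟨x', hx', rfl⟩
    have hLub : ∀ δ : ℝ, 0 < δ → ∃ x'' ∈ Set.Ioo (xe/2) xe, ω x'' < L + δ := by
      intro δ hδ
      obtain ⟨a, ⟨x'', hx'', rfl⟩, ha⟩ := exists_lt_of_csInf_lt hAne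
        (show sInf A < L + δ by rw [← hL]; linarith)
      exact ⟨x'', hx'', ha⟩
    have hCL := hclaim xe hxe le_rfl L hLlb hLub
    have hLzero : L = 0 := by
      by_contra hcon
      have hL0' : 0 < L := lt_of_le_of_ne hL0 (Ne.symm hcon)
      have hLW : L < Wo xe := by
        by_contra hcon2
        push_neg at hcon2
        have hev1 : ∀ᶠ w in nhdsWithin (Wo xe) (Set.Iio (Wo xe)), τ * L + 1 < PhiI q 2 ξ xe w :=
          (hblow xe hxe).eventually_gt_atTop (τ * L + 1)
        have hev2 : ∀ᶠ w in nhdsWithin (Wo xe) (Set.Iio (Wo xe)), 0 < w :=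
          eventually_nhdsWithin_of_eventually_nhds (eventually_gt_nhds (hWo0 xe hxe))
        have hev3 : ∀ᶠ w in nhdsWithin (Wo xe) (Set.Iio (Wo xe)), w ∈ Set.Iio (Wo xe) :=
          eventually_mem_nhdsWithin
        obtain ⟨w, h1, h2, h3⟩ := (hev1.and (hev2.and hev3)).exists
        have h4 := hCL w h2 (le_trans (le_of_lt h3) hcon2) h3
        linarith only [h1, h4]
      set d := L^2 * xe / M^2 with hd
      have hd0 : 0 < d := by positivity
      set e := min (L/2) (d / (8 * (τ + 1))) with he
      have he0 : 0 < e := lt_min (by linarith) (by positivity)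
      have heL2 : e ≤ L/2 := min_le_left _ _
      have hed : e ≤ d / (8 * (τ + 1)) := min_le_right _ _
      set w := L - e with hw
      have hw0 : 0 < w := by rw [hw]; linarith
      have hwL : w ≤ L := by rw [hw]; linarith
      have hwW : w < Wo xe := by rw [hw]; linarith
      have h1 := hCL w hw0 hwL hwW
      have h2 := PhiI2_lower (m := m) (M := M) hq0 hq1 hmeas (hWo0 xe hxe) hw0 hwW hxe hm
        (hWoae xe) (fun y hy => hbound y hy.1.le)
      rw [hxeq] at h2
      have hLwe : τ * L = τ * w + τ * e := by rw [hw]; ring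
      have h3 : w^2 * xe / M^2 ≤ τ * e := by linarith only [h1, h2, hLwe]
      have h4 : L/2 ≤ w := by rw [hw]; linarith only [heL2]
      have h5 : (L/2)^2 * xe / M^2 ≤ w^2 * xe / M^2 := by
        have hsq : (L/2)^2 ≤ w^2 := pow_le_pow_left₀ (by linarith only [hL0']) h4 2
        gcongr
      have h6 : τ * e ≤ d / 8 := by
        have h7 : τ * e ≤ τ * (d / (8 * (τ + 1))) := mul_le_mul_of_nonneg_left hed hτ.le
        have hX0 : (0:ℝ) ≤ d / (8 * (τ + 1)) := div_nonneg hd0.le (by linarith only [hτ])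
        have hid : d / (8 * (τ + 1)) * (8 * (τ + 1)) = d := by field_simp
        have h8 : τ * (d / (8 * (τ + 1))) ≤ d / 8 := by linarith only [hid, hX0]
        linarith only [h7, h8]
      have h9 : (L/2)^2 * xe / M^2 = d / 4 := by rw [hd]; ring
      linarith only [h3, h5, h6, h9, hd0]
    obtain ⟨a, ⟨x₁, hx₁, rfl⟩, ha⟩ := exists_lt_of_csInf_lt hAne
      (show sInf A < ε by rw [← hL, hLzero]; exact hε)
    exact ⟨x₁, hx₁, ha⟩
  -- the limit at the edge
  have hlim : Tendsto H (nhdsWithin xe (Set.Iio xe)) (nhds 0) := by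
    rw [Metric.tendsto_nhdsWithin_nhds]
    intro ε hε
    obtain ⟨x₁, hx₁mem, hx₁⟩ := hedge (ε / (τ + 1)) (by positivity)
    refine ⟨xe - x₁, by linarith [hx₁mem.2], fun {x'} hx' hdist => ?_⟩
    have hx'lt : x' < xe := hx'
    have hx'gt : x₁ < x' := by
      rw [Real.dist_eq, abs_of_nonpos (by linarith)] at hdist
      linarith
    have hx'0 : 0 < x' := lt_trans (by linarith [hx₁mem.1]) hx'gt
    have hωlt : ω x' < ω x₁ := hωanti x₁ x' (by linarith [hx₁mem.1]) hx'gt hx'lt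
    obtain ⟨hH0a, hH0b⟩ := hH0 x' hx'0 hx'lt
    rw [Real.dist_eq, sub_zero, abs_of_nonneg hH0a]
    have h1 : τ * ω x' ≤ τ * ω x₁ := mul_le_mul_of_nonneg_left hωlt.le hτ.le
    have h2 : τ * ω x₁ < τ * (ε / (τ + 1)) := by
      apply mul_lt_mul_of_pos_left hx₁ hτ
    have h3 : τ * (ε / (τ + 1)) < ε := by
      have hid : ε / (τ + 1) * (τ + 1) = ε := by field_simp
      have hY := div_pos hε (by linarith only [hτ] : (0:ℝ) < τ + 1)
      linarith only [hid, hY]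
    linarith only [h1, h2, h3, hH0b]
  -- left-continuity of H
  have hleft : ∀ x : ℝ, 0 < x → Tendsto H (nhdsWithin x (Set.Iio x)) (nhds (H x)) := by
    intro x hx
    rcases lt_trichotomy x xe with hlt | heqx | hgt
    · rw [Metric.tendsto_nhdsWithin_nhds]
      intro ε hε
      obtain ⟨⟨hωp, hωW⟩, heq, _⟩ := hω x hx hlt
      have hgx0 : 0 < min (ω x) (WW x) := lt_min hωp (hWW0 x hx)
      have hgxW : min (ω x) (WW x) < Wo x := lt_of_le_of_lt (min_le_left _ _) hωW
      set gx := min (ω x) (WW x) with hgxdef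
      set r := (gx + Wo x)/2 with hrdef
      have hr1 : gx < r := by rw [hrdef]; linarith
      have hr2 : r < Wo x := by rw [hrdef]; linarith
      have hr0 : 0 < r := lt_trans hgx0 hr1
      have hρr : r / Wo x < 1 := by rw [div_lt_one (hWo0 x hx)]; exact hr2
      set C := phiR q 1 (r / Wo x) with hCdef
      have hC0 : 0 ≤ C := phiR_nonneg hq0 hq1 1 (div_nonneg hr0.le (hWo0 x hx).le)
      set ε1 := min (ε / (4 * (τ + 1))) (r - gx) with hε1def
      have hε1 : 0 < ε1 := lt_min (by positivity) (by linarith)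
      obtain ⟨x₁, hx₁, hω1⟩ := hωL x hx hlt ε1 hε1
      obtain ⟨x₂, hx₂, hW2⟩ := hWWL x hx ε1 hε1
      set δ := min (x - max x₁ x₂) (min (ε / (4 * (C + 1))) (x/2)) with hδdef
      have hmaxlt : max x₁ x₂ < x := max_lt hx₁.2 hx₂.2
      have hδ0 : 0 < δ := lt_min (by linarith) (lt_min (by positivity) (by positivity))
      refine ⟨δ, hδ0, fun {x'} hx'mem hdist => ?_⟩
      have hx'lt : x' < x := hx'mem
      have hx'gt : x - δ < x' := by
        rw [Real.dist_eq, abs_of_nonpos (by linarith)] at hdist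
        linarith
      have hδ1 : δ ≤ x - max x₁ x₂ := min_le_left _ _
      have hδ2 : δ ≤ ε / (4 * (C + 1)) := le_trans (min_le_right _ _) (min_le_left _ _)
      have hδ3 : δ ≤ x/2 := le_trans (min_le_right _ _) (min_le_right _ _)
      have hx'1 : x₁ < x' := by
        have := le_max_left x₁ x₂
        linarith
      have hx'2 : x₂ < x' := by
        have := le_max_right x₁ x₂
        linarith
      have hx'0 : 0 < x' := by linarith
      have hx'e : x' < xe := lt_trans hx'lt hlt
      obtain ⟨⟨hω'p, hω'W⟩, heq', _⟩ := hω x' hx'0 hx'e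
      set gx' := min (ω x') (WW x') with hgx'def
      have hg'lt : gx' < gx + ε1 := by
        have h1 : ω x' < ω x + ε1 := hω1 x' ⟨hx'1, hx'lt⟩
        have h2 : WW x' < WW x + ε1 := hW2 x' ⟨hx'2, hx'lt⟩
        rcases le_total (ω x) (WW x) with h | h
        · rw [hgxdef, min_eq_left h]
          exact lt_of_le_of_lt (min_le_left _ _) h1
        · rw [hgxdef, min_eq_right h]
          exact lt_of_le_of_lt (min_le_right _ _) h2
      have hg'ge : gx ≤ gx' := by
        refine le_min ?_ ?_
        · exact le_trans (min_le_left _ _) (hωanti x' x hx'0 hx'lt hlt).le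
        · exact le_trans (min_le_right _ _) (hWWanti x' x hx'0 hx'lt.le)
      have hg'r : gx' ≤ r := by
        have : ε1 ≤ r - gx := min_le_right _ _
        linarith
      have hg'W : gx' < Wo x := lt_of_le_of_lt hg'r hr2
      have hg'0 : 0 < gx' := lt_of_lt_of_le hgx0 hg'ge
      have hadd := JI_add (n := 1) hq0 hq1 hmeas (hWo0 x hx) hg'0.le hg'W hx'0 hx'lt (hWoae x)
      have hslab := JI_upper (n := 1) (a := x') (c := x) hq0 hq1 hmeas (hWo0 x hx) hg'0.le
        hg'W hx'lt.le
        (ae_restrict_of_ae_restrict_of_subset (Set.Ioo_subset_Ioo hx'0.le le_rfl) (hWoae x))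
      have hphi_le : phiR q 1 (gx' / Wo x) ≤ C := by
        rw [hCdef]
        refine phiR_mono hq0 hq1 1 (div_nonneg hg'0.le (hWo0 x hx).le) ?_ hρr
        rw [div_eq_mul_inv, div_eq_mul_inv]
        exact mul_le_mul_of_nonneg_right hg'r (inv_nonneg.2 (hWo0 x hx).le)
      have hmonoJ : PhiI q 1 ξ x gx ≤ PhiI q 1 ξ x gx' := by
        rw [PhiI_eq_JI, PhiI_eq_JI]
        exact JI_mono hq0 hq1 hmeas (hWo0 x hx) hgx0.le hg'ge hg'W (hWoae x)
      have hH'1 : H x' = τ * gx' - PhiI q 1 ξ x' gx' := hH1 x' hx'0 hx'e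
      have hHx : H x = τ * gx - PhiI q 1 ξ x gx := hH1 x hx hlt
      have hphiplus : 0 ≤ phiR q 1 (gx' / Wo x) :=
        phiR_nonneg hq0 hq1 1 (div_nonneg hg'0.le (hWo0 x hx).le)
      have hx'δC : (x - x') * phiR q 1 (gx' / Wo x) ≤ δ * C := by
        apply mul_le_mul (by linarith) hphi_le hphiplus hδ0.le
      have hδC : δ * C ≤ ε/4 := by
        have h8 : δ * C ≤ ε / (4 * (C + 1)) * C := mul_le_mul_of_nonneg_right hδ2 hC0
        have h9 : ε / (4 * (C + 1)) * (4 * (C + 1)) = ε := by field_simp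
        have h10 : 0 ≤ ε / (4 * (C + 1)) := div_nonneg hε.le (by linarith only [hC0])
        linarith only [h8, h9, h10]
      have hτε1 : τ * ε1 ≤ ε/4 := by
        have h8 : ε1 ≤ ε / (4 * (τ + 1)) := min_le_left _ _
        have h9 : τ * ε1 ≤ τ * (ε / (4 * (τ + 1))) := mul_le_mul_of_nonneg_left h8 hτ.le
        have h10 : ε / (4 * (τ + 1)) * (4 * (τ + 1)) = ε := by field_simp
        have h11 : 0 ≤ ε / (4 * (τ + 1)) := div_nonneg hε.le (by linarith only [hτ])
        linarith only [h9, h10, h11]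
      have hτgx : τ * gx' ≤ τ * (gx + ε1) := mul_le_mul_of_nonneg_left hg'lt.le hτ.le
      have hup : H x' ≤ H x + ε/2 := by
        have hJle : JI q 1 ξ x' x gx' ≤ (x - x') * phiR q 1 (gx' / Wo x) := hslab
        -- H x' = τ gx' - PhiI x' gx' = τ gx' - PhiI x gx' + JI
        rw [hH'1, hHx]
        have hmul : τ * (gx + ε1) = τ * gx + τ * ε1 := by ring
        linarith only [hadd, hJle, hx'δC, hδC, hmonoJ, hτgx, hmul, hτε1]
      have hlow : H x ≤ H x' := hAnti (Set.mem_Ioi.2 hx'0) (Set.mem_Ioi.2 hx) hx'lt.le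
      rw [Real.dist_eq, abs_lt]
      constructor
      · linarith only [hlow, hε]
      · linarith only [hup, hε]
    · subst heqx
      rw [hH2 x le_rfl]
      exact hlim
    · have hev : ∀ᶠ x' in nhdsWithin x (Set.Iio x), H x' = H x := by
        have hs : Set.Ioi xe ∈ nhdsWithin x (Set.Iio x) := nhdsWithin_le_nhds (Ioi_mem_nhds hgt)
        filter_upwards [hs] with x' hx'
        rw [hH2 x' (le_of_lt hx'), hH2 x (le_of_lt hgt)]
      refine Tendsto.congr' ?_ tendsto_const_nhds
      filter_upwards [hev] with a ha
      exact ha.symm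
  exact ⟨hleft, hAnti, fun x1 hx1 x2 hx2 h12 => hstrict x1 hx1 x2 hx2 h12, hlim⟩
end

section
/- At (τ₀,x₀) the partial derivatives of 𝓗 exist and satisfy ∂𝓗/∂τ (τ₀,x₀) = ω(τ₀,x₀) and ∂𝓗/∂x (τ₀,x₀) = −φ₁( ω(τ₀,x₀)/ξ(x₀) ). Consequently 𝓗 satisfies the limit-shape partial differential equation ∂𝓗/∂x = −φ₁( (1/ξ(x)) · ∂𝓗/∂τ ) at (τ₀,x₀). -/
open MeasureTheory Filter

/-- termwise derivative series of `phiR`. -/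
noncomputable def phiD (q : ℝ) (n : ℕ) (w : ℝ) : ℝ :=
  ∑' k : ℕ, ((k : ℝ) + 1) ^ n * (((k : ℝ) + 1) * w ^ k) / (1 - q ^ (k + 1))

lemma summable_aux (n : ℕ) {r : ℝ} (hr : |r| < 1) :
    Summable (fun k : ℕ => ((k : ℝ) + 1) ^ n * r ^ k) := by
  have h1 : Summable (fun k : ℕ => (k : ℝ) ^ n * |r| ^ k) :=
    summable_pow_mul_geometric_of_norm_lt_one n (by rwa [Real.norm_eq_abs, abs_abs])
  have h2 : Summable (fun k : ℕ => |r| ^ k) := summable_geometric_of_lt_one (abs_nonneg r) hr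
  apply Summable.of_norm_bounded (g := fun k : ℕ => 2 ^ n * ((k : ℝ) ^ n * |r| ^ k) + 2 ^ n * |r| ^ k)
    ((h1.mul_left _).add (h2.mul_left _))
  intro k
  have hk1 : ((k : ℝ) + 1) ^ n ≤ 2 ^ n * (k : ℝ) ^ n + 2 ^ n := by
    rcases Nat.eq_zero_or_pos k with hk | hk
    · subst hk
      have h1 : (1:ℝ) ≤ 2 ^ n := one_le_pow₀ (by norm_num)
      have h0 : (0:ℝ) ≤ 2 ^ n * (0:ℝ) ^ n := by positivity
      simpa using by nlinarith
    · have hk' : (1 : ℝ) ≤ (k : ℝ) := by exact_mod_cast hk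
      calc ((k : ℝ) + 1) ^ n ≤ (2 * (k : ℝ)) ^ n := by
            apply pow_le_pow_left₀ (by positivity) (by linarith)
        _ = 2 ^ n * (k : ℝ) ^ n := mul_pow _ _ _
        _ ≤ _ := le_add_of_nonneg_right (by positivity)
  have h0 : (0:ℝ) ≤ |r| ^ k := by positivity
  calc ‖((k : ℝ) + 1) ^ n * r ^ k‖ = ((k : ℝ) + 1) ^ n * |r| ^ k := by
        rw [Real.norm_eq_abs, abs_mul, abs_pow, abs_pow, abs_of_nonneg (by positivity : (0:ℝ) ≤ (k:ℝ)+1)]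
    _ ≤ (2 ^ n * (k : ℝ) ^ n + 2 ^ n) * |r| ^ k := mul_le_mul_of_nonneg_right hk1 h0
    _ = 2 ^ n * ((k : ℝ) ^ n * |r| ^ k) + 2 ^ n * |r| ^ k := by ring

section q
variable {q : ℝ} (hq0 : 0 < q) (hq1 : q < 1)

include hq0 hq1

lemma den_pos (k : ℕ) : 0 < 1 - q ^ (k + 1) :=
  sub_pos.2 (pow_lt_one₀ hq0.le hq1 (Nat.succ_ne_zero k))

lemma den_ge (k : ℕ) : 1 - q ≤ 1 - q ^ (k + 1) := by
  have : q ^ (k + 1) ≤ q := pow_le_of_le_one hq0.le hq1.le (Nat.succ_ne_zero k)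
  linarith

lemma phiR_term_bound (n : ℕ) {r v : ℝ} (hv : |v| ≤ r) (k : ℕ) :
    |((k : ℝ) + 1) ^ n * v ^ (k + 1) / (1 - q ^ (k + 1))| ≤
      (((k : ℝ) + 1) ^ n * r ^ k) * (r / (1 - q)) := by
  have hr0 : 0 ≤ r := (abs_nonneg v).trans hv
  have hd := den_pos hq0 hq1 k
  have hdg := den_ge hq0 hq1 k
  have hq' : 0 < 1 - q := by linarith
  rw [abs_div, abs_of_pos hd, abs_mul, abs_pow, abs_pow, abs_of_nonneg (by positivity : (0:ℝ) ≤ (k:ℝ)+1)]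
  have hnum : ((k : ℝ) + 1) ^ n * |v| ^ (k + 1) ≤ ((k : ℝ) + 1) ^ n * r ^ (k + 1) :=
    mul_le_mul_of_nonneg_left (pow_le_pow_left₀ (abs_nonneg v) hv _) (by positivity)
  calc ((k : ℝ) + 1) ^ n * |v| ^ (k + 1) / (1 - q ^ (k + 1))
      ≤ ((k : ℝ) + 1) ^ n * r ^ (k + 1) / (1 - q) :=
        div_le_div₀ (by positivity) hnum hq' hdg
    _ = (((k : ℝ) + 1) ^ n * r ^ k) * (r / (1 - q)) := by rw [pow_succ]; ring

lemma phiR_summable (n : ℕ) {v : ℝ} (hv : |v| < 1) :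
    Summable (fun k : ℕ => ((k : ℝ) + 1) ^ n * v ^ (k + 1) / (1 - q ^ (k + 1))) := by
  apply Summable.of_norm_bounded (g := fun k : ℕ => (((k : ℝ) + 1) ^ n * |v| ^ k) * (|v| / (1 - q)))
    (((summable_aux n (by rwa [abs_abs])).mul_right _))
  intro k
  rw [Real.norm_eq_abs]
  exact phiR_term_bound hq0 hq1 n (le_refl |v|) k

lemma phiR_abs_le (n : ℕ) {r v : ℝ} (hr1 : r < 1) (hv : |v| ≤ r) :
    |phiR q n v| ≤ (∑' k : ℕ, ((k : ℝ) + 1) ^ n * r ^ k) * (r / (1 - q)) := by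
  have hr0 : 0 ≤ r := (abs_nonneg v).trans hv
  have hv1 : |v| < 1 := lt_of_le_of_lt hv hr1
  have hs := phiR_summable hq0 hq1 n hv1
  have hsr : Summable (fun k : ℕ => (((k : ℝ) + 1) ^ n * r ^ k) * (r / (1 - q))) :=
    (summable_aux n (by rwa [abs_of_nonneg hr0])).mul_right _
  calc |phiR q n v| ≤ ∑' k : ℕ, ‖((k : ℝ) + 1) ^ n * v ^ (k + 1) / (1 - q ^ (k + 1))‖ := by
        rw [← Real.norm_eq_abs]
        exact norm_tsum_le_tsum_norm (by simpa only [Real.norm_eq_abs] using hs.abs)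
    _ ≤ ∑' k : ℕ, (((k : ℝ) + 1) ^ n * r ^ k) * (r / (1 - q)) := by
        apply Summable.tsum_le_tsum _ (by simpa only [Real.norm_eq_abs] using hs.abs) hsr
        intro k
        simpa only [Real.norm_eq_abs] using phiR_term_bound hq0 hq1 n hv k
    _ = (∑' k : ℕ, ((k : ℝ) + 1) ^ n * r ^ k) * (r / (1 - q)) := tsum_mul_right

lemma phiR_hasDerivAt (n : ℕ) {w : ℝ} (hw : |w| < 1) :
    HasDerivAt (phiR q n) (phiD q n w) w := by
  set r : ℝ := (1 + |w|) / 2 with hr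
  have hw0 : 0 ≤ |w| := abs_nonneg w
  have hr1 : r < 1 := by rw [hr]; linarith
  have hr0 : 0 < r := by rw [hr]; linarith
  have hwr : |w| < r := by rw [hr]; linarith
  have hq' : 0 < 1 - q := by linarith
  have hsum : Summable (fun k : ℕ => (((k : ℝ) + 1) ^ (n + 1) * r ^ k) / (1 - q)) :=
    (summable_aux (n + 1) (by rwa [abs_of_pos hr0])).div_const _
  have key := hasDerivAt_tsum_of_isPreconnected hsum Metric.isOpen_ball
    (convex_ball (0:ℝ) r).isPreconnected
    (g := fun (k : ℕ) (z : ℝ) => ((k : ℝ) + 1) ^ n * z ^ (k + 1) / (1 - q ^ (k + 1)))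
    (g' := fun (k : ℕ) (z : ℝ) => ((k : ℝ) + 1) ^ n * (((k : ℝ) + 1) * z ^ k) / (1 - q ^ (k + 1)))
    (fun k y _ => by
      have h := ((hasDerivAt_pow (k + 1) y).const_mul (((k : ℝ) + 1) ^ n)).div_const
        (1 - q ^ (k + 1))
      refine h.congr_deriv ?_
      push_cast
      try ring)
    (fun k y hy => by
      have hyr : |y| ≤ r := by
        rw [Metric.mem_ball, Real.dist_eq, sub_zero] at hy; exact hy.le
      have hd := den_pos hq0 hq1 k
      have hdg := den_ge hq0 hq1 k
      rw [Real.norm_eq_abs, abs_div, abs_of_pos hd, abs_mul, abs_mul, abs_pow, abs_pow,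
        abs_of_nonneg (by positivity : (0:ℝ) ≤ (k:ℝ)+1)]
      have hnum : ((k : ℝ) + 1) ^ n * (((k : ℝ) + 1) * |y| ^ k) ≤ ((k : ℝ) + 1) ^ (n + 1) * r ^ k := by
        have h1 : |y| ^ k ≤ r ^ k := pow_le_pow_left₀ (abs_nonneg y) hyr k
        have h2 : (0:ℝ) ≤ ((k : ℝ) + 1) ^ n * ((k : ℝ) + 1) := by positivity
        calc ((k : ℝ) + 1) ^ n * (((k : ℝ) + 1) * |y| ^ k)
            = (((k : ℝ) + 1) ^ n * ((k : ℝ) + 1)) * |y| ^ k := by ring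
          _ ≤ (((k : ℝ) + 1) ^ n * ((k : ℝ) + 1)) * r ^ k := mul_le_mul_of_nonneg_left h1 h2
          _ = ((k : ℝ) + 1) ^ (n + 1) * r ^ k := by rw [pow_succ]
      exact div_le_div₀ (by positivity) hnum hq' hdg)
    (Metric.mem_ball_self hr0)
    (by
      apply Summable.congr summable_zero
      intro k
      simp)
    (by rwa [Metric.mem_ball, Real.dist_eq, sub_zero])
  exact key

omit hq0 hq1 in
lemma phiD_mul (n : ℕ) (w : ℝ) : w * phiD q n w = phiR q (n + 1) w := by
  rw [phiR, phiD, ← tsum_mul_left]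
  apply tsum_congr
  intro k
  rw [pow_succ ((k : ℝ) + 1) n, pow_succ w k]
  ring

lemma phiR_continuousAt (n : ℕ) {w : ℝ} (hw : |w| < 1) : ContinuousAt (phiR q n) w :=
  (phiR_hasDerivAt hq0 hq1 n hw).continuousAt

end q
/-- auxiliary regularized integral -/
noncomputable def IcI (q : ℝ) (g : ℝ → ℝ) (n : ℕ) (u w : ℝ) : ℝ :=
  ∫ y in Set.Ioo 0 u, phiR q n (w / g y)

theorem stmt_7 (q : ℝ) (hq : q ∈ Set.Ioo (0:ℝ) 1) (X : ℝ) (hX : 0 < X)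
    (ξ : ℝ → ℝ) (hcont : ContinuousOn ξ (Set.Ioo 0 X))
    (m M : ℝ) (hm : 0 < m) (hbound : ∀ y ∈ Set.Ioo 0 X, m ≤ ξ y ∧ ξ y ≤ M)
    (τ₀ x₀ : ℝ) (hx₀ : x₀ ∈ Set.Ioo 0 X)
    -- the implicit root function `ω(τ,x)` on a neighborhood `U` of `(τ₀,x₀)`
    (ω : ℝ → ℝ → ℝ) (U : Set (ℝ × ℝ)) (hU : U ∈ nhds (τ₀, x₀))
    (hval : ∀ p ∈ U, 0 < ω p.1 p.2 ∧
      ω p.1 p.2 < essInf ξ (volume.restrict (Set.Ioo 0 p.2)))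
    (heq : ∀ p ∈ U, p.1 * ω p.1 p.2 = PhiI q 2 ξ p.2 (ω p.1 p.2))
    -- partial derivatives of ω at (τ₀,x₀)
    (hdτ : DifferentiableAt ℝ (fun t => ω t x₀) τ₀)
    (hdx : DifferentiableAt ℝ (fun u => ω τ₀ u) x₀)
    -- the limit shape `𝓗(τ,x) = τ·ω(τ,x) − Φ₁(ω(τ,x)∣x)`
    (H : ℝ → ℝ → ℝ)
    (hHdef : ∀ t u : ℝ, H t u = t * ω t u - PhiI q 1 ξ u (ω t u)) :
    HasDerivAt (fun t => H t x₀) (ω τ₀ x₀) τ₀ ∧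
    HasDerivAt (fun u => H τ₀ u) (-phiR q 1 (ω τ₀ x₀ / ξ x₀)) x₀ ∧
    deriv (fun u => H τ₀ u) x₀
      = -phiR q 1 ((1 / ξ x₀) * deriv (fun t => H t x₀) τ₀) := by
  obtain ⟨hq0, hq1⟩ := hq
  obtain ⟨hx0, hxX⟩ := hx₀
  have hp₀ : (τ₀, x₀) ∈ U := mem_of_mem_nhds hU
  set w₀ := ω τ₀ x₀ with hw₀def
  have hw₀pos : 0 < w₀ := (hval _ hp₀).1
  have hw₀E : w₀ < essInf ξ (volume.restrict (Set.Ioo 0 x₀)) := (hval _ hp₀).2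
  set E := essInf ξ (volume.restrict (Set.Ioo 0 x₀)) with hEdef
  have hbdd : ∀ᵐ y ∂(volume.restrict (Set.Ioo 0 x₀)), m ≤ ξ y := by
    filter_upwards [ae_restrict_mem measurableSet_Ioo] with y hy
    exact (hbound y (Set.Ioo_subset_Ioo_right hxX.le hy)).1
  have hbddU : Filter.IsBoundedUnder (· ≥ ·) (ae (volume.restrict (Set.Ioo 0 x₀))) ξ :=
    ⟨m, by simpa using hbdd⟩
  set c : ℝ := (w₀ + E) / 2 with hcdef
  have hw₀c : w₀ < c := by rw [hcdef]; linarith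
  have hcE : c < E := by rw [hcdef]; linarith
  have hc0 : 0 < c := lt_trans hw₀pos hw₀c
  have hae : ∀ᵐ y ∂(volume.restrict (Set.Ioo 0 x₀)), c < ξ y := ae_lt_of_lt_essInf hcE hbddU
  have hcx : ContinuousAt ξ x₀ := hcont.continuousAt (isOpen_Ioo.mem_nhds ⟨hx0, hxX⟩)
  -- `c < ξ x₀`
  have hξx₀ : c < ξ x₀ := by
    by_contra hle
    push_neg at hle
    set c' : ℝ := (c + E) / 2 with hc'def
    have hcc' : c < c' := by rw [hc'def]; linarith
    have hae' : ∀ᵐ y ∂(volume.restrict (Set.Ioo 0 x₀)), c' < ξ y :=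
      ae_lt_of_lt_essInf (by rw [hc'def]; linarith) hbddU
    have hev : ∀ᶠ y in nhds x₀, ξ y < c' := hcx (Iio_mem_nhds (lt_of_le_of_lt hle hcc'))
    obtain ⟨ρ, hρ0, hρ⟩ := Metric.eventually_nhds_iff.1 hev
    set ρ' : ℝ := min ρ x₀ with hρ'def
    have hρ'0 : 0 < ρ' := lt_min hρ0 hx0
    have hρ'ρ : ρ' ≤ ρ := min_le_left _ _
    have hρ'x : ρ' ≤ x₀ := min_le_right _ _
    have hS : Set.Ioo (x₀ - ρ') x₀ ⊆ {y | ¬ c' < ξ y} := by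
      intro y hy
      have hd : dist y x₀ < ρ := by
        rw [Real.dist_eq, abs_of_nonpos (by linarith [hy.2] : y - x₀ ≤ 0)]
        have := hy.1; linarith
      exact not_lt.2 (hρ hd).le
    have hSsub : Set.Ioo (x₀ - ρ') x₀ ⊆ Set.Ioo 0 x₀ := fun y hy => ⟨by linarith [hy.1], hy.2⟩
    have h0 : (volume.restrict (Set.Ioo 0 x₀)) {y | ¬ c' < ξ y} = 0 := ae_iff.1 hae'
    have hz : (volume.restrict (Set.Ioo 0 x₀)) (Set.Ioo (x₀ - ρ') x₀) = 0 :=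
      measure_mono_null hS h0
    rw [Measure.restrict_apply' measurableSet_Ioo, Set.inter_eq_left.2 hSsub,
      Real.volume_Ioo] at hz
    rw [ENNReal.ofReal_eq_zero] at hz
    linarith
  -- regularized `ξ`
  set ξc : ℝ → ℝ := fun y => max (ξ y) c with hξcdef
  have hξc_ge : ∀ y, c ≤ ξc y := fun y => le_max_right _ _
  have hξc_pos : ∀ y, 0 < ξc y := fun y => lt_of_lt_of_le hc0 (hξc_ge y)
  have hξc_ne : ∀ y, ξc y ≠ 0 := fun y => (hξc_pos y).ne'
  have hξcx₀ : ξc x₀ = ξ x₀ := max_eq_left hξx₀.le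
  have hξcont : ContinuousOn ξc (Set.Ioo 0 X) := hcont.sup continuousOn_const
  -- choice of δ
  have hmemδ : Set.Ioo 0 X ∩ ξ ⁻¹' (Set.Ioi c) ∈ nhds x₀ :=
    Filter.inter_mem (isOpen_Ioo.mem_nhds ⟨hx0, hxX⟩) (hcx (Ioi_mem_nhds hξx₀))
  obtain ⟨δ, hδ0, hδsub⟩ := Metric.mem_nhds_iff.1 hmemδ
  have hδIoo : Metric.ball x₀ δ ⊆ Set.Ioo 0 X := fun y hy => (hδsub hy).1
  have hδξ : ∀ y ∈ Metric.ball x₀ δ, c < ξ y := fun y hy => (hδsub hy).2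
  have hδx : x₀ ∈ Metric.ball x₀ δ := Metric.mem_ball_self hδ0
  -- a.e. bound on `Ioo 0 u` for `u` in the ball
  have haeu : ∀ u ∈ Metric.ball x₀ δ, ∀ᵐ y ∂(volume.restrict (Set.Ioo 0 u)), c < ξ y := by
    intro u hu
    rw [ae_iff, Measure.restrict_apply' measurableSet_Ioo]
    have hprev : volume ({y | ¬ c < ξ y} ∩ Set.Ioo 0 x₀) = 0 := by
      have := ae_iff.1 hae
      rwa [Measure.restrict_apply' measurableSet_Ioo] at this
    refine measure_mono_null ?_ hprev
    rintro y ⟨hyb, hy0, hyu⟩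
    refine ⟨hyb, hy0, ?_⟩
    by_contra hge
    push_neg at hge
    have hyball : y ∈ Metric.ball x₀ δ := by
      rw [Metric.mem_ball, Real.dist_eq, abs_of_nonneg (by linarith)]
      have h1 : |u - x₀| < δ := by rw [← Real.dist_eq]; exact hu
      have h2 := abs_lt.1 h1
      linarith
    exact hyb (hδξ y hyball)
  -- representation of `PhiI` via `IcI q ξc`
  have hrepA : ∀ u ∈ Metric.ball x₀ δ, ∀ (n : ℕ) (w : ℝ), PhiI q n ξ u w = IcI q ξc n u w := by
    intro u hu n w
    refine integral_congr_ae ?_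
    filter_upwards [haeu u hu] with y hy
    have : ξc y = ξ y := max_eq_left hy.le
    rw [this]
  -- continuity of the composed integrand
  have hcomp : ∀ (n : ℕ) {w : ℝ}, 0 ≤ w → w < c →
      ContinuousOn (fun y => phiR q n (w / ξc y)) (Set.Ioo 0 X) := by
    intro n w hw0 hwc y hy
    have h1 : ContinuousWithinAt ξc (Set.Ioo 0 X) y := hξcont y hy
    have h2 : ContinuousWithinAt (fun z => w / ξc z) (Set.Ioo 0 X) y :=
      continuousWithinAt_const.div h1 (hξc_ne y)
    have h3 : |w / ξc y| < 1 := by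
      rw [abs_of_nonneg (div_nonneg hw0 (hξc_pos y).le), div_lt_one (hξc_pos y)]
      exact lt_of_lt_of_le hwc (hξc_ge y)
    exact ContinuousAt.comp_continuousWithinAt (g := phiR q n)
      (f := fun z => w / ξc z) (phiR_continuousAt hq0 hq1 n h3) h2
  -- pointwise bound on the integrand
  have habs : ∀ (n : ℕ) {w : ℝ}, 0 ≤ w → w < c → ∀ y,
      |phiR q n (w / ξc y)| ≤ (∑' k : ℕ, ((k : ℝ) + 1) ^ n * (w/c) ^ k) * ((w/c) / (1 - q)) := by
    intro n w hw0 hwc y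
    have hr1 : w / c < 1 := (div_lt_one hc0).2 hwc
    have hv : |w / ξc y| ≤ w / c := by
      rw [abs_of_nonneg (div_nonneg hw0 (hξc_pos y).le)]
      exact div_le_div₀ hw0 le_rfl hc0 (hξc_ge y)
    exact phiR_abs_le hq0 hq1 n hr1 hv
  -- integrability on `Ioc 0 b`
  have hintOn : ∀ (n : ℕ) {w : ℝ}, 0 ≤ w → w < c → ∀ {b : ℝ}, b < X →
      IntegrableOn (fun y => phiR q n (w / ξc y)) (Set.Ioc 0 b) volume := by
    intro n w hw0 hwc b hbX
    have hsub : Set.Ioc 0 b ⊆ Set.Ioo 0 X := fun y hy => ⟨hy.1, lt_of_le_of_lt hy.2 hbX⟩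
    refine Integrable.mono'
      (g := fun _ => (∑' k : ℕ, ((k : ℝ) + 1) ^ n * (w/c) ^ k) * ((w/c) / (1 - q)))
      (integrableOn_const (by rw [Real.volume_Ioc]; exact ENNReal.ofReal_ne_top))
      (((hcomp n hw0 hwc).mono hsub).aestronglyMeasurable measurableSet_Ioc) ?_
    filter_upwards with y
    rw [Real.norm_eq_abs]
    exact habs n hw0 hwc y
  -- interval integrability from `0`
  have hII : ∀ (n : ℕ) {w : ℝ}, 0 ≤ w → w < c → ∀ {b : ℝ}, b ∈ Metric.ball x₀ δ →
      IntervalIntegrable (fun y => phiR q n (w / ξc y)) volume 0 b := by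
    intro n w hw0 hwc b hb
    have hb0 : 0 < b := (hδIoo hb).1
    rw [intervalIntegrable_iff, Set.uIoc_of_le hb0.le]
    exact hintOn n hw0 hwc (hδIoo hb).2
  have hIcEq : ∀ (n : ℕ) (w : ℝ) {b : ℝ}, 0 < b →
      IcI q ξc n b w = ∫ y in (0:ℝ)..b, phiR q n (w / ξc y) := by
    intro n w b hb0
    rw [intervalIntegral.integral_of_le hb0.le, integral_Ioc_eq_integral_Ioo]
    rfl
  -- the `w`-derivative at `x₀` (dominated convergence)
  set ε : ℝ := min (w₀ / 2) ((c - w₀) / 2) with hεdef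
  have hε0 : 0 < ε := lt_min (by linarith) (by linarith)
  set c₁ : ℝ := (w₀ + c) / 2 with hc₁def
  have hc₁c : c₁ < c := by rw [hc₁def]; linarith
  have hc₁0 : 0 < c₁ := by rw [hc₁def]; linarith
  have hεle1 : ε ≤ w₀ / 2 := min_le_left _ _
  have hεle2 : ε ≤ (c - w₀) / 2 := min_le_right _ _
  have hball_w : ∀ w' ∈ Metric.ball w₀ ε, w₀ / 2 < w' ∧ w' < c₁ := by
    intro w' hw'
    rw [Metric.mem_ball, Real.dist_eq] at hw'
    have h := abs_lt.1 hw'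
    constructor
    · linarith [h.1]
    · rw [hc₁def]; linarith [h.2]
  have hB : HasDerivAt (fun w => IcI q ξc 1 x₀ w) (IcI q ξc 2 x₀ w₀ / w₀) w₀ := by
    set B2 : ℝ := (∑' k : ℕ, ((k : ℝ) + 1) ^ 2 * (c₁/c) ^ k) * ((c₁/c) / (1 - q)) with hB2def
    have hr₁ : c₁ / c < 1 := (div_lt_one hc0).2 hc₁c
    have main := hasDerivAt_integral_of_dominated_loc_of_deriv_le
      (μ := volume.restrict (Set.Ioo 0 x₀))
      (F := fun w y => phiR q 1 (w / ξc y))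
      (F' := fun w y => phiR q 2 (w / ξc y) / w)
      (bound := fun _ => B2 / (w₀ / 2))
      (Metric.ball_mem_nhds w₀ hε0)
      (by
        filter_upwards [Metric.ball_mem_nhds w₀ hε0] with w' hw'
        obtain ⟨h1, h2⟩ := hball_w w' hw'
        have hw'0 : 0 ≤ w' := le_of_lt (lt_trans (by linarith) h1)
        have hw'c : w' < c := lt_trans h2 hc₁c
        exact ((hcomp 1 hw'0 hw'c).mono
          (fun y hy => ⟨hy.1, lt_trans hy.2 hxX⟩)).aestronglyMeasurable measurableSet_Ioo)
      (by
        have := (hintOn 1 hw₀pos.le hw₀c hxX).mono_set Set.Ioo_subset_Ioc_self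
        exact this)
      (by
        exact ((((hcomp 2 hw₀pos.le hw₀c).mono
          (fun y hy => ⟨hy.1, lt_trans hy.2 hxX⟩)).div_const w₀).aestronglyMeasurable
            measurableSet_Ioo))
      (by
        filter_upwards with y w' hw'
        obtain ⟨h1, h2⟩ := hball_w w' hw'
        have hw'0 : 0 < w' := lt_trans (by linarith) h1
        rw [Real.norm_eq_abs, abs_div, abs_of_pos hw'0]
        have hnum : |phiR q 2 (w' / ξc y)| ≤ B2 := by
          have hv : |w' / ξc y| ≤ c₁ / c := by
            rw [abs_of_nonneg (div_nonneg hw'0.le (hξc_pos y).le)]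
            exact div_le_div₀ hc₁0.le h2.le hc0 (hξc_ge y)
          exact phiR_abs_le hq0 hq1 2 hr₁ hv
        have hB2nn : 0 ≤ B2 := le_trans (abs_nonneg _) hnum
        exact div_le_div₀ hB2nn hnum (by linarith) h1.le)
      (by
        refine integrableOn_const ?_
        rw [Real.volume_Ioo]; exact ENNReal.ofReal_ne_top)
      (by
        filter_upwards with y w' hw'
        obtain ⟨h1, h2⟩ := hball_w w' hw'
        have hw'0 : 0 < w' := lt_trans (by linarith) h1
        have hw'c : w' < c := lt_trans h2 hc₁c
        have hv1 : |w' / ξc y| < 1 := by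
          rw [abs_of_nonneg (div_nonneg hw'0.le (hξc_pos y).le), div_lt_one (hξc_pos y)]
          exact lt_of_lt_of_le hw'c (hξc_ge y)
        have hinner : HasDerivAt (fun w : ℝ => w / ξc y) (1 / ξc y) w' := by
          simpa using (hasDerivAt_id w').div_const (ξc y)
        have houter := phiR_hasDerivAt hq0 hq1 1 hv1
        have hcd := houter.comp w' hinner
        have hval' : phiD q 1 (w' / ξc y) * (1 / ξc y) = phiR q 2 (w' / ξc y) / w' := by
          rw [← phiD_mul 1 (w' / ξc y)]
          field_simp
        rw [← hval']
        simpa [Function.comp_def] using hcd)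
    have h2 := main.2
    rw [integral_div] at h2
    exact h2
  -- D₁ = τ₀
  have hD₁ : IcI q ξc 2 x₀ w₀ / w₀ = τ₀ := by
    have h2 := heq _ hp₀
    rw [hrepA x₀ hδx 2 w₀] at h2
    rw [← h2, mul_div_assoc, div_self hw₀pos.ne', mul_one]
  -- τ-derivative of H
  have hHτ : HasDerivAt (fun t => H t x₀) w₀ τ₀ := by
    have hprod : HasDerivAt (fun t => t * ω t x₀)
        (1 * w₀ + τ₀ * deriv (fun t => ω t x₀) τ₀) τ₀ :=
      (hasDerivAt_id τ₀).mul hdτ.hasDerivAt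
    have hchain : HasDerivAt (fun t => IcI q ξc 1 x₀ (ω t x₀))
        (IcI q ξc 2 x₀ w₀ / w₀ * deriv (fun t => ω t x₀) τ₀) τ₀ := by
      simpa [Function.comp_def] using hB.comp τ₀ hdτ.hasDerivAt
    have h := hprod.fun_sub hchain
    rw [hD₁] at h
    have hfun : (fun t => t * ω t x₀ - IcI q ξc 1 x₀ (ω t x₀)) = (fun t => H t x₀) := by
      funext t
      rw [hHdef t x₀, hrepA x₀ hδx 1 (ω t x₀)]
    rw [hfun] at h
    refine h.congr_deriv ?_
    ring
  -- x-derivative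
  set dx : ℝ := deriv (fun u => ω τ₀ u) x₀ with hdxdef
  set f₀ : ℝ := phiR q 1 (w₀ / ξc x₀) with hf₀def
  have hwcont : ContinuousAt (fun u => ω τ₀ u) x₀ := hdx.continuousAt
  have hR : HasDerivAt (fun u => IcI q ξc 1 u (ω τ₀ u) - IcI q ξc 1 x₀ (ω τ₀ u)) f₀ x₀ := by
    rw [hasDerivAt_iff_isLittleO, Asymptotics.isLittleO_iff]
    intro C hC
    have hgc : ContinuousAt ξc x₀ := hξcont.continuousAt (isOpen_Ioo.mem_nhds ⟨hx0, hxX⟩)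
    have hvx : |w₀ / ξc x₀| < 1 := by
      rw [abs_of_nonneg (div_nonneg hw₀pos.le (hξc_pos x₀).le), div_lt_one (hξc_pos x₀)]
      exact lt_of_lt_of_le hw₀c (hξc_ge x₀)
    have hPcont : ContinuousAt (fun p : ℝ × ℝ => phiR q 1 (p.2 / ξc p.1)) (x₀, w₀) := by
      have hdenom : ContinuousAt (fun p : ℝ × ℝ => ξc p.1) (x₀, w₀) :=
        hgc.comp_of_eq continuous_fst.continuousAt rfl
      have hdivc : ContinuousAt (fun p : ℝ × ℝ => p.2 / ξc p.1) (x₀, w₀) :=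
        continuous_snd.continuousAt.div hdenom (hξc_ne x₀)
      exact ContinuousAt.comp (f := fun p : ℝ × ℝ => p.2 / ξc p.1)
        (phiR_continuousAt hq0 hq1 1 hvx) hdivc
    have hevC : ∀ᶠ p : ℝ × ℝ in nhds (x₀, w₀), |phiR q 1 (p.2 / ξc p.1) - f₀| ≤ C := by
      filter_upwards [hPcont (Metric.closedBall_mem_nhds f₀ hC)] with p hp
      have hp' : dist (phiR q 1 (p.2 / ξc p.1)) f₀ ≤ C := hp
      rwa [Real.dist_eq] at hp'
    obtain ⟨η, hη0, hη⟩ := Metric.eventually_nhds_iff.1 hevC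
    have hev1 : Metric.ball x₀ (min δ η) ∈ nhds x₀ := Metric.ball_mem_nhds _ (lt_min hδ0 hη0)
    have hev2 : (fun u => ω τ₀ u) ⁻¹' Metric.ball w₀ (min ε η) ∈ nhds x₀ :=
      hwcont (Metric.ball_mem_nhds w₀ (lt_min hε0 hη0))
    filter_upwards [hev1, hev2] with u hu1 hu2
    have huδ : u ∈ Metric.ball x₀ δ :=
      Metric.ball_subset_ball (min_le_left δ η) hu1
    have huη : |u - x₀| < η := by
      have := Metric.ball_subset_ball (min_le_right δ η) hu1
      rwa [Metric.mem_ball, Real.dist_eq] at this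
    have hw'ε : ω τ₀ u ∈ Metric.ball w₀ ε :=
      Metric.ball_subset_ball (min_le_left ε η) hu2
    have hw'η : |ω τ₀ u - w₀| < η := by
      have := Metric.ball_subset_ball (min_le_right ε η) hu2
      rwa [Metric.mem_ball, Real.dist_eq] at this
    obtain ⟨hw'l, hw'u⟩ := hball_w _ hw'ε
    have hw'0 : 0 < ω τ₀ u := lt_trans (by linarith) hw'l
    have hw'c : ω τ₀ u < c := lt_trans hw'u hc₁c
    have hu0 : 0 < u := (hδIoo huδ).1
    have hint_u := hII 1 hw'0.le hw'c huδ
    have hint_x := hII 1 hw'0.le hw'c hδx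
    have hIx : IntervalIntegrable (fun y => phiR q 1 (ω τ₀ u / ξc y)) volume x₀ u :=
      hint_x.symm.trans hint_u
    have hrep : IcI q ξc 1 u (ω τ₀ u) - IcI q ξc 1 x₀ (ω τ₀ u)
        = ∫ y in x₀..u, phiR q 1 (ω τ₀ u / ξc y) := by
      rw [hIcEq 1 _ hu0, hIcEq 1 _ hx0]
      exact intervalIntegral.integral_interval_sub_left hint_u hint_x
    have hsplit : (∫ y in x₀..u, phiR q 1 (ω τ₀ u / ξc y)) - (u - x₀) • f₀
        = ∫ y in x₀..u, (phiR q 1 (ω τ₀ u / ξc y) - f₀) := by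
      rw [intervalIntegral.integral_sub hIx intervalIntegrable_const,
        intervalIntegral.integral_const]
    have hbound' : ∀ y ∈ Set.uIoc x₀ u, ‖phiR q 1 (ω τ₀ u / ξc y) - f₀‖ ≤ C := by
      intro y hy
      have habs2 := abs_lt.1 huη
      have hyx : |y - x₀| < η := by
        rcases Set.mem_uIoc.1 hy with ⟨h1, h2⟩ | ⟨h1, h2⟩
        · exact abs_lt.2 ⟨by linarith, by linarith⟩
        · exact abs_lt.2 ⟨by linarith, by linarith⟩
      have hd : dist (y, ω τ₀ u) (x₀, w₀) < η := by
        rw [Prod.dist_eq]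
        exact max_lt (by rwa [Real.dist_eq]) (by rwa [Real.dist_eq])
      have := hη hd
      rwa [Real.norm_eq_abs]
    calc ‖(IcI q ξc 1 u (ω τ₀ u) - IcI q ξc 1 x₀ (ω τ₀ u))
          - (IcI q ξc 1 x₀ (ω τ₀ x₀) - IcI q ξc 1 x₀ (ω τ₀ x₀)) - (u - x₀) • f₀‖
        = ‖∫ y in x₀..u, (phiR q 1 (ω τ₀ u / ξc y) - f₀)‖ := by
          rw [sub_self, sub_zero, hrep, hsplit]
      _ ≤ C * |u - x₀| := intervalIntegral.norm_integral_le_of_norm_le_const hbound'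
      _ = C * ‖u - x₀‖ := by rw [Real.norm_eq_abs]
  have hchainx : HasDerivAt (fun u => IcI q ξc 1 x₀ (ω τ₀ u))
      (IcI q ξc 2 x₀ w₀ / w₀ * dx) x₀ := by
    simpa [Function.comp_def] using hB.comp x₀ hdx.hasDerivAt
  have hΨ : HasDerivAt (fun u => IcI q ξc 1 u (ω τ₀ u)) (f₀ + IcI q ξc 2 x₀ w₀ / w₀ * dx) x₀ := by
    have h := hR.fun_add hchainx
    have hfun : (fun u => (IcI q ξc 1 u (ω τ₀ u) - IcI q ξc 1 x₀ (ω τ₀ u))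
        + IcI q ξc 1 x₀ (ω τ₀ u)) = (fun u => IcI q ξc 1 u (ω τ₀ u)) := by
      funext u; ring
    rwa [hfun] at h
  have hHx : HasDerivAt (fun u => H τ₀ u) (-phiR q 1 (w₀ / ξ x₀)) x₀ := by
    have h1 : HasDerivAt (fun u => τ₀ * ω τ₀ u) (τ₀ * dx) x₀ := hdx.hasDerivAt.const_mul τ₀
    have h := h1.fun_sub hΨ
    rw [hD₁] at h
    have hval2 : τ₀ * dx - (f₀ + τ₀ * dx) = -phiR q 1 (w₀ / ξ x₀) := by
      rw [hf₀def, hξcx₀]; ring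
    rw [hval2] at h
    refine h.congr_of_eventuallyEq ?_
    filter_upwards [Metric.ball_mem_nhds x₀ hδ0] with u hu
    rw [hHdef τ₀ u, hrepA u hu 1 (ω τ₀ u)]
  refine ⟨hHτ, hHx, ?_⟩
  rw [hHx.deriv, hHτ.deriv]
  have : (1 / ξ x₀) * w₀ = w₀ / ξ x₀ := by ring
  rw [this]
end

section
/- Set H := τ·ω° − Φ₁(ω°∣x) and define ReG(w) := −τ·Re(w) + H·log|w| + ∫₀ˣ Re φ̂₀(w/ξ(y)) dy. Then the circle of radius ω° centered at the origin is steep ascent for ReG: for every θ ∈ (0, 2π), one has ReG(ω°·e^{iθ}) > ReG(ω°). -/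
set_option maxHeartbeats 1000000


open MeasureTheory Filter

/-- `φ̂₀(z) = Σ_{i≥0} qⁱz/(1−qⁱz)`, the analytic continuation of `φ₀`. -/
noncomputable def phiHat (q : ℝ) (z : ℂ) : ℂ :=
  ∑' i : ℕ, (q : ℂ) ^ i * z / (1 - (q : ℂ) ^ i * z)

/-- The real part of the steepest descent function:
`ReG(w) = −τ·Re w + H·log|w| + ∫₀ˣ Re φ̂₀(w/ξ(y)) dy`. -/
noncomputable def ReG (q τ H x : ℝ) (ξ : ℝ → ℝ) (w : ℂ) : ℝ :=
  -τ * w.re + H * Real.log ‖w‖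
    + ∫ y in Set.Ioo 0 x, (phiHat q (w / (ξ y : ℂ))).re

/- ### Auxiliary lemmas -/

lemma aux_abs_sin_nat_mul_le (t : ℝ) : ∀ n : ℕ, |Real.sin (n * t)| ≤ n * |Real.sin t| := by
  intro n
  induction n with
  | zero => simp
  | succ n ih =>
    have h1 : ((n + 1 : ℕ) : ℝ) * t = n * t + t := by push_cast; ring
    rw [h1, Real.sin_add]
    calc |Real.sin (n*t) * Real.cos t + Real.cos (n*t) * Real.sin t|
        ≤ |Real.sin (n*t) * Real.cos t| + |Real.cos (n*t) * Real.sin t| := abs_add_le _ _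
      _ ≤ |Real.sin (n*t)| * 1 + 1 * |Real.sin t| := by
          rw [abs_mul, abs_mul]
          gcongr
          · exact Real.abs_cos_le_one t
          · exact Real.abs_cos_le_one _
      _ ≤ (n : ℝ) * |Real.sin t| + 1 * |Real.sin t| := by
          have := abs_nonneg (Real.sin t); nlinarith [ih]
      _ = ((n + 1 : ℕ) : ℝ) * |Real.sin t| := by push_cast; ring

lemma aux_one_sub_cos_nat_mul_le (t : ℝ) (n : ℕ) :
    1 - Real.cos (n * t) ≤ (n : ℝ) ^ 2 * (1 - Real.cos t) := by
  have h1 : ∀ s : ℝ, 1 - Real.cos (2 * s) = 2 * Real.sin s ^ 2 := fun s => by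
    have := Real.sin_sq_eq_half_sub s; linarith
  have e1 : (n : ℝ) * t = 2 * ((n : ℝ) * (t / 2)) := by ring
  have e2 : t = 2 * (t / 2) := by ring
  have hs := aux_abs_sin_nat_mul_le (t / 2) n
  have h3 : Real.sin ((n : ℝ) * (t / 2)) ^ 2 ≤ ((n : ℝ) * |Real.sin (t / 2)|) ^ 2 := by
    rw [← sq_abs]
    exact pow_le_pow_left₀ (abs_nonneg _) hs 2
  have h4 : 1 - Real.cos ((n : ℝ) * t) = 2 * Real.sin ((n : ℝ) * (t / 2)) ^ 2 := by
    rw [e1, h1]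
  have h5 : 1 - Real.cos t = 2 * Real.sin (t / 2) ^ 2 := by
    conv_lhs => rw [e2, h1]
  rw [h4, h5]
  calc 2 * Real.sin ((n : ℝ) * (t / 2)) ^ 2 ≤ 2 * ((n : ℝ) * |Real.sin (t / 2)|) ^ 2 := by linarith
    _ = (n : ℝ) ^ 2 * (2 * Real.sin (t / 2) ^ 2) := by rw [mul_pow, sq_abs]; ring

lemma aux_cos_ineq (t : ℝ) (k : ℕ) :
    0 ≤ Real.cos (((k : ℝ) + 1) * t) - 1 - ((k : ℝ) + 1) ^ 2 * (Real.cos t - 1) := by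
  have := aux_one_sub_cos_nat_mul_le t (k + 1)
  push_cast at this
  linarith

lemma aux_summable_base {ρ : ℝ} (hρ : |ρ| < 1) :
    Summable (fun k : ℕ => ((k : ℝ) + 1) ^ 2 * |ρ| ^ (k + 1)) := by
  have h := summable_pow_mul_geometric_of_norm_lt_one (R := ℝ) 2 (r := |ρ|)
    (by rwa [Real.norm_eq_abs, abs_abs])
  have h2 := (summable_nat_add_iff 1).mpr h
  exact h2.congr fun k => by push_cast; ring

lemma aux_one_sub_q_pos {q : ℝ} (hq0 : 0 < q) (hq1 : q < 1) (k : ℕ) :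
    0 < 1 - q ^ (k + 1) := by
  have : q ^ (k + 1) < 1 := pow_lt_one₀ hq0.le hq1 (Nat.succ_ne_zero k)
  linarith

lemma aux_inv_le {q : ℝ} (hq0 : 0 < q) (hq1 : q < 1) (k : ℕ) :
    (1 - q ^ (k + 1))⁻¹ ≤ (1 - q)⁻¹ := by
  have h1 : q ^ (k + 1) ≤ q := pow_le_of_le_one hq0.le hq1.le (Nat.succ_ne_zero k)
  exact inv_anti₀ (by linarith) (by linarith)

/-- Generic summability for our series. -/
lemma aux_summable {q : ℝ} (hq0 : 0 < q) (hq1 : q < 1) {r : ℝ} (hr : |r| < 1)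
    (c : ℕ → ℝ) (C : ℝ) (hc : ∀ k, |c k| ≤ C * ((k : ℝ) + 1) ^ 2) :
    Summable (fun k : ℕ => c k * r ^ (k + 1) / (1 - q ^ (k + 1))) := by
  refine Summable.of_norm_bounded
    (g := fun k => C * (((k : ℝ) + 1) ^ 2 * |r| ^ (k + 1)) * (1 - q)⁻¹)
    (((aux_summable_base hr).mul_left C).mul_right _) (fun k => ?_)
  · 
    have hk1 := aux_one_sub_q_pos hq0 hq1 k
    have hk2 := aux_inv_le hq0 hq1 k
    have hC : 0 ≤ C := by
      have h00 := hc 0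
      norm_num at h00
      linarith [abs_nonneg (c 0)]
    rw [Real.norm_eq_abs, abs_div, abs_mul, abs_pow, abs_of_pos hk1, div_eq_mul_inv]
    have h1 : |c k| * |r| ^ (k + 1) ≤ C * (((k : ℝ) + 1) ^ 2 * |r| ^ (k + 1)) := by
      rw [← mul_assoc]
      exact mul_le_mul_of_nonneg_right (hc k) (pow_nonneg (abs_nonneg r) _)
    exact mul_le_mul h1 hk2 (inv_nonneg.mpr hk1.le)
      (by positivity)

/-- Uniform bound for our series. -/
lemma aux_tsum_bound {q : ℝ} (hq0 : 0 < q) (hq1 : q < 1) {ρ r : ℝ} (hρ1 : ρ < 1)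
    (hr0 : 0 ≤ r) (hrρ : r ≤ ρ) (c : ℕ → ℝ) (hc : ∀ k, |c k| ≤ ((k : ℝ) + 1) ^ 2) :
    |∑' k : ℕ, c k * r ^ (k + 1) / (1 - q ^ (k + 1))|
      ≤ ∑' k : ℕ, ((k : ℝ) + 1) ^ 2 * ρ ^ (k + 1) * (1 - q)⁻¹ := by
  have hρ0 : 0 ≤ ρ := le_trans hr0 hrρ
  have hρa : |ρ| < 1 := by rwa [abs_of_nonneg hρ0]
  have hra : |r| < 1 := by rw [abs_of_nonneg hr0]; linarith
  have hmaj : Summable (fun k : ℕ => ((k : ℝ) + 1) ^ 2 * ρ ^ (k + 1) * (1 - q)⁻¹) := by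
    have := (aux_summable_base hρa).mul_right (1 - q)⁻¹
    apply this.congr
    intro k
    rw [abs_of_nonneg hρ0]
  have hbound : ∀ k : ℕ, |c k * r ^ (k + 1) / (1 - q ^ (k + 1))|
      ≤ ((k : ℝ) + 1) ^ 2 * ρ ^ (k + 1) * (1 - q)⁻¹ := by
    intro k
    have hk1 := aux_one_sub_q_pos hq0 hq1 k
    have hk2 := aux_inv_le hq0 hq1 k
    rw [abs_div, abs_mul, abs_pow, abs_of_pos hk1, div_eq_mul_inv, abs_of_nonneg hr0]
    have h1 : |c k| * r ^ (k + 1) ≤ ((k : ℝ) + 1) ^ 2 * ρ ^ (k + 1) := by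
      apply mul_le_mul (hc k) (pow_le_pow_left₀ hr0 hrρ _) (by positivity) (by positivity)
    exact mul_le_mul h1 hk2 (inv_nonneg.mpr hk1.le) (by positivity)
  have hsum : Summable (fun k : ℕ => |c k * r ^ (k + 1) / (1 - q ^ (k + 1))|) :=
    Summable.of_nonneg_of_le (fun k => abs_nonneg _) hbound hmaj
  have h1 : |∑' k : ℕ, c k * r ^ (k + 1) / (1 - q ^ (k + 1))|
      ≤ ∑' k : ℕ, |c k * r ^ (k + 1) / (1 - q ^ (k + 1))| := by
    have := norm_tsum_le_tsum_norm (f := fun k : ℕ => c k * r ^ (k + 1) / (1 - q ^ (k + 1)))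
      (by simpa only [Real.norm_eq_abs] using hsum)
    simpa only [Real.norm_eq_abs] using this
  exact h1.trans (Summable.tsum_le_tsum hbound hsum hmaj)

/-- Geometric series with shifted index, complex. -/
lemma aux_geom {z : ℂ} (hz : ‖z‖ < 1) : z / (1 - z) = ∑' k : ℕ, z ^ (k + 1) := by
  have h := tsum_geometric_of_norm_lt_one hz
  calc z / (1 - z) = z * (1 - z)⁻¹ := div_eq_mul_inv _ _
    _ = z * ∑' k : ℕ, z ^ k := by rw [h]
    _ = ∑' k : ℕ, z * z ^ k := tsum_mul_left.symm
    _ = ∑' k : ℕ, z ^ (k + 1) := tsum_congr fun k => (pow_succ' z k).symm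

lemma aux_phiHat_eq {q : ℝ} (hq0 : 0 < q) (hq1 : q < 1) {z : ℂ} (hz : ‖z‖ < 1) :
    phiHat q z = ∑' k : ℕ, z ^ (k + 1) / (1 - (q : ℂ) ^ (k + 1)) := by
  have hnq : ‖(q : ℂ)‖ = q := by rw [Complex.norm_real, Real.norm_eq_abs, abs_of_pos hq0]
  have hqz : ∀ i : ℕ, ‖(q : ℂ) ^ i * z‖ < 1 := by
    intro i
    rw [norm_mul, norm_pow, hnq]
    have h1 : q ^ i ≤ 1 := pow_le_one₀ hq0.le hq1.le
    calc q ^ i * ‖z‖ ≤ 1 * ‖z‖ := by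
          exact mul_le_mul_of_nonneg_right h1 (norm_nonneg z)
      _ < 1 := by rwa [one_mul]
  have huncurry : Summable (Function.uncurry fun i k : ℕ => ((q : ℂ) ^ i * z) ^ (k + 1)) := by
    apply Summable.of_norm_bounded (g := fun p : ℕ × ℕ => q ^ p.1 * ‖z‖ ^ (p.2 + 1))
    · have h1 : Summable (fun i : ℕ => q ^ i) := summable_geometric_of_lt_one hq0.le hq1
      have h2 : Summable (fun k : ℕ => ‖z‖ ^ (k + 1)) := by
        have := (summable_geometric_of_lt_one (norm_nonneg z) hz).mul_left ‖z‖
        exact this.congr fun k => (pow_succ' ‖z‖ k).symm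
      exact h1.mul_of_nonneg h2 (fun i => by positivity) (fun k => by positivity)
    · rintro ⟨i, k⟩
      simp only [Function.uncurry]
      rw [norm_pow, norm_mul, norm_pow, hnq, mul_pow, ← pow_mul]
      have h1 : q ^ (i * (k + 1)) ≤ q ^ i :=
        pow_le_pow_of_le_one hq0.le hq1.le (Nat.le_mul_of_pos_right i (Nat.succ_pos k))
      exact mul_le_mul_of_nonneg_right h1 (by positivity)
  have hterm : ∀ i : ℕ, (q : ℂ) ^ i * z / (1 - (q : ℂ) ^ i * z)
      = ∑' k : ℕ, ((q : ℂ) ^ i * z) ^ (k + 1) := fun i => aux_geom (hqz i)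
  rw [phiHat]
  calc (∑' i : ℕ, (q : ℂ) ^ i * z / (1 - (q : ℂ) ^ i * z))
      = ∑' (i : ℕ) (k : ℕ), ((q : ℂ) ^ i * z) ^ (k + 1) := tsum_congr hterm
    _ = ∑' (k : ℕ) (i : ℕ), ((q : ℂ) ^ i * z) ^ (k + 1) := (Summable.tsum_comm huncurry).symm
    _ = ∑' k : ℕ, z ^ (k + 1) / (1 - (q : ℂ) ^ (k + 1)) := by
        refine tsum_congr fun k => ?_
        have h1 : ∀ i : ℕ, ((q : ℂ) ^ i * z) ^ (k + 1)
            = ((q : ℂ) ^ (k + 1)) ^ i * z ^ (k + 1) := by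
          intro i
          rw [mul_pow, pow_right_comm]
        rw [tsum_congr h1, tsum_mul_right]
        have hq2 : ‖(q : ℂ) ^ (k + 1)‖ < 1 := by
          rw [norm_pow, hnq]
          exact pow_lt_one₀ hq0.le hq1 (Nat.succ_ne_zero k)
        rw [tsum_geometric_of_norm_lt_one hq2]
        rw [div_eq_mul_inv, mul_comm]

lemma aux_summable_z {q : ℝ} (hq0 : 0 < q) (hq1 : q < 1) {z : ℂ} (hz : ‖z‖ < 1) :
    Summable (fun k : ℕ => z ^ (k + 1) / (1 - (q : ℂ) ^ (k + 1))) := by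
  apply Summable.of_norm_bounded (g := fun k : ℕ => ‖z‖ ^ (k + 1) * (1 - q)⁻¹)
  · have := (summable_geometric_of_lt_one (norm_nonneg z) hz).mul_left ‖z‖
    have h2 : Summable (fun k : ℕ => ‖z‖ ^ (k + 1)) :=
      this.congr fun k => (pow_succ' ‖z‖ k).symm
    exact h2.mul_right _
  · intro k
    have hk1 := aux_one_sub_q_pos hq0 hq1 k
    have hden : ‖1 - (q : ℂ) ^ (k + 1)‖ = 1 - q ^ (k + 1) := by
      have : (1 : ℂ) - (q : ℂ) ^ (k + 1) = ((1 - q ^ (k + 1) : ℝ) : ℂ) := by push_cast; ring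
      rw [this, Complex.norm_real, Real.norm_eq_abs, abs_of_pos hk1]
    rw [norm_div, norm_pow, hden, div_eq_mul_inv]
    exact mul_le_mul_of_nonneg_left (aux_inv_le hq0 hq1 k) (by positivity)

/-- The real part of `phiHat` on the circle of radius `r`. -/
lemma aux_phiHat_re {q : ℝ} (hq0 : 0 < q) (hq1 : q < 1) {r : ℝ} (hr0 : 0 ≤ r) (hr1 : r < 1)
    (t : ℝ) :
    (phiHat q ((r : ℂ) * Complex.exp ((t : ℂ) * Complex.I))).re
      = ∑' k : ℕ, Real.cos (((k : ℝ) + 1) * t) * r ^ (k + 1) / (1 - q ^ (k + 1)) := by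
  set z : ℂ := (r : ℂ) * Complex.exp ((t : ℂ) * Complex.I) with hzdef
  have habs : ‖z‖ < 1 := by
    rw [hzdef, norm_mul, Complex.norm_real, Real.norm_eq_abs, abs_of_nonneg hr0]
    have : ‖Complex.exp ((t : ℂ) * Complex.I)‖ = 1 := by
      rw [Complex.norm_exp]
      simp
    rw [this, mul_one]
    exact hr1
  rw [aux_phiHat_eq hq0 hq1 habs, Complex.re_tsum (aux_summable_z hq0 hq1 habs)]
  refine tsum_congr fun k => ?_
  have hz : z ^ (k + 1) = ((r ^ (k + 1) : ℝ) : ℂ)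
      * Complex.exp (((((k : ℝ) + 1) * t : ℝ) : ℂ) * Complex.I) := by
    rw [hzdef, mul_pow, ← Complex.exp_nat_mul]
    push_cast
    ring_nf
  have hden : (1 : ℂ) - (q : ℂ) ^ (k + 1) = ((1 - q ^ (k + 1) : ℝ) : ℂ) := by push_cast; ring
  rw [hz, hden, Complex.div_ofReal_re, Complex.re_ofReal_mul, Complex.exp_ofReal_mul_I_re]
  ring

/-- The key inequality. -/
lemma aux_key {q : ℝ} (hq0 : 0 < q) (hq1 : q < 1) {r : ℝ} (hr0 : 0 ≤ r) (hr1 : r < 1)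
    (t : ℝ) :
    2 * r ^ 2 * (1 - Real.cos t) ^ 2 / (1 - q ^ 2)
      ≤ (∑' k : ℕ, Real.cos (((k : ℝ) + 1) * t) * r ^ (k + 1) / (1 - q ^ (k + 1)))
        - (∑' k : ℕ, Real.cos (((k : ℝ) + 1) * 0) * r ^ (k + 1) / (1 - q ^ (k + 1)))
        - (Real.cos t - 1) * phiR q 2 r := by
  have hra : |r| < 1 := by rwa [abs_of_nonneg hr0]
  set g : ℕ → ℝ := fun k =>
    (Real.cos (((k : ℝ) + 1) * t) - 1 - ((k : ℝ) + 1) ^ 2 * (Real.cos t - 1))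
      * r ^ (k + 1) / (1 - q ^ (k + 1)) with hgdef
  have hA : Summable (fun k : ℕ => Real.cos (((k : ℝ) + 1) * t) * r ^ (k + 1)
      / (1 - q ^ (k + 1))) := by
    apply aux_summable hq0 hq1 hra _ 1
    intro k
    rw [one_mul]
    calc |Real.cos (((k : ℝ) + 1) * t)| ≤ 1 := Real.abs_cos_le_one _
      _ ≤ ((k : ℝ) + 1) ^ 2 := by nlinarith [Nat.cast_nonneg (α := ℝ) k]
  have hB : Summable (fun k : ℕ => Real.cos (((k : ℝ) + 1) * 0) * r ^ (k + 1)
      / (1 - q ^ (k + 1))) := by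
    apply aux_summable hq0 hq1 hra _ 1
    intro k
    rw [one_mul]
    calc |Real.cos (((k : ℝ) + 1) * 0)| ≤ 1 := Real.abs_cos_le_one _
      _ ≤ ((k : ℝ) + 1) ^ 2 := by nlinarith [Nat.cast_nonneg (α := ℝ) k]
  have hC : Summable (fun k : ℕ => ((Real.cos t - 1) * ((k : ℝ) + 1) ^ 2) * r ^ (k + 1)
      / (1 - q ^ (k + 1))) := by
    apply aux_summable hq0 hq1 hra _ 2
    intro k
    rw [abs_mul]
    have h1 : |Real.cos t - 1| ≤ 2 := by
      have := Real.abs_cos_le_one t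
      rw [abs_le] at this ⊢
      constructor <;> linarith [this.1, this.2]
    have h2 : |((k : ℝ) + 1) ^ 2| = ((k : ℝ) + 1) ^ 2 := abs_of_nonneg (by positivity)
    rw [h2]
    exact mul_le_mul_of_nonneg_right h1 (by positivity)
  have hC2 : Summable (fun k : ℕ => ((k : ℝ) + 1) ^ 2 * r ^ (k + 1) / (1 - q ^ (k + 1))) := by
    apply aux_summable hq0 hq1 hra _ 1
    intro k
    rw [one_mul, abs_of_nonneg (by positivity : (0:ℝ) ≤ ((k : ℝ) + 1) ^ 2)]
  have hg : Summable g := by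
    apply ((hA.sub hB).sub hC).congr
    intro k
    rw [hgdef]
    have hk1 := (aux_one_sub_q_pos hq0 hq1 k).ne'
    simp only [mul_zero, Real.cos_zero]
    field_simp
  have hphi : (Real.cos t - 1) * phiR q 2 r
      = ∑' k : ℕ, ((Real.cos t - 1) * ((k : ℝ) + 1) ^ 2) * r ^ (k + 1) / (1 - q ^ (k + 1)) := by
    rw [phiR, ← tsum_mul_left]
    refine tsum_congr fun k => ?_
    ring
  have hsplit : (∑' k : ℕ, Real.cos (((k : ℝ) + 1) * t) * r ^ (k + 1) / (1 - q ^ (k + 1)))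
      - (∑' k : ℕ, Real.cos (((k : ℝ) + 1) * 0) * r ^ (k + 1) / (1 - q ^ (k + 1)))
      - (Real.cos t - 1) * phiR q 2 r = ∑' k : ℕ, g k := by
    rw [hphi, ← Summable.tsum_sub hA hB, ← Summable.tsum_sub (hA.sub hB) hC]
    refine tsum_congr fun k => ?_
    rw [hgdef]
    have hk1 := (aux_one_sub_q_pos hq0 hq1 k).ne'
    simp only [mul_zero, Real.cos_zero]
    field_simp
  rw [hsplit]
  have hnonneg : ∀ k : ℕ, 0 ≤ g k := by
    intro k
    rw [hgdef]
    apply div_nonneg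
    · exact mul_nonneg (aux_cos_ineq t k) (pow_nonneg hr0 _)
    · exact (aux_one_sub_q_pos hq0 hq1 k).le
  have hg1 : g 1 = 2 * r ^ 2 * (1 - Real.cos t) ^ 2 / (1 - q ^ 2) := by
    rw [hgdef]
    norm_num
    rw [Real.cos_two_mul]
    ring
  calc 2 * r ^ 2 * (1 - Real.cos t) ^ 2 / (1 - q ^ 2) = g 1 := hg1.symm
    _ ≤ ∑' k : ℕ, g k := Summable.le_tsum hg 1 fun j _ => hnonneg j

/-- Measurability of the partial tsum compositions. -/
lemma aux_aesm {q : ℝ} {ν : Measure ℝ} {ξ : ℝ → ℝ} (hmeas : Measurable ξ)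
    (c : ℕ → ℝ) (ω : ℝ)
    (hsum : ∀ᵐ y ∂ν, Summable (fun k : ℕ => c k * (ω / ξ y) ^ (k + 1) / (1 - q ^ (k + 1)))) :
    AEStronglyMeasurable
      (fun y => ∑' k : ℕ, c k * (ω / ξ y) ^ (k + 1) / (1 - q ^ (k + 1))) ν := by
  apply aestronglyMeasurable_of_tendsto_ae (u := atTop)
    (f := fun n y => ∑ k ∈ Finset.range n, c k * (ω / ξ y) ^ (k + 1) / (1 - q ^ (k + 1)))
  · intro n
    apply Measurable.aestronglyMeasurable
    apply Finset.measurable_sum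
    intro k _
    exact (((measurable_const.div hmeas).pow_const (k + 1)).const_mul (c k)).div_const _
  · filter_upwards [hsum] with y hy
    exact hy.hasSum.tendsto_sum_nat

theorem stmt_11 (q : ℝ) (hq : q ∈ Set.Ioo (0:ℝ) 1) (x : ℝ) (hx : 0 < x)
    (ξ : ℝ → ℝ) (hmeas : Measurable ξ) (m M : ℝ) (hm : 0 < m)
    (hbound : ∀ᵐ y ∂(volume.restrict (Set.Ioo 0 x)), m ≤ ξ y ∧ ξ y ≤ M)
    (Wo : ℝ) (hWo : Wo = essInf ξ (volume.restrict (Set.Ioo 0 x)))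
    (hblow : Tendsto (fun w => PhiI q 2 ξ x w) (nhdsWithin Wo (Set.Iio Wo)) atTop)
    (τ : ℝ) (hτ : tauE q ξ x < τ)
    (ω : ℝ) (hωmem : ω ∈ Set.Ioo 0 Wo) (hωeq : τ * ω = PhiI q 2 ξ x ω)
    (H : ℝ) (hH : H = τ * ω - PhiI q 1 ξ x ω) :
    ∀ θ : ℝ, θ ∈ Set.Ioo 0 (2 * Real.pi) →
      ReG q τ H x ξ (ω : ℂ) < ReG q τ H x ξ ((ω : ℂ) * Complex.exp (Complex.I * (θ : ℂ))) := by
  intro θ hθ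
  obtain ⟨hq0, hq1⟩ := hq
  obtain ⟨hω0, hωW⟩ := hωmem
  obtain ⟨hθ0, hθ2π⟩ := hθ
  set μ : Measure ℝ := volume.restrict (Set.Ioo 0 x) with hμdef
  have hμuniv : μ Set.univ = ENNReal.ofReal x := by
    rw [hμdef, Measure.restrict_apply_univ, Real.volume_Ioo, sub_zero]
  have hμfin : IsFiniteMeasure μ := ⟨by rw [hμuniv]; exact ENNReal.ofReal_lt_top⟩
  have hμne : μ ≠ 0 := by
    intro h
    have := hμuniv
    rw [h] at this
    simp only [Measure.coe_zero, Pi.zero_apply] at this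
    rw [eq_comm, ENNReal.ofReal_eq_zero] at this
    linarith
  have hWoξ : ∀ᵐ y ∂μ, Wo ≤ ξ y := by
    rw [hWo]
    refine ae_essInf_le ⟨m, ?_⟩
    rw [Filter.eventually_map]
    filter_upwards [hbound] with y hy using hy.1
  -- M is positive
  have hM : 0 < M := by
    have : (ae μ).NeBot := ae_neBot.mpr hμne
    obtain ⟨y, hy1, hy2⟩ := hbound.exists
    linarith
  have hWo0 : 0 < Wo := lt_trans hω0 hωW
  set ρ : ℝ := ω / Wo with hρdef
  have hρ0 : 0 < ρ := div_pos hω0 hWo0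
  have hρ1 : ρ < 1 := (div_lt_one hWo0).mpr hωW
  -- cos θ < 1
  have hcos1 : Real.cos θ < 1 := by
    rcases lt_or_eq_of_le (Real.cos_le_one θ) with h | h
    · exact h
    · exfalso
      have := (Real.cos_eq_one_iff_of_lt_of_lt
        (by linarith [Real.pi_pos] : -(2 * Real.pi) < θ) hθ2π).mp h
      linarith
  -- the three integrand functions
  set u1 : ℝ → ℝ := fun y =>
    ∑' k : ℕ, Real.cos (((k : ℝ) + 1) * θ) * (ω / ξ y) ^ (k + 1) / (1 - q ^ (k + 1)) with hu1def
  set u0 : ℝ → ℝ := fun y =>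
    ∑' k : ℕ, Real.cos (((k : ℝ) + 1) * 0) * (ω / ξ y) ^ (k + 1) / (1 - q ^ (k + 1)) with hu0def
  set u2 : ℝ → ℝ := fun y => phiR q 2 (ω / ξ y) with hu2def
  -- basic a.e. facts
  have haefacts : ∀ᵐ y ∂μ, 0 < ξ y ∧ ω / M ≤ ω / ξ y ∧ 0 ≤ ω / ξ y ∧ ω / ξ y ≤ ρ
      ∧ ω / ξ y < 1 := by
    filter_upwards [hbound, hWoξ] with y hy hWy
    have hξpos : 0 < ξ y := lt_of_lt_of_le hm hy.1
    refine ⟨hξpos, ?_, ?_, ?_, ?_⟩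
    · apply div_le_div_of_nonneg_left hω0.le hξpos hy.2
    · positivity
    · rw [hρdef]
      exact div_le_div_of_nonneg_left hω0.le hWo0 hWy
    · rw [div_lt_one hξpos]
      linarith
  -- bounds for the cosine coefficients
  have hc1 : ∀ k : ℕ, |Real.cos (((k : ℝ) + 1) * θ)| ≤ ((k : ℝ) + 1) ^ 2 := by
    intro k
    calc |Real.cos (((k : ℝ) + 1) * θ)| ≤ 1 := Real.abs_cos_le_one _
      _ ≤ ((k : ℝ) + 1) ^ 2 := by nlinarith [Nat.cast_nonneg (α := ℝ) k]
  have hc0 : ∀ k : ℕ, |Real.cos (((k : ℝ) + 1) * 0)| ≤ ((k : ℝ) + 1) ^ 2 := by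
    intro k
    calc |Real.cos (((k : ℝ) + 1) * 0)| ≤ 1 := Real.abs_cos_le_one _
      _ ≤ ((k : ℝ) + 1) ^ 2 := by nlinarith [Nat.cast_nonneg (α := ℝ) k]
  have hc2 : ∀ k : ℕ, |((k : ℝ) + 1) ^ 2| ≤ ((k : ℝ) + 1) ^ 2 := fun k =>
    le_of_eq (abs_of_nonneg (by positivity))
  -- the uniform bound constant
  set K : ℝ := ∑' k : ℕ, ((k : ℝ) + 1) ^ 2 * ρ ^ (k + 1) * (1 - q)⁻¹ with hKdef
  -- integrability of the three integrands
  have hint : ∀ c : ℕ → ℝ, (∀ k, |c k| ≤ ((k : ℝ) + 1) ^ 2) →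
      Integrable (fun y => ∑' k : ℕ, c k * (ω / ξ y) ^ (k + 1) / (1 - q ^ (k + 1))) μ := by
    intro c hc
    apply Integrable.mono' (integrable_const K)
    · apply aux_aesm hmeas
      filter_upwards [haefacts] with y hy
      apply aux_summable hq0 hq1 (by rw [abs_of_nonneg hy.2.2.1]; exact hy.2.2.2.2) c 1
      intro k
      rw [one_mul]
      exact hc k
    · filter_upwards [haefacts] with y hy
      rw [Real.norm_eq_abs, hKdef]
      exact aux_tsum_bound hq0 hq1 hρ1 hy.2.2.1 hy.2.2.2.1 c hc
  have hint1 : Integrable u1 μ := hint _ hc1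
  have hint0 : Integrable u0 μ := hint _ hc0
  have hint2 : Integrable u2 μ := hint _ hc2
  -- pointwise key inequality
  set ε : ℝ := 2 * (ω / M) ^ 2 * (1 - Real.cos θ) ^ 2 / (1 - q ^ 2) with hεdef
  have hq2 : 0 < 1 - q ^ 2 := by nlinarith
  have hε : 0 < ε := by
    rw [hεdef]
    have h1 : 0 < ω / M := div_pos hω0 hM
    have h2 : 0 < 1 - Real.cos θ := by linarith
    positivity
  have hptwise : ∀ᵐ y ∂μ, ε ≤ u1 y - u0 y - (Real.cos θ - 1) * u2 y := by
    filter_upwards [haefacts] with y hy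
    obtain ⟨hξpos, hrM, hr0, hrρ, hr1⟩ := hy
    have hmono : ε ≤ 2 * (ω / ξ y) ^ 2 * (1 - Real.cos θ) ^ 2 / (1 - q ^ 2) := by
      rw [hεdef]
      have h1 : 0 < ω / M := div_pos hω0 hM
      have h2 : (ω / M) ^ 2 ≤ (ω / ξ y) ^ 2 := by
        apply pow_le_pow_left₀ h1.le hrM
      have h3 : (0:ℝ) ≤ (1 - Real.cos θ) ^ 2 := sq_nonneg _
      gcongr 2 * ?_ * _ / _
    have hkey := aux_key hq0 hq1 hr0 hr1 θ
    exact le_trans hmono hkey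
  -- integral inequality
  have hcomb : Integrable (fun y => u1 y - u0 y - (Real.cos θ - 1) * u2 y) μ :=
    (hint1.sub hint0).sub (hint2.const_mul _)
  have hIneq : ε * x ≤ ∫ y, (u1 y - u0 y - (Real.cos θ - 1) * u2 y) ∂μ := by
    have h1 : (∫ _, ε ∂μ) ≤ ∫ y, (u1 y - u0 y - (Real.cos θ - 1) * u2 y) ∂μ :=
      integral_mono_ae (integrable_const ε) hcomb hptwise
    calc ε * x = (∫ _, ε ∂μ) := by
          rw [integral_const, show μ.real Set.univ = (μ Set.univ).toReal from rfl, hμuniv, ENNReal.toReal_ofReal hx.le, smul_eq_mul, mul_comm]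
      _ ≤ _ := h1
  have hsplit : ∫ y, (u1 y - u0 y - (Real.cos θ - 1) * u2 y) ∂μ
      = (∫ y, u1 y ∂μ) - (∫ y, u0 y ∂μ) - (Real.cos θ - 1) * ∫ y, u2 y ∂μ := by
    have e1 : ∫ y, (u1 y - u0 y - (Real.cos θ - 1) * u2 y) ∂μ
        = (∫ y, (u1 y - u0 y) ∂μ) - ∫ y, (Real.cos θ - 1) * u2 y ∂μ :=
      integral_sub (hint1.sub hint0) (hint2.const_mul _)
    have e2 : (∫ y, (u1 y - u0 y) ∂μ) = (∫ y, u1 y ∂μ) - ∫ y, u0 y ∂μ :=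
      integral_sub hint1 hint0
    have e3 : (∫ y, (Real.cos θ - 1) * u2 y ∂μ) = (Real.cos θ - 1) * ∫ y, u2 y ∂μ :=
      integral_const_mul _ _
    rw [e1, e2, e3]
  have hu2PhiI : (∫ y, u2 y ∂μ) = τ * ω := by
    rw [hωeq]; rfl
  -- identify the phiHat integrands with u1 and u0
  have hf1 : (fun y => (phiHat q (((ω : ℂ) * Complex.exp (Complex.I * (θ : ℂ)))
      / ((ξ y : ℝ) : ℂ))).re) =ᵐ[μ] u1 := by
    filter_upwards [haefacts] with y hy
    have hξne : (ξ y : ℝ) ≠ 0 := hy.1.ne'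
    have hz : ((ω : ℂ) * Complex.exp (Complex.I * (θ : ℂ))) / ((ξ y : ℝ) : ℂ)
        = ((ω / ξ y : ℝ) : ℂ) * Complex.exp ((θ : ℂ) * Complex.I) := by
      rw [mul_comm Complex.I]
      push_cast
      field_simp
    rw [hz, aux_phiHat_re hq0 hq1 hy.2.2.1 hy.2.2.2.2 θ]
  have hf0 : (fun y => (phiHat q ((ω : ℂ) / ((ξ y : ℝ) : ℂ))).re) =ᵐ[μ] u0 := by
    filter_upwards [haefacts] with y hy
    have hξne : (ξ y : ℝ) ≠ 0 := hy.1.ne'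
    have hz : (ω : ℂ) / ((ξ y : ℝ) : ℂ)
        = ((ω / ξ y : ℝ) : ℂ) * Complex.exp (((0 : ℝ) : ℂ) * Complex.I) := by
      push_cast
      rw [zero_mul, Complex.exp_zero, mul_one]
    rw [hz, aux_phiHat_re hq0 hq1 hy.2.2.1 hy.2.2.2.2 0]
  -- now unfold ReG
  have hre1 : ((ω : ℂ) * Complex.exp (Complex.I * (θ : ℂ))).re = ω * Real.cos θ := by
    rw [mul_comm Complex.I, Complex.re_ofReal_mul, Complex.exp_ofReal_mul_I_re]
  have habs1 : ‖(ω : ℂ) * Complex.exp (Complex.I * (θ : ℂ))‖ = ω := by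
    rw [norm_mul, Complex.norm_exp, Complex.norm_real, Real.norm_eq_abs, abs_of_pos hω0]
    simp [Complex.mul_re]
  have habs0 : ‖(ω : ℂ)‖ = ω := by
    rw [Complex.norm_real, Real.norm_eq_abs, abs_of_pos hω0]
  simp only [ReG]
  rw [hre1, habs1, habs0, Complex.ofReal_re]
  rw [show (∫ y in Set.Ioo 0 x, (phiHat q (((ω : ℂ) * Complex.exp (Complex.I * (θ : ℂ)))
      / ((ξ y : ℝ) : ℂ))).re) = ∫ y, u1 y ∂μ from integral_congr_ae hf1]
  rw [show (∫ y in Set.Ioo 0 x, (phiHat q ((ω : ℂ) / ((ξ y : ℝ) : ℂ))).re)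
      = ∫ y, u0 y ∂μ from integral_congr_ae hf0]
  -- final arithmetic
  rw [hsplit, hu2PhiI] at hIneq
  have hεx : 0 < ε * x := mul_pos hε hx
  nlinarith [hIneq]
end
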